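/- arXiv:1409.2175 — 9 statements merged into one kernel-verified Lean document; each statement's English description precedes it below -/
import Mathlib

section
/- Let X and Y be nonempty finite sets, and let a and b be two deterministic non-repeating search algorithms on (X, Y). Then for every m ≤ |X| and every vector y = (y₁, …, yₘ) ∈ Yᵐ, the number of functions f : X → Y whose value-trace under a equals y is the same as the number of functions f : X → Y whose value-trace under b equals y; that is, |{f ∈ Y^X : a_Y^m(f) = y}| = |{f ∈ Y^X : b_Y^m(f) = y}|. -/
/-!
Statement 0: the deterministic Wolpert–Macready No-Free-Lunch theorem.
A deterministic search algorithm on finite sets `X`, `Y` is a map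
`a : List (X × Y) → X`; given `f : X → Y` it generates the query sequence
`x₁ = a []`, `y_k = f x_k`, `x_{k+1} = a [(x₁,y₁),…,(x_k,y_k)]`.
-/

variable {X Y : Type*}

/-- The history (list of query/value pairs) produced by algorithm `a` on
objective function `f` after `n` evaluations. -/
def nflHistory (a : List (X × Y) → X) (f : X → Y) : ℕ → List (X × Y)
  | 0 => []
  | n + 1 =>
      nflHistory a f n ++ [(a (nflHistory a f n), f (a (nflHistory a f n)))]

/-- The `(n+1)`-st point queried by algorithm `a` on objective function `f`
(indexed from `0`, so `nflQuery a f 0 = x₁ = a []`). -/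
def nflQuery (a : List (X × Y) → X) (f : X → Y) (n : ℕ) : X :=
  a (nflHistory a f n)

/-- The value-trace of algorithm `a` on `f` after `m` steps:
`aᵧᵐ(f) = (y₁, …, yₘ) = (f x₁, …, f xₘ)`. -/
def nflTrace (a : List (X × Y) → X) (f : X → Y) (m : ℕ) : Fin m → Y :=
  fun i => f (nflQuery a f i)

/-- An algorithm is non-repeating if, for every objective function, the queried
points are pairwise distinct as long as at most `|X|` queries are made. -/
def NonRepeating [Fintype X] (a : List (X × Y) → X) : Prop :=
  ∀ f : X → Y, ∀ i j : ℕ, i < Fintype.card X → j < Fintype.card X → i ≠ j →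
    nflQuery a f i ≠ nflQuery a f j

/-- The "ideal" history built from a prescribed value vector `y` instead of an
objective function. -/
def nflHistY (a : List (X × Y) → X) {m : ℕ} (y : Fin m → Y) : ℕ → List (X × Y)
  | 0 => []
  | n + 1 =>
      if h : n < m then
        nflHistY a y n ++ [(a (nflHistY a y n), y ⟨n, h⟩)]
      else nflHistY a y n

/-- The query points determined by `a` and the value vector `y` alone. -/
def nflQ (a : List (X × Y) → X) {m : ℕ} (y : Fin m → Y) (i : Fin m) : X :=
  a (nflHistY a y i)

lemma nflHistory_eq_of_cyl {a : List (X × Y) → X} {m : ℕ} {y : Fin m → Y}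
    {f : X → Y} (h : ∀ i : Fin m, f (nflQ a y i) = y i) :
    ∀ n, n ≤ m → nflHistory a f n = nflHistY a y n := by
  intro n
  induction n with
  | zero => intro _; rfl
  | succ k ih =>
    intro hk
    have hk' : k < m := hk
    have hke : nflHistory a f k = nflHistY a y k := ih (Nat.le_of_succ_le hk)
    have hf : f (a (nflHistY a y k)) = y ⟨k, hk'⟩ := h ⟨k, hk'⟩
    simp [nflHistory, nflHistY, hk', hke, hf]

lemma nflHistory_eq_of_trace {a : List (X × Y) → X} {m : ℕ} {y : Fin m → Y}
    {f : X → Y} (h : nflTrace a f m = y) :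
    ∀ n, n ≤ m → nflHistory a f n = nflHistY a y n := by
  intro n
  induction n with
  | zero => intro _; rfl
  | succ k ih =>
    intro hk
    have hk' : k < m := hk
    have hke : nflHistory a f k = nflHistY a y k := ih (Nat.le_of_succ_le hk)
    have hf : f (a (nflHistY a y k)) = y ⟨k, hk'⟩ := by
      have := congrFun h ⟨k, hk'⟩
      simpa [nflTrace, nflQuery, hke] using this
    simp [nflHistory, nflHistY, hk', hke, hf]

/-- The trace condition is a "cylinder" condition on the fixed query points. -/
lemma nflTrace_eq_iff {a : List (X × Y) → X} {m : ℕ} {y : Fin m → Y}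
    {f : X → Y} :
    nflTrace a f m = y ↔ ∀ i : Fin m, f (nflQ a y i) = y i := by
  constructor
  · intro h i
    have hh := nflHistory_eq_of_trace h i (le_of_lt i.isLt)
    have := congrFun h i
    simpa [nflTrace, nflQuery, nflQ, hh] using this
  · intro h
    funext i
    have hh := nflHistory_eq_of_cyl h i (le_of_lt i.isLt)
    simpa [nflTrace, nflQuery, nflQ, hh] using h i

/-- For a non-repeating algorithm the query points determined by `y` are
pairwise distinct. -/
lemma nflQ_injective [Fintype X] {a : List (X × Y) → X} (ha : NonRepeating a)
    {m : ℕ} (hm : m ≤ Fintype.card X) (y : Fin m → Y) [Nonempty Y] :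
    Function.Injective (nflQ a y) := by
  classical
  -- greedy witness function
  set f : X → Y := fun x =>
    if h : (Finset.univ.filter fun i : Fin m => nflQ a y i = x).Nonempty then
      y ((Finset.univ.filter fun i : Fin m => nflQ a y i = x).min' h)
    else Classical.arbitrary Y with hfdef
  have key : ∀ n, n ≤ m → nflHistory a f n = nflHistY a y n := by
    intro n
    induction n using Nat.strong_induction_on with
    | _ n ih =>
      match n with
      | 0 => intro _; rfl
      | k + 1 =>
        intro hk
        have hk' : k < m := hk
        have hke : nflHistory a f k = nflHistY a y k :=
          ih k (Nat.lt_succ_self k) (Nat.le_of_succ_le hk)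
        -- it suffices that f (nflQ a y ⟨k,_⟩) = y ⟨k,_⟩
        have hne : (Finset.univ.filter
            fun i : Fin m => nflQ a y i = nflQ a y ⟨k, hk'⟩).Nonempty :=
          ⟨⟨k, hk'⟩, by simp⟩
        set j := (Finset.univ.filter
            fun i : Fin m => nflQ a y i = nflQ a y ⟨k, hk'⟩).min' hne with hj
        have hjmem : j ∈ (Finset.univ.filter
            fun i : Fin m => nflQ a y i = nflQ a y ⟨k, hk'⟩) :=
          Finset.min'_mem _ _
        have hjq : nflQ a y j = nflQ a y ⟨k, hk'⟩ := by
          simpa using hjmem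
        have hjle : j ≤ ⟨k, hk'⟩ := Finset.min'_le _ _ (by simp)
        have hjk : j = ⟨k, hk'⟩ := by
          by_contra hjk
          have hjlt : (j : ℕ) < k := Fin.lt_iff_val_lt_val.mp (lt_of_le_of_ne hjle hjk)
          -- queries of f agree with nflQ up to k
          have hq : ∀ l : ℕ, l ≤ k → nflQuery a f l = a (nflHistY a y l) := by
            intro l hl
            have := ih l (Nat.lt_succ_of_le hl) (le_trans hl (Nat.le_of_lt hk'))
            simp [nflQuery, this]
          have h1 : nflQuery a f j = nflQuery a f k := by
            rw [hq j (le_of_lt hjlt), hq k (le_refl k)]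
            exact hjq
          exact ha f j k (lt_of_lt_of_le j.isLt hm)
            (lt_of_lt_of_le hk' hm) (Nat.ne_of_lt hjlt) h1
        have hf : f (a (nflHistY a y k)) = y ⟨k, hk'⟩ := by
          have : f (nflQ a y ⟨k, hk'⟩) = y j := by
            simp only [hfdef]
            rw [dif_pos hne]
          rw [hjk] at this
          simpa [nflQ] using this
        simp [nflHistory, nflHistY, hk', hke, hf]
  intro i j hij
  have hi : nflQuery a f i = nflQ a y i := by
    simp [nflQuery, nflQ, key i (le_of_lt i.isLt)]
  have hj : nflQuery a f j = nflQ a y j := by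
    simp [nflQuery, nflQ, key j (le_of_lt j.isLt)]
  by_contra hne
  exact ha f i j (lt_of_lt_of_le i.isLt hm) (lt_of_lt_of_le j.isLt hm)
    (fun h => hne (Fin.ext h)) (by rw [hi, hj, hij])

/-- **No-Free-Lunch (Wolpert–Macready, deterministic form).**
For any two deterministic non-repeating algorithms `a`, `b`, every `m ≤ |X|`
and every `y ∈ Yᵐ`, the number of functions `f : X → Y` with value-trace `y`
under `a` equals the number of those with value-trace `y` under `b`. -/
theorem no_free_lunch_finite
    [Fintype X] [Fintype Y] [Nonempty X] [Nonempty Y]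
    [DecidableEq X] [DecidableEq Y]
    (a b : List (X × Y) → X) (ha : NonRepeating a) (hb : NonRepeating b)
    (m : ℕ) (hm : m ≤ Fintype.card X) (y : Fin m → Y) :
    (Finset.univ.filter fun f : X → Y => nflTrace a f m = y).card =
      (Finset.univ.filter fun f : X → Y => nflTrace b f m = y).card := by
  classical
  have hQa : Function.Injective (nflQ a y) := nflQ_injective ha hm y
  have hQb : Function.Injective (nflQ b y) := nflQ_injective hb hm y
  let ea : Fin m ≃ Set.range (nflQ a y) := Equiv.ofInjective _ hQa
  let eb : Fin m ≃ Set.range (nflQ b y) := Equiv.ofInjective _ hQb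
  let e0 : {x // x ∈ Set.range (nflQ a y)} ≃ {x // x ∈ Set.range (nflQ b y)} :=
    ea.symm.trans eb
  let e : Equiv.Perm X := e0.extendSubtype
  have he : ∀ i : Fin m, e (nflQ a y i) = nflQ b y i := by
    intro i
    have hmem : nflQ a y i ∈ Set.range (nflQ a y) := ⟨i, rfl⟩
    rw [show e (nflQ a y i) = (e0 ⟨nflQ a y i, hmem⟩ : X) from
      e0.extendSubtype_apply_of_mem _ hmem]
    have h1 : ea.symm ⟨nflQ a y i, hmem⟩ = i := by
      rw [Equiv.symm_apply_eq]
      rfl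
    show (eb (ea.symm ⟨nflQ a y i, hmem⟩) : X) = nflQ b y i
    rw [h1]
    rfl
  have he' : ∀ i : Fin m, e.symm (nflQ b y i) = nflQ a y i := by
    intro i
    rw [Equiv.symm_apply_eq, he]
  apply Finset.card_bij' (fun f _ => f ∘ e.symm) (fun g _ => g ∘ e)
  · intro f hf
    rw [Finset.mem_filter] at hf ⊢
    refine ⟨Finset.mem_univ _, ?_⟩
    rw [nflTrace_eq_iff] at hf ⊢
    intro i
    simpa [he' i] using hf.2 i
  · intro g hg
    rw [Finset.mem_filter] at hg ⊢
    refine ⟨Finset.mem_univ _, ?_⟩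
    rw [nflTrace_eq_iff] at hg ⊢
    intro i
    simpa [he i] using hg.2 i
  · intro f _
    funext x
    simp
  · intro g _
    funext x
    simp
end

section
/- Let f be a measurable stochastic process on [0,1] such that the family of random variables {f(t), t ∈ [0,1]} is mutually independent. Then for Lebesgue-almost every t ∈ [0,1] the random variable f(t) is almost surely constant: there exists c(t) ∈ ℝ with P{ω : f(t,ω) = c(t)} = 1. -/
open MeasureTheory ProbabilityTheory

/-!
Statement 1: if `f : Ω × [0,1] → ℝ` is a measurable stochastic process whose
random variables `{f(t), t ∈ [0,1]}` are mutually independent, then for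
Lebesgue-almost every `t ∈ [0,1]` the random variable `f(t)` is a.s. constant.
-/

private lemma integrable_of_bdd' {α : Type*} [MeasurableSpace α] {ν : Measure α}
    [IsFiniteMeasure ν] {φ : α → ℝ} (hφ : AEStronglyMeasurable φ ν) {C : ℝ}
    (hC : ∀ x, |φ x| ≤ C) : Integrable φ ν :=
  Integrable.mono' (integrable_const C) hφ (Filter.Eventually.of_forall fun x => by
    simpa [Real.norm_eq_abs] using hC x)

set_option maxHeartbeats 1000000 in
theorem measurable_indep_process_ae_degenerate
    {Ω : Type*} [MeasurableSpace Ω] (P : Measure Ω) [IsProbabilityMeasure P]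
    (f : ℝ → Ω → ℝ)
    (hmeas : Measurable fun p : Set.Icc (0 : ℝ) 1 × Ω => f p.1 p.2)
    (hindep : iIndepFun
      (fun t : Set.Icc (0 : ℝ) 1 => f t) P) :
    ∀ᵐ t ∂(volume.restrict (Set.Icc (0 : ℝ) 1)),
      ∃ c : ℝ, P {ω | f t ω = c} = 1 := by
  classical
  set μ : Measure ℝ := volume.restrict (Set.Icc (0:ℝ) 1) with hμdef
  haveI : IsFiniteMeasure μ := by
    constructor
    rw [hμdef, Measure.restrict_apply_univ]
    simp [Real.volume_Icc]
  -- the auxiliary process `g`, defined on all of `ℝ` via the projection onto `[0,1]`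
  set π : ℝ → Set.Icc (0:ℝ) 1 := Set.projIcc 0 1 zero_le_one with hπdef
  have hπmeas : Measurable π := continuous_projIcc.measurable
  set g : ℝ → Ω → ℝ := fun t ω => f (π t) ω with hgdef
  have hgmeas : Measurable fun p : ℝ × Ω => g p.1 p.2 :=
    hmeas.comp ((hπmeas.comp measurable_fst).prodMk measurable_snd)
  have hgm : ∀ t, Measurable (g t) := fun t => hgmeas.comp measurable_prodMk_left
  have hgf : ∀ t, t ∈ Set.Icc (0:ℝ) 1 → g t = f t := by
    intro t ht
    funext ω
    simp only [hgdef, hπdef, Set.projIcc_of_mem zero_le_one ht]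
  -- the bounded process `h = arctan ∘ g`
  set h : ℝ → Ω → ℝ := fun t ω => Real.arctan (g t ω) with hhdef
  have hhmeas : Measurable fun p : ℝ × Ω => h p.1 p.2 :=
    Real.continuous_arctan.measurable.comp hgmeas
  have hhbd : ∀ t ω, |h t ω| ≤ Real.pi / 2 := fun t ω =>
    abs_le.2 ⟨(Real.neg_pi_div_two_lt_arctan _).le, (Real.arctan_lt_pi_div_two _).le⟩
  -- its mean `m` and the centered process `u`; we make them opaque
  obtain ⟨m, hmdef⟩ : ∃ m : ℝ → ℝ, m = fun t => ∫ ω, h t ω ∂P := ⟨_, rfl⟩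
  have hmSM : StronglyMeasurable m := by
    rw [hmdef]
    exact hhmeas.stronglyMeasurable.integral_prod_right'
  have hmbd : ∀ t, |m t| ≤ Real.pi / 2 := by
    intro t
    rw [hmdef]
    have := norm_integral_le_of_norm_le_const (μ := P) (f := fun ω => h t ω) (C := Real.pi / 2)
      (Filter.Eventually.of_forall fun ω => by simpa [Real.norm_eq_abs] using hhbd t ω)
    simpa [Real.norm_eq_abs, measure_univ] using this
  obtain ⟨u, hudef⟩ : ∃ u : ℝ → Ω → ℝ, u = fun t ω => h t ω - m t := ⟨_, rfl⟩
  have huMeas : Measurable fun p : ℝ × Ω => u p.1 p.2 := by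
    simp only [hudef]
    exact hhmeas.sub (hmSM.measurable.comp measurable_fst)
  have hubd : ∀ t ω, |u t ω| ≤ Real.pi := by
    intro t ω
    simp only [hudef]
    have h1 := hhbd t ω
    have h2 := hmbd t
    calc |h t ω - m t| ≤ |h t ω| + |m t| := abs_sub _ _
      _ ≤ Real.pi / 2 + Real.pi / 2 := add_le_add h1 h2
      _ = Real.pi := by ring
  have hint_h : ∀ r : ℝ, Integrable (h r) P := fun r =>
    integrable_of_bdd' (Real.continuous_arctan.measurable.comp (hgm r)).aestronglyMeasurable
      (hhbd r)
  have humeas : ∀ r : ℝ, Measurable (u r) := by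
    intro r
    simp only [hudef, hhdef]
    exact (Real.continuous_arctan.measurable.comp (hgm r)).sub measurable_const
  have hmean : ∀ r : ℝ, ∫ ω, u r ω ∂P = 0 := by
    intro r
    simp only [hudef]
    rw [integral_sub (hint_h r) (integrable_const _), integral_const]
    simp only [measure_univ, probReal_univ, ENNReal.toReal_one, one_smul, hmdef]
    exact sub_self _
  -- independence kills the covariance off the diagonal
  have hcov : ∀ s ∈ Set.Icc (0:ℝ) 1, ∀ t ∈ Set.Icc (0:ℝ) 1, s ≠ t →
      ∫ ω, u s ω * u t ω ∂P = 0 := by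
    intro s hs t ht hst
    have hind : IndepFun (u s) (u t) P := by
      have h0 : IndepFun (f s) (f t) P :=
        hindep.indepFun (i := ⟨s, hs⟩) (j := ⟨t, ht⟩) (fun hEq => hst (Subtype.ext_iff.1 hEq))
      have h1 := h0.comp (f := f s) (g := f t)
        (φ := fun x => Real.arctan x - m s) (ψ := fun x => Real.arctan x - m t)
        (Real.continuous_arctan.measurable.sub measurable_const)
        (Real.continuous_arctan.measurable.sub measurable_const)
      have e1 : u s = (fun x => Real.arctan x - m s) ∘ f s := by
        funext ω; simp [hudef, hhdef, hgf s hs]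
      have e2 : u t = (fun x => Real.arctan x - m t) ∘ f t := by
        funext ω; simp [hudef, hhdef, hgf t ht]
      rw [e1, e2]; exact h1
    have h2 := hind.integral_mul_eq_mul_integral (humeas s).aestronglyMeasurable (humeas t).aestronglyMeasurable
    rw [show (u s * u t) = (fun ω => u s ω * u t ω) from rfl] at h2
    rw [h2, hmean s, hmean t, mul_zero]
  -- key step: for any measurable `A`, the integral of `u · ω` over `A` vanishes a.s.
  have hW : ∀ A : Set ℝ, MeasurableSet A → ∀ᵐ ω ∂P, ∫ t in A, u t ω ∂μ = 0 := by
    intro A hA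
    set ρ : Measure ℝ := μ.restrict A with hρdef
    have hWSM : StronglyMeasurable fun ω => ∫ t, u t ω ∂ρ := by
      have hsw : StronglyMeasurable fun q : Ω × ℝ => u q.2 q.1 :=
        (huMeas.comp measurable_swap).stronglyMeasurable
      exact hsw.integral_prod_right'
    have hWbd : ∀ ω, |∫ t, u t ω ∂ρ| ≤ Real.pi * (ρ Set.univ).toReal := fun ω => by
      simpa [Real.norm_eq_abs, measureReal_def] using norm_integral_le_of_norm_le_const (μ := ρ)
        (f := fun t => u t ω) (C := Real.pi)
        (Filter.Eventually.of_forall fun t => by simpa [Real.norm_eq_abs] using hubd t ω)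
    have hsing : ∀ s : ℝ, ρ {s} = 0 := by
      intro s
      rw [hρdef, hμdef, Measure.restrict_restrict hA,
        Measure.restrict_apply (measurableSet_singleton s)]
      exact measure_mono_null Set.inter_subset_left Real.volume_singleton
    -- `E[W^2] = 0`
    have key : ∫ ω, (∫ t, u t ω ∂ρ) * (∫ t, u t ω ∂ρ) ∂P = 0 := by
      have h1 : ∀ ω, (∫ t, u t ω ∂ρ) * (∫ t, u t ω ∂ρ)
          = ∫ p : ℝ × ℝ, u p.1 ω * u p.2 ω ∂(ρ.prod ρ) := fun ω =>
        (integral_prod_mul (μ := ρ) (ν := ρ) (fun t => u t ω) (fun t => u t ω)).symm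
      have hUq : Measurable fun q : Ω × (ℝ × ℝ) => u q.2.1 q.1 * u q.2.2 q.1 :=
        (huMeas.comp ((measurable_fst.comp measurable_snd).prodMk measurable_fst)).mul
          (huMeas.comp ((measurable_snd.comp measurable_snd).prodMk measurable_fst))
      have hInt : Integrable (Function.uncurry fun ω (p : ℝ × ℝ) => u p.1 ω * u p.2 ω)
          (P.prod (ρ.prod ρ)) := by
        rw [Function.uncurry_def]
        refine integrable_of_bdd' hUq.aestronglyMeasurable (C := Real.pi * Real.pi) (fun q => ?_)
        rw [abs_mul]
        exact mul_le_mul (hubd _ _) (hubd _ _) (abs_nonneg _) Real.pi_pos.le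
      have hmem1 : ∀ᵐ p ∂(ρ.prod ρ), p.1 ∈ Set.Icc (0:ℝ) 1 := by
        rw [ae_iff]
        have hset : {p : ℝ × ℝ | ¬ p.1 ∈ Set.Icc (0:ℝ) 1} = (Set.Icc (0:ℝ) 1)ᶜ ×ˢ Set.univ := by
          ext p; simp
        rw [hset, Measure.prod_prod]
        have hz : ρ ((Set.Icc (0:ℝ) 1)ᶜ) = 0 := by
          rw [hρdef, hμdef, Measure.restrict_restrict hA,
            Measure.restrict_apply (measurableSet_Icc.compl)]
          exact measure_mono_null (fun x hx => (hx.1 hx.2.2).elim) measure_empty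
        simp [hz]
      have hmem2 : ∀ᵐ p ∂(ρ.prod ρ), p.2 ∈ Set.Icc (0:ℝ) 1 := by
        rw [ae_iff]
        have hset : {p : ℝ × ℝ | ¬ p.2 ∈ Set.Icc (0:ℝ) 1} = Set.univ ×ˢ (Set.Icc (0:ℝ) 1)ᶜ := by
          ext p; simp
        rw [hset, Measure.prod_prod]
        have hz : ρ ((Set.Icc (0:ℝ) 1)ᶜ) = 0 := by
          rw [hρdef, hμdef, Measure.restrict_restrict hA,
            Measure.restrict_apply (measurableSet_Icc.compl)]
          exact measure_mono_null (fun x hx => (hx.1 hx.2.2).elim) measure_empty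
        simp [hz]
      have hd : ∀ᵐ p ∂(ρ.prod ρ), p.1 ≠ p.2 := by
        rw [ae_iff]
        have hset : {p : ℝ × ℝ | ¬ p.1 ≠ p.2} = {p : ℝ × ℝ | p.1 = p.2} := by
          ext p; simp
        rw [hset]
        have hmd : MeasurableSet {p : ℝ × ℝ | p.1 = p.2} :=
          measurableSet_eq_fun measurable_fst measurable_snd
        rw [Measure.prod_apply hmd]
        have hz : ∀ s : ℝ, ρ (Prod.mk s ⁻¹' {p : ℝ × ℝ | p.1 = p.2}) = 0 := by
          intro s
          have he : (Prod.mk s ⁻¹' {p : ℝ × ℝ | p.1 = p.2}) = {s} := by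
            ext x; simp [eq_comm]
          rw [he]
          exact hsing s
        rw [lintegral_congr hz, lintegral_zero]
      have hae : ∀ᵐ p ∂(ρ.prod ρ), (∫ ω, u p.1 ω * u p.2 ω ∂P) = 0 := by
        filter_upwards [hmem1, hmem2, hd] with p hp1 hp2 hpd
        exact hcov p.1 hp1 p.2 hp2 hpd
      calc ∫ ω, (∫ t, u t ω ∂ρ) * (∫ t, u t ω ∂ρ) ∂P
          = ∫ ω, ∫ p : ℝ × ℝ, u p.1 ω * u p.2 ω ∂(ρ.prod ρ) ∂P :=
            integral_congr_ae (Filter.Eventually.of_forall h1)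
        _ = ∫ p : ℝ × ℝ, ∫ ω, u p.1 ω * u p.2 ω ∂P ∂(ρ.prod ρ) := integral_integral_swap hInt
        _ = 0 := by rw [integral_congr_ae hae, integral_zero]
    have hW2int : Integrable (fun ω => (∫ t, u t ω ∂ρ) * (∫ t, u t ω ∂ρ)) P := by
      refine integrable_of_bdd' (hWSM.mul hWSM).aestronglyMeasurable
        (C := (Real.pi * (ρ Set.univ).toReal) * (Real.pi * (ρ Set.univ).toReal)) (fun ω => ?_)
      rw [abs_mul]
      exact mul_le_mul (hWbd ω) (hWbd ω) (abs_nonneg _) (le_trans (abs_nonneg _) (hWbd ω))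
    have hz : ∀ᵐ ω ∂P, (∫ t, u t ω ∂ρ) * (∫ t, u t ω ∂ρ) = 0 :=
      (integral_eq_zero_iff_of_nonneg_ae
        (Filter.Eventually.of_forall fun ω => mul_self_nonneg _) hW2int).1 key
    filter_upwards [hz] with ω hω
    exact mul_self_eq_zero.1 hω
  -- hence all set-integrals of `u` over the product measure vanish
  have hUint : Integrable (fun p : ℝ × Ω => u p.1 p.2) (μ.prod P) :=
    integrable_of_bdd' huMeas.aestronglyMeasurable (fun p => hubd p.1 p.2)
  have hbox : ∀ A : Set ℝ, MeasurableSet A → ∀ B : Set Ω, MeasurableSet B →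
      ∫ p in A ×ˢ B, u p.1 p.2 ∂(μ.prod P) = 0 := by
    intro A hA B hB
    rw [← Measure.prod_restrict]
    have hint' : Integrable (fun p : ℝ × Ω => u p.1 p.2) ((μ.restrict A).prod (P.restrict B)) :=
      integrable_of_bdd' huMeas.aestronglyMeasurable (fun p => hubd p.1 p.2)
    rw [integral_prod_symm _ hint']
    have h0 : ∀ᵐ ω ∂P.restrict B, ∫ t, u t ω ∂μ.restrict A = 0 :=
      ae_restrict_of_ae (hW A hA)
    rw [integral_congr_ae h0, integral_zero]
  have hrect : ∀ S : Set (ℝ × Ω), MeasurableSet S →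
      ∫ p in S, u p.1 p.2 ∂(μ.prod P) = 0 := by
    have htot : ∫ p : ℝ × Ω, u p.1 p.2 ∂(μ.prod P) = 0 := by
      have := hbox Set.univ MeasurableSet.univ Set.univ MeasurableSet.univ
      simpa [Set.univ_prod_univ] using this
    intro S hS
    refine MeasurableSpace.induction_on_inter
      (C := fun S _ => ∫ p in S, u p.1 p.2 ∂(μ.prod P) = 0)
      generateFrom_prod.symm isPiSystem_prod ?_ ?_ ?_ ?_ S hS
    · simp
    · rintro _ ⟨A, hA, B, hB, rfl⟩
      exact hbox A hA B hB
    · intro T hT hT0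
      have hsum := integral_add_compl hT hUint
      rw [hT0, htot] at hsum
      linarith
    · intro s hdisj hmeas' hzero
      rw [integral_iUnion hmeas' hdisj hUint.integrableOn]
      simp [hzero]
  have hU0 : (fun p : ℝ × Ω => u p.1 p.2) =ᵐ[μ.prod P] 0 :=
    hUint.ae_eq_zero_of_forall_setIntegral_eq_zero (fun S hS _ => hrect S hS)
  have hU0' : ∀ᵐ p ∂(μ.prod P), u p.1 p.2 = 0 := hU0
  -- conclude via Fubini for null sets
  have hmem : ∀ᵐ t ∂μ, t ∈ Set.Icc (0:ℝ) 1 := ae_restrict_mem measurableSet_Icc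
  filter_upwards [Measure.ae_ae_of_ae_prod hU0', hmem] with t ht hmemt
  refine ⟨Real.tan (m t), ?_⟩
  have hfm : Measurable (f t) := by
    have := hgm t
    rwa [hgf t hmemt] at this
  have hconst : ∀ᵐ ω ∂P, f t ω = Real.tan (m t) := by
    filter_upwards [ht] with ω hω
    simp only [hudef] at hω
    have h2 : Real.arctan (g t ω) = m t := by
      have := sub_eq_zero.1 hω
      simpa [hhdef] using this
    have h1 : Real.arctan (f t ω) = m t := by
      rwa [hgf t hmemt] at h2
    calc f t ω = Real.tan (Real.arctan (f t ω)) := (Real.tan_arctan _).symm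
      _ = Real.tan (m t) := by rw [h1]
  have hms : MeasurableSet {ω | f t ω = Real.tan (m t)} :=
    hfm (measurableSet_singleton (Real.tan (m t)))
  rw [← prob_compl_eq_zero_iff hms]
  rw [ae_iff] at hconst
  rw [Set.compl_setOf]
  exact hconst
end

section
/- Let f be a measurable stochastic process on [0,1] whose random variables f(t) are mutually independent, satisfy E[f(t)] = 0 for all t ∈ [0,1], and are uniformly bounded: there is a constant m with |f(t,ω)| < m for all t and ω. Then for Lebesgue-almost every t ∈ [0,1], P{ω : f(t,ω) = 0} = 1. -/
open MeasureTheory ProbabilityTheory Set Metric Filter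

/-!
Statement 2: a measurable stochastic process on `[0,1]` with mutually
independent, centred, uniformly bounded random variables vanishes a.s. at
Lebesgue-almost every `t ∈ [0,1]`.
-/

theorem measurable_indep_centred_bounded_process_ae_zero
    {Ω : Type*} [MeasurableSpace Ω] (P : Measure Ω) [IsProbabilityMeasure P]
    (f : ℝ → Ω → ℝ)
    (hmeas : Measurable fun p : Set.Icc (0 : ℝ) 1 × Ω => f p.1 p.2)
    (hindep : iIndepFun
      (fun t : Set.Icc (0 : ℝ) 1 => f t) P)
    (hmean : ∀ t ∈ Set.Icc (0 : ℝ) 1, ∫ ω, f t ω ∂P = 0)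
    (hbdd : ∃ m : ℝ, ∀ t ∈ Set.Icc (0 : ℝ) 1, ∀ ω : Ω, |f t ω| < m) :
    ∀ᵐ t ∂(volume.restrict (Set.Icc (0 : ℝ) 1)),
      P {ω | f t ω = 0} = 1 := by
  obtain ⟨m, hm⟩ := hbdd
  have hΩ : Nonempty Ω := by
    by_contra h
    have : P Set.univ = 0 := by
      rw [Set.univ_eq_empty_iff.2 (not_nonempty_iff.1 h)]; exact measure_empty
    simp [measure_univ] at this
  set I : Set ℝ := Set.Icc (0 : ℝ) 1 with hIdef
  have hImeas : MeasurableSet I := measurableSet_Icc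
  set π : ℝ → I := Set.projIcc 0 1 zero_le_one with hπdef
  set g : ℝ → Ω → ℝ := fun t ω => f (π t) ω with hgdef
  have hπmeas : Measurable π := continuous_projIcc.measurable
  have hgmeas : Measurable (fun p : ℝ × Ω => g p.1 p.2) :=
    hmeas.comp ((hπmeas.comp measurable_fst).prodMk measurable_snd)
  have hgI : ∀ t ∈ I, ∀ ω, g t ω = f t ω := by
    intro t ht ω
    simp only [hgdef, hπdef, Set.projIcc_of_mem zero_le_one ht]
  have hgbd : ∀ t ω, |g t ω| ≤ m := fun t ω => (hm _ (π t).2 ω).le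
  have hm0 : 0 ≤ m := (abs_nonneg _).trans (hgbd 0 hΩ.some)
  have hgmean : ∀ t, ∫ ω, g t ω ∂P = 0 := fun t => hmean _ (π t).2
  have hgm1 : ∀ t : ℝ, Measurable (g t) := fun t =>
    hgmeas.comp (measurable_const.prodMk measurable_id)
  -- cross moments vanish
  have hcross : ∀ s t : ℝ, s ∈ I → t ∈ I → s ≠ t →
      ∫ ω, g s ω * g t ω ∂P = 0 := by
    intro s t hs ht hst
    have hne : π s ≠ π t := by
      intro h
      apply hst
      have := congrArg Subtype.val h
      rwa [hπdef, Set.projIcc_of_mem zero_le_one hs,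
        Set.projIcc_of_mem zero_le_one ht] at this
    have hind : IndepFun (g s) (g t) P := by
      have := hindep.indepFun hne
      simpa [hgdef] using this
    have hmul := hind.integral_mul_eq_mul_integral (hgm1 s).aestronglyMeasurable
      (hgm1 t).aestronglyMeasurable
    calc ∫ ω, g s ω * g t ω ∂P = ∫ ω, (g s * g t) ω ∂P := rfl
      _ = (∫ ω, g s ω ∂P) * ∫ ω, g t ω ∂P := hmul
      _ = 0 := by rw [hgmean s, hgmean t, mul_zero]
  -- Step A: for any a b, the ω-random variable ∫ t in I ∩ Ioc a b, g t ω is a.s. zero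
  have stepA : ∀ a b : ℝ, ∀ᵐ ω ∂P, ∫ t in I ∩ Set.Ioc a b, g t ω = 0 := by
    intro a b
    set A : Set ℝ := I ∩ Set.Ioc a b with hAdef
    have hAmeas : MeasurableSet A := hImeas.inter measurableSet_Ioc
    set ν : Measure ℝ := volume.restrict A with hνdef
    haveI : IsFiniteMeasure ν := by
      constructor
      rw [hνdef, Measure.restrict_apply_univ]
      exact lt_of_le_of_lt (measure_mono Set.inter_subset_left)
        (by rw [hIdef, Real.volume_Icc]; exact ENNReal.ofReal_lt_top)
    set X : Ω → ℝ := fun ω => ∫ t, g t ω ∂ν with hXdef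
    have hswapmeas : Measurable (fun q : Ω × ℝ => g q.2 q.1) :=
      hgmeas.comp (measurable_snd.prodMk measurable_fst)
    have hXmeas : StronglyMeasurable X :=
      hswapmeas.stronglyMeasurable.integral_prod_right' (ν := ν)
    have hXbd : ∀ ω, ‖X ω‖ ≤ m * (ν Set.univ).toReal := by
      intro ω
      exact norm_integral_le_of_norm_le_const
        (ae_of_all _ fun t => by rw [Real.norm_eq_abs]; exact hgbd t ω)
    -- E[X^2] = 0
    have key : ∫ ω, X ω * X ω ∂P = 0 := by
      have h1 : ∀ ω, X ω * X ω = ∫ p, g p.1 ω * g p.2 ω ∂(ν.prod ν) := fun ω =>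
        (integral_prod_mul (μ := ν) (ν := ν) (fun s => g s ω) (fun t => g t ω)).symm
      have hintprod : Integrable
          (Function.uncurry fun ω (p : ℝ × ℝ) => g p.1 ω * g p.2 ω)
          (P.prod (ν.prod ν)) := by
        constructor
        · apply Measurable.aestronglyMeasurable
          have m1 : Measurable (fun q : Ω × (ℝ × ℝ) => g q.2.1 q.1) :=
            hgmeas.comp ((measurable_fst.comp measurable_snd).prodMk measurable_fst)
          have m2 : Measurable (fun q : Ω × (ℝ × ℝ) => g q.2.2 q.1) :=
            hgmeas.comp ((measurable_snd.comp measurable_snd).prodMk measurable_fst)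
          exact m1.mul m2
        · apply HasFiniteIntegral.of_bounded (C := m * m)
          apply ae_of_all
          rintro ⟨ω, s, t⟩
          rw [Function.uncurry]
          simp only [Real.norm_eq_abs, abs_mul]
          exact mul_le_mul (hgbd s ω) (hgbd t ω) (abs_nonneg _) hm0
      have hswap : ∫ ω, ∫ p, g p.1 ω * g p.2 ω ∂(ν.prod ν) ∂P
          = ∫ p, ∫ ω, g p.1 ω * g p.2 ω ∂P ∂(ν.prod ν) :=
        integral_integral_swap hintprod
      have hdiag : ∀ᵐ p ∂(ν.prod ν), ∫ ω, g p.1 ω * g p.2 ω ∂P = 0 := by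
        have h1mem : ∀ᵐ p ∂(ν.prod ν), p.1 ∈ A := by
          rw [ae_iff]
          have hset1 : {p : ℝ × ℝ | ¬ p.1 ∈ A} = (Prod.fst ⁻¹' A)ᶜ := rfl
          rw [hset1, Measure.measure_prod_null
            ((hAmeas.preimage measurable_fst).compl)]
          filter_upwards [ae_restrict_mem hAmeas] with s hs
          have : (Prod.mk s ⁻¹' (Prod.fst ⁻¹' A)ᶜ) = (∅ : Set ℝ) := by
            ext t; simp [hs]
          simp [this]
        have h2mem : ∀ᵐ p ∂(ν.prod ν), p.2 ∈ A := by
          rw [ae_iff]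
          have hset2 : {p : ℝ × ℝ | ¬ p.2 ∈ A} = (Prod.snd ⁻¹' A)ᶜ := rfl
          rw [hset2, Measure.measure_prod_null
            ((hAmeas.preimage measurable_snd).compl)]
          apply ae_of_all
          intro s
          show ν (Prod.mk s ⁻¹' (Prod.snd ⁻¹' A)ᶜ) = 0
          have : (Prod.mk s ⁻¹' (Prod.snd ⁻¹' A)ᶜ) = Aᶜ := by
            ext t; simp
          rw [this, hνdef, Measure.restrict_apply hAmeas.compl]
          simp
        have h3 : ∀ᵐ p ∂(ν.prod ν), p.1 ≠ p.2 := by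
          rw [ae_iff]
          have hdm : MeasurableSet {p : ℝ × ℝ | ¬ p.1 ≠ p.2} := by
            simpa using measurableSet_eq_fun
              (measurable_fst : Measurable fun p : ℝ × ℝ => p.1) measurable_snd
          rw [Measure.measure_prod_null hdm]
          apply ae_of_all
          intro s
          show ν (Prod.mk s ⁻¹' {p : ℝ × ℝ | ¬ p.1 ≠ p.2}) = 0
          have : (Prod.mk s ⁻¹' {p : ℝ × ℝ | ¬ p.1 ≠ p.2}) = {s} := by
            ext t; simp [eq_comm]
          rw [this, hνdef, Measure.restrict_apply (measurableSet_singleton s)]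
          exact le_antisymm
            (le_trans (measure_mono Set.inter_subset_left)
              (le_of_eq Real.volume_singleton))
            (zero_le')
        filter_upwards [h1mem, h2mem, h3] with p hp1 hp2 hp3
        exact hcross p.1 p.2 hp1.1 hp2.1 hp3
      calc ∫ ω, X ω * X ω ∂P
          = ∫ ω, ∫ p, g p.1 ω * g p.2 ω ∂(ν.prod ν) ∂P := by simp_rw [h1]
        _ = ∫ p, ∫ ω, g p.1 ω * g p.2 ω ∂P ∂(ν.prod ν) := hswap
        _ = ∫ p, (0 : ℝ) ∂(ν.prod ν) := integral_congr_ae hdiag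
        _ = 0 := integral_zero _ _
    have hX2int : Integrable (fun ω => X ω * X ω) P := by
      constructor
      · exact (hXmeas.mul hXmeas).aestronglyMeasurable
      · apply HasFiniteIntegral.of_bounded
          (C := (m * (ν Set.univ).toReal) * (m * (ν Set.univ).toReal))
        apply ae_of_all
        intro ω
        rw [Real.norm_eq_abs, abs_mul]
        exact mul_le_mul (by rw [← Real.norm_eq_abs]; exact hXbd ω)
          (by rw [← Real.norm_eq_abs]; exact hXbd ω) (abs_nonneg _)
          ((norm_nonneg _).trans (hXbd ω))
      -- bound
    have hX20 : (fun ω => X ω * X ω) =ᵐ[P] 0 :=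
      (integral_eq_zero_iff_of_nonneg (fun ω => mul_self_nonneg _) hX2int).mp key
    filter_upwards [hX20] with ω hω
    exact mul_self_eq_zero.mp hω
  -- Step B: almost surely, all rational-interval integrals vanish
  have stepB : ∀ᵐ ω ∂P, ∀ q r : ℚ, ∫ t in I ∩ Set.Ioc (q : ℝ) (r : ℝ), g t ω = 0 :=
    ae_all_iff.2 fun q => ae_all_iff.2 fun r => stepA q r
  -- Step C: almost surely, g(·, ω) vanishes for a.e. t ∈ I
  have stepC : ∀ᵐ ω ∂P, ∀ᵐ t ∂(volume.restrict I), g t ω = 0 := by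
    filter_upwards [stepB] with ω hω
    set u : ℝ → ℝ := I.indicator (fun t => g t ω) with hudef
    have hgωmeas : Measurable (fun t : ℝ => g t ω) :=
      hgmeas.comp (measurable_id.prodMk measurable_const)
    have humeas : Measurable u := hgωmeas.indicator hImeas
    haveI : IsFiniteMeasure (volume.restrict I) := by
      constructor
      rw [Measure.restrict_apply_univ, hIdef, Real.volume_Icc]
      exact ENNReal.ofReal_lt_top
    have huint : Integrable u volume := by
      rw [hudef, integrable_indicator_iff hImeas]
      constructor
      · exact hgωmeas.aestronglyMeasurable.restrict
      · exact HasFiniteIntegral.of_bounded (C := m)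
          (ae_of_all _ fun t => by rw [Real.norm_eq_abs]; exact hgbd t ω)
    -- integrals of u over rational Ioc intervals vanish
    have hIoc0 : ∀ q r : ℚ, ∫ t in Set.Ioc (q : ℝ) (r : ℝ), u t = 0 := by
      intro q r
      rw [hudef, setIntegral_indicator hImeas, Set.inter_comm]
      exact hω q r
    -- the primitive of u
    set H : ℝ → ℝ := fun x => ∫ t in (0 : ℝ)..x, u t with hHdef
    have hia : ∀ a b : ℝ, IntervalIntegrable u volume a b := fun a b =>
      huint.intervalIntegrable
    have hHcont : Continuous H := intervalIntegral.continuous_primitive hia 0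
    have hH0 : ∀ q : ℚ, H (q : ℝ) = 0 := by
      intro q
      rcases le_total (0 : ℝ) (q : ℝ) with h | h
      · rw [hHdef]
        simp only
        rw [intervalIntegral.integral_of_le h]
        exact_mod_cast hIoc0 0 q
      · rw [hHdef]
        simp only
        rw [intervalIntegral.integral_of_ge h]
        have := hIoc0 q 0
        rw [show ((0 : ℚ) : ℝ) = (0 : ℝ) by norm_num] at this
        rw [this, neg_zero]
    have hHzero : H = fun _ => 0 := by
      apply Continuous.ext_on Rat.denseRange_cast hHcont continuous_const
      rintro x ⟨q, rfl⟩
      exact hH0 q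
    -- hence integrals over all Ioc intervals vanish
    have hIocAll : ∀ a b : ℝ, a ≤ b → ∫ t in Set.Ioc a b, u t = 0 := by
      intro a b hab
      have hadd := intervalIntegral.integral_add_adjacent_intervals
        (hia 0 a) (hia a b)
      have h1 : ∫ t in (0:ℝ)..a, u t = 0 := by
        have := congrFun hHzero a; simpa [hHdef] using this
      have h2 : ∫ t in (0:ℝ)..b, u t = 0 := by
        have := congrFun hHzero b; simpa [hHdef] using this
      have h3 : ∫ t in a..b, u t = 0 := by
        rw [h1, h2] at hadd; linarith
      rwa [intervalIntegral.integral_of_le hab] at h3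
    -- Lebesgue differentiation: u = 0 a.e.
    have hu0 : ∀ᵐ x ∂(volume : Measure ℝ), u x = 0 := by
      filter_upwards [IsUnifLocDoublingMeasure.ae_tendsto_average (volume : Measure ℝ)
        huint.locallyIntegrable 1] with x hx
      have hlim : Tendsto (fun j : ℝ => ⨍ y in closedBall x j, u y)
          (nhdsWithin 0 (Set.Ioi 0)) (nhds (u x)) := by
        apply hx (fun _ => x) id tendsto_id
        filter_upwards [self_mem_nhdsWithin] with j hj
        exact mem_closedBall_self (by rw [one_mul]; exact le_of_lt hj)
      have hzero : (fun j : ℝ => ⨍ y in closedBall x j, u y)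
          =ᶠ[nhdsWithin 0 (Set.Ioi 0)] (fun _ => (0 : ℝ)) := by
        filter_upwards [self_mem_nhdsWithin] with j hj
        have hj0 : (0 : ℝ) < j := hj
        rw [setAverage_eq, Real.closedBall_eq_Icc, integral_Icc_eq_integral_Ioc,
          hIocAll (x - j) (x + j) (by linarith), smul_zero]
      have h1 : Tendsto (fun _ : ℝ => (0 : ℝ)) (nhdsWithin 0 (Set.Ioi 0)) (nhds (u x)) :=
        hlim.congr' hzero
      exact tendsto_nhds_unique h1 tendsto_const_nhds
    have := ae_restrict_of_ae (μ := volume) (s := I) hu0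
    filter_upwards [this, ae_restrict_mem hImeas] with t htu htI
    rw [hudef] at htu
    rwa [Set.indicator_of_mem htI] at htu
  -- Final assembly via Fubini
  set μ : Measure ℝ := volume.restrict I with hμdef
  have hDmeas : MeasurableSet {p : ℝ × Ω | g p.1 p.2 ≠ 0} := by
    have : {p : ℝ × Ω | g p.1 p.2 ≠ 0}
        = (fun p : ℝ × Ω => g p.1 p.2) ⁻¹' ({0}ᶜ) := rfl
    rw [this]
    exact hgmeas (measurableSet_singleton 0).compl
  have hprod : (μ.prod P) {p : ℝ × Ω | g p.1 p.2 ≠ 0} = 0 := by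
    have hswap : (μ.prod P) {p : ℝ × Ω | g p.1 p.2 ≠ 0}
        = (P.prod μ) (Prod.swap ⁻¹' {p : ℝ × Ω | g p.1 p.2 ≠ 0}) := by
      rw [← Measure.prod_swap, Measure.map_apply measurable_swap hDmeas]
    rw [hswap]
    have hpre : (Prod.swap ⁻¹' {p : ℝ × Ω | g p.1 p.2 ≠ 0})
        = {q : Ω × ℝ | g q.2 q.1 ≠ 0} := rfl
    rw [hpre]
    rw [Measure.measure_prod_null]
    · filter_upwards [stepC] with ω hωC
      have : (Prod.mk ω ⁻¹' {q : Ω × ℝ | g q.2 q.1 ≠ 0}) = {t : ℝ | g t ω ≠ 0} := rfl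
      rw [this]
      exact ae_iff.mp hωC
    · exact (hgmeas.comp (measurable_snd.prodMk measurable_fst))
        (measurableSet_singleton 0).compl
  have hfinal : ∀ᵐ t ∂μ, P {ω | g t ω ≠ 0} = 0 := by
    have := (Measure.measure_prod_null hDmeas).mp hprod
    filter_upwards [this] with t ht
    exact ht
  filter_upwards [hfinal, ae_restrict_mem hImeas] with t ht htI
  have hset : {ω | f t ω = 0} = {ω | g t ω ≠ 0}ᶜ := by
    ext ω
    simp [hgI t htI ω]
  rw [hset]
  have hmeas' : MeasurableSet {ω | g t ω ≠ 0} :=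
    (hgm1 t) (measurableSet_singleton 0).compl
  rw [prob_compl_eq_one_iff hmeas']
  exact ht
end

section
/- Let f be a measurable stochastic process on [0,1] whose random variables f(t) are pairwise independent, satisfy E[f(t)] = 0 for all t ∈ [0,1], and are uniformly bounded: there is a constant m with |f(t,ω)| < m for all t and ω. Define g(t,ω) = ∫₀ᵗ f(s,ω) ds. Then for every t ∈ [0,1], E[g(t)²] = 0. -/
open MeasureTheory ProbabilityTheory

/-!
Statement 3: for a measurable stochastic process on `[0,1]` with pairwise
independent, centred, uniformly bounded random variables, the integrated
process `g(t,ω) = ∫₀ᵗ f(s,ω) ds` satisfies `E[g(t)²] = 0` for every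
`t ∈ [0,1]`.
-/

theorem integrated_process_second_moment_zero
    {Ω : Type*} [MeasurableSpace Ω] (P : Measure Ω) [IsProbabilityMeasure P]
    (f : ℝ → Ω → ℝ)
    (hmeas : Measurable fun p : Set.Icc (0 : ℝ) 1 × Ω => f p.1 p.2)
    (hindep : ∀ t ∈ Set.Icc (0 : ℝ) 1, ∀ s ∈ Set.Icc (0 : ℝ) 1, t ≠ s →
      IndepFun (f t) (f s) P)
    (hmean : ∀ t ∈ Set.Icc (0 : ℝ) 1, ∫ ω, f t ω ∂P = 0)
    (hbdd : ∃ m : ℝ, ∀ t ∈ Set.Icc (0 : ℝ) 1, ∀ ω : Ω, |f t ω| < m)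
    (g : ℝ → Ω → ℝ)
    (hg : ∀ t, ∀ ω, g t ω = ∫ s in (0 : ℝ)..t, f s ω) :
    ∀ t ∈ Set.Icc (0 : ℝ) 1, ∫ ω, (g t ω) ^ 2 ∂P = 0 := by
  obtain ⟨m, hm⟩ := hbdd
  have hΩ : Nonempty Ω := by
    obtain ⟨ω, -⟩ := nonempty_of_measure_ne_zero
      (show P Set.univ ≠ 0 by simp)
    exact ⟨ω⟩
  intro t ht
  obtain ⟨ht0, ht1⟩ := ht
  -- extend `f` to a globally measurable function using `projIcc`
  set F : ℝ × Ω → ℝ := fun p => f ((Set.projIcc (0 : ℝ) 1 zero_le_one p.1) : Set.Icc (0:ℝ) 1) p.2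
    with hFdef
  have hproj : Measurable (fun p : ℝ × Ω =>
      ((Set.projIcc (0 : ℝ) 1 zero_le_one p.1 : Set.Icc (0 : ℝ) 1), p.2)) :=
    (continuous_projIcc.measurable.comp measurable_fst).prodMk measurable_snd
  have hFmeas : Measurable F := hmeas.comp hproj
  have hFeq : ∀ s ∈ Set.Icc (0 : ℝ) 1, ∀ ω, F (s, ω) = f s ω := by
    intro s hs ω
    simp only [hFdef]
    rw [Set.projIcc_of_mem zero_le_one hs]
  have hFbdd : ∀ p : ℝ × Ω, |F p| < m := fun p =>
    hm _ (Set.projIcc (0 : ℝ) 1 zero_le_one p.1).2 p.2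
  have hm0 : 0 ≤ m := le_of_lt (lt_of_le_of_lt (abs_nonneg _) (hFbdd (0, Classical.arbitrary Ω)))
  set A := Set.Ioc (0 : ℝ) t with hA
  set μA := (volume : Measure ℝ).restrict A with hμA
  have hAsub : A ⊆ Set.Icc (0 : ℝ) 1 := fun s hs => ⟨le_of_lt hs.1, hs.2.trans ht1⟩
  have hμAfin : IsFiniteMeasure μA := by
    constructor
    rw [hμA, Measure.restrict_apply_univ, hA, Real.volume_Ioc]
    exact ENNReal.ofReal_lt_top
  have hgF : ∀ ω, g t ω = ∫ s, F (s, ω) ∂μA := by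
    intro ω
    rw [hg, intervalIntegral.integral_of_le ht0]
    exact (setIntegral_congr_fun measurableSet_Ioc
      (fun s hs => (hFeq s (hAsub hs) ω).symm))
  have hsq : ∀ ω, (g t ω) ^ 2 = ∫ q, F (q.1, ω) * F (q.2, ω) ∂(μA.prod μA) := by
    intro ω
    rw [hgF ω, sq, ← integral_prod_mul]
  -- integrability for Fubini
  have hint : Integrable (Function.uncurry fun (ω : Ω) (q : ℝ × ℝ) =>
      F (q.1, ω) * F (q.2, ω)) (P.prod (μA.prod μA)) := by
    have hmeas' : Measurable (Function.uncurry fun (ω : Ω) (q : ℝ × ℝ) =>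
        F (q.1, ω) * F (q.2, ω)) := by
      apply Measurable.mul
      · exact hFmeas.comp ((measurable_fst.comp measurable_snd).prodMk measurable_fst)
      · exact hFmeas.comp ((measurable_snd.comp measurable_snd).prodMk measurable_fst)
    refine (integrable_const (m * m)).mono' hmeas'.aestronglyMeasurable
      (Filter.Eventually.of_forall fun z => ?_)
    rw [Function.uncurry]
    calc |F (z.2.1, z.1) * F (z.2.2, z.1)| = |F (z.2.1, z.1)| * |F (z.2.2, z.1)| := abs_mul _ _
      _ ≤ m * m := mul_le_mul (hFbdd _).le (hFbdd _).le (abs_nonneg _) hm0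
  -- the off-diagonal integrals vanish
  have hdiag : (μA.prod μA) {q : ℝ × ℝ | q.1 = q.2} = 0 := by
    rw [Measure.prod_apply (measurableSet_eq_fun measurable_fst measurable_snd)]
    have hslice : ∀ s : ℝ, μA (Prod.mk s ⁻¹' {q : ℝ × ℝ | q.1 = q.2}) = 0 := by
      intro s
      have h1 : Prod.mk s ⁻¹' {q : ℝ × ℝ | q.1 = q.2} = {s} := by
        ext u; simp [eq_comm]
      rw [h1, hμA, Measure.restrict_apply (measurableSet_singleton s)]
      exact measure_mono_null Set.inter_subset_left (Real.volume_singleton)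
    simp [hslice]
  have hae_ne : ∀ᵐ q ∂(μA.prod μA), q.1 ≠ q.2 := by
    rw [MeasureTheory.ae_iff]
    simpa using hdiag
  have hae_mem : ∀ᵐ q ∂(μA.prod μA), q ∈ A ×ˢ A := by
    rw [hμA, Measure.prod_restrict]
    exact ae_restrict_mem (measurableSet_Ioc.prod measurableSet_Ioc)
  have hzero : ∀ᵐ q ∂(μA.prod μA), (∫ ω, F (q.1, ω) * F (q.2, ω) ∂P) = 0 := by
    filter_upwards [hae_ne, hae_mem] with q hne hqmem
    have h1 : q.1 ∈ Set.Icc (0 : ℝ) 1 := hAsub hqmem.1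
    have h2 : q.2 ∈ Set.Icc (0 : ℝ) 1 := hAsub hqmem.2
    have e1 : (fun ω => F (q.1, ω)) = f q.1 := funext fun ω => hFeq q.1 h1 ω
    have e2 : (fun ω => F (q.2, ω)) = f q.2 := funext fun ω => hFeq q.2 h2 ω
    have hid := hindep q.1 h1 q.2 h2 hne
    have hX : AEStronglyMeasurable (f q.1) P := by
      rw [← e1]
      exact (hFmeas.comp (measurable_const.prodMk measurable_id)).aestronglyMeasurable
    have hY : AEStronglyMeasurable (f q.2) P := by
      rw [← e2]
      exact (hFmeas.comp (measurable_const.prodMk measurable_id)).aestronglyMeasurable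
    have : ∫ ω, F (q.1, ω) * F (q.2, ω) ∂P = ∫ ω, (f q.1 * f q.2) ω ∂P := by
      apply integral_congr_ae
      filter_upwards with ω
      simp [hFeq q.1 h1 ω, hFeq q.2 h2 ω]
    rw [this]
    have hI := hid.integral_mul_eq_mul_integral hX hY
    rw [hmean q.1 h1, zero_mul] at hI
    simpa using hI
  calc ∫ ω, (g t ω) ^ 2 ∂P
      = ∫ ω, ∫ q, F (q.1, ω) * F (q.2, ω) ∂(μA.prod μA) ∂P := by
        exact integral_congr_ae (Filter.Eventually.of_forall fun ω => hsq ω)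
    _ = ∫ q, ∫ ω, F (q.1, ω) * F (q.2, ω) ∂P ∂(μA.prod μA) := integral_integral_swap hint
    _ = 0 := by
        rw [integral_eq_zero_of_ae hzero]
end

section
/- Let f be a measurable stochastic process on [0,1] such that E[f(t)] = 0 and E[f(t)²] = 1 for all t ∈ [0,1], and suppose there exists ρ ∈ ℝ such that E[f(t)f(s)] = ρ for all t, s ∈ [0,1] with t ≠ s. Then the process is constant in the sense that for all t, s ∈ [0,1], P{ω : f(t,ω) = f(s,ω)} = 1; equivalently, there exists a random variable X : Ω → ℝ such that P{ω : f(t,ω) = X(ω)} = 1 for every t ∈ [0,1]. -/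
open MeasureTheory ProbabilityTheory Set
open scoped ENNReal NNReal

/-!
Statement 7: a measurable process on `[0,1]` with `E[f(t)] = 0`,
`E[f(t)²] = 1` and constant off-diagonal correlation `E[f(t)f(s)] = ρ`
is constant: `f(t) = f(s)` a.s. for all `t, s`, and indeed there is a single
random variable `X` with `f(t) = X` a.s. for every `t ∈ [0,1]`.
-/


section helpers

variable {α β : Type*} [MeasurableSpace α] [MeasurableSpace β]

/-- product of two L²-ish functions is integrable -/
lemma helper_int_mul {μ : Measure α} {u v : α → ℝ}
    (hu : AEStronglyMeasurable u μ) (hv : AEStronglyMeasurable v μ)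
    (hu2 : Integrable (fun x => u x ^ 2) μ) (hv2 : Integrable (fun x => v x ^ 2) μ) :
    Integrable (fun x => u x * v x) μ := by
  refine Integrable.mono' ((hu2.add hv2).div_const 2) (hu.mul hv)
    (Filter.Eventually.of_forall fun x => ?_)
  rw [Real.norm_eq_abs, abs_mul]
  simp only [Pi.add_apply]
  nlinarith [sq_nonneg (|u x| - |v x|), sq_abs (u x), sq_abs (v x),
    abs_nonneg (u x), abs_nonneg (v x)]

/-- the set where two measurable real functions agree is measurable -/
lemma helper_measurableSet_eq {γ : Type*} [MeasurableSpace γ] (u v : γ → ℝ)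
    (hu : Measurable u) (hv : Measurable v) : MeasurableSet {x | u x = v x} := by
  have : {x | u x = v x} = (fun x => u x - v x) ⁻¹' {0} := by
    ext x; simp [sub_eq_zero]
  rw [this]
  exact (hu.sub hv) (measurableSet_singleton 0)

/-- integrability on a product from a uniform bound on fiberwise lintegrals -/
lemma helper_integrable_prod (μ : Measure α) (κ : Measure β) [IsProbabilityMeasure μ]
    [SigmaFinite κ] {u : α × β → ℝ} (hu : Measurable u)
    (h : ∀ x, ∫⁻ y, ‖u (x, y)‖₊ ∂κ ≤ 1) : Integrable u (μ.prod κ) := by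
  refine ⟨hu.aestronglyMeasurable, ?_⟩
  rw [HasFiniteIntegral]
  calc ∫⁻ p, ‖u p‖₊ ∂μ.prod κ = ∫⁻ x, ∫⁻ y, ‖u (x, y)‖₊ ∂κ ∂μ := by
        rw [lintegral_prod _ (hu.nnnorm.coe_nnreal_ennreal.aemeasurable)]
    _ ≤ ∫⁻ _, 1 ∂μ := lintegral_mono h
    _ = 1 := by simp
    _ < ⊤ := by norm_num

end helpers

section helper2

/-- An integrable function on `[0,1]` whose integral over every rational ray vanishes
is a.e. zero. -/
lemma helper_ae_zero {h : ℝ → ℝ}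
    (hint : Integrable h (volume.restrict (Set.Icc (0:ℝ) 1)))
    (h0 : ∀ q : ℚ, ∫ t in Set.Iio (q:ℝ), h t ∂(volume.restrict (Set.Icc (0:ℝ) 1)) = 0) :
    h =ᵐ[volume.restrict (Set.Icc (0:ℝ) 1)] 0 := by
  set ν := volume.restrict (Set.Icc (0:ℝ) 1) with hν
  have hb1 : ∀ t : ℝ, ENNReal.ofReal (h t) ≤ (‖h t‖₊ : ℝ≥0∞) := fun t => by
    rw [← enorm_eq_nnnorm, Real.enorm_eq_ofReal_abs]; exact ENNReal.ofReal_le_ofReal (le_abs_self _)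
  have hb2 : ∀ t : ℝ, ENNReal.ofReal (-h t) ≤ (‖h t‖₊ : ℝ≥0∞) := fun t => by
    rw [← enorm_eq_nnnorm, Real.enorm_eq_ofReal_abs]; exact ENNReal.ofReal_le_ofReal (neg_le_abs _)
  have hfin : ∫⁻ t, ‖h t‖₊ ∂ν < ⊤ := hint.2
  set μ₁ := ν.withDensity (fun t => ENNReal.ofReal (h t)) with hμ₁
  set μ₂ := ν.withDensity (fun t => ENNReal.ofReal (-h t)) with hμ₂
  haveI : IsFiniteMeasure μ₁ :=
    isFiniteMeasure_withDensity (((lintegral_mono hb1).trans_lt hfin).ne)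
  haveI : IsFiniteMeasure μ₂ :=
    isFiniteMeasure_withDensity (((lintegral_mono hb2).trans_lt hfin).ne)
  have hdiff : ∀ s : Set ℝ, MeasurableSet s →
      ∫ t in s, h t ∂ν = (μ₁ s).toReal - (μ₂ s).toReal := by
    intro s hs
    rw [hμ₁, hμ₂, withDensity_apply _ hs, withDensity_apply _ hs]
    exact integral_eq_lintegral_pos_part_sub_lintegral_neg_part hint.restrict
  have hIio : ∀ q : ℚ, μ₁ (Set.Iio (q:ℝ)) = μ₂ (Set.Iio (q:ℝ)) := by
    intro q
    have h1 := hdiff _ (measurableSet_Iio (a := (q:ℝ)))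
    rw [h0 q] at h1
    refine (ENNReal.toReal_eq_toReal_iff' (measure_ne_top _ _) (measure_ne_top _ _)).1 ?_
    linarith
  have hIci : ν (Set.Ici (2:ℝ)) = 0 := by
    rw [hν, Measure.restrict_apply measurableSet_Ici]
    convert measure_empty
    · apply Set.eq_empty_of_forall_notMem
      rintro x ⟨hx1, hx2, hx3⟩
      simp only [Set.mem_Ici] at hx1
      linarith
    · infer_instance
  have key : ∀ g : ℝ → ℝ≥0∞, ν.withDensity g Set.univ = ν.withDensity g (Set.Iio ((2:ℚ):ℝ)) := by
    intro g
    have h2 : ((2:ℚ):ℝ) = (2:ℝ) := by norm_num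
    rw [h2]
    have hz : ν.withDensity g (Set.Ici (2:ℝ)) = 0 := by
      rw [withDensity_apply _ measurableSet_Ici]
      exact setLIntegral_measure_zero _ _ hIci
    have : ν.withDensity g Set.univ
        = ν.withDensity g (Set.Iio (2:ℝ)) + ν.withDensity g (Set.Ici (2:ℝ)) := by
      rw [← measure_union (Set.Iio_disjoint_Ici le_rfl) measurableSet_Ici, Set.Iio_union_Ici]
    rw [this, hz, add_zero]
  have huniv : μ₁ Set.univ = μ₂ Set.univ := by
    rw [hμ₁, hμ₂, key, key, ← hμ₁, ← hμ₂]
    exact hIio 2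
  have hmeq : μ₁ = μ₂ := by
    refine ext_of_generate_finite _
      (BorelSpace.measurable_eq.trans Real.borel_eq_generateFrom_Iio_rat)
      Real.isPiSystem_Iio_rat ?_ huniv
    intro s hs
    simp only [Set.mem_iUnion, Set.mem_singleton_iff] at hs
    obtain ⟨q, rfl⟩ := hs
    exact hIio q
  refine hint.ae_eq_zero_of_forall_setIntegral_eq_zero fun s hs _ => ?_
  rw [hdiff s hs, hmeq]
  ring

end helper2

theorem nfl_normalized_process_is_constant
    {Ω : Type*} [MeasurableSpace Ω] (P : Measure Ω) [IsProbabilityMeasure P]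
    (f : ℝ → Ω → ℝ)
    (hmeas : Measurable fun p : Set.Icc (0 : ℝ) 1 × Ω => f p.1 p.2)
    (hmean : ∀ t ∈ Set.Icc (0 : ℝ) 1, ∫ ω, f t ω ∂P = 0)
    (hvar : ∀ t ∈ Set.Icc (0 : ℝ) 1, ∫ ω, (f t ω) ^ 2 ∂P = 1)
    (ρ : ℝ)
    (hcov : ∀ t ∈ Set.Icc (0 : ℝ) 1, ∀ s ∈ Set.Icc (0 : ℝ) 1, t ≠ s →
      ∫ ω, f t ω * f s ω ∂P = ρ) :
    (∀ t ∈ Set.Icc (0 : ℝ) 1, ∀ s ∈ Set.Icc (0 : ℝ) 1,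
        P {ω | f t ω = f s ω} = 1) ∧
    ∃ X : Ω → ℝ, ∀ t ∈ Set.Icc (0 : ℝ) 1, P {ω | f t ω = X ω} = 1 := by
  classical
  set I : Set ℝ := Set.Icc (0:ℝ) 1 with hI
  set ν : Measure ℝ := volume.restrict I with hνdef
  haveI hνprob : IsProbabilityMeasure ν :=
    ⟨by rw [hνdef, Measure.restrict_apply_univ, hI, Real.volume_Icc]; norm_num⟩
  -- the globally measurable version of the process
  set F : ℝ × Ω → ℝ := fun p => if p.1 ∈ I then f p.1 p.2 else 0 with hFdef
  have hFeq : ∀ t ∈ I, ∀ ω, F (t, ω) = f t ω := fun t ht ω => by simp [hFdef, ht]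
  have hFmeas : Measurable F := by
    have h1 : Measurable fun p : ℝ × Ω =>
        f ((Set.projIcc (0:ℝ) 1 zero_le_one p.1) : Set.Icc (0:ℝ) 1) p.2 := by
      have hc : Measurable fun p : ℝ × Ω =>
          ((Set.projIcc (0:ℝ) 1 zero_le_one p.1, p.2) : Set.Icc (0:ℝ) 1 × Ω) :=
        (continuous_projIcc.measurable.comp measurable_fst).prodMk measurable_snd
      exact hmeas.comp hc
    have heq : F = fun p : ℝ × Ω =>
        if p.1 ∈ I then f ((Set.projIcc (0:ℝ) 1 zero_le_one p.1) : Set.Icc (0:ℝ) 1) p.2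
        else 0 := by
      funext p
      by_cases hp : p.1 ∈ I
      · simp only [hFdef, hp, if_true]
        rw [Set.projIcc_of_mem zero_le_one hp]
      · simp [hFdef, hp]
    rw [heq]
    exact Measurable.ite (measurableSet_Icc.preimage measurable_fst) h1 measurable_const
  have hm : ∀ t : ℝ, Measurable (fun ω => F (t, ω)) :=
    fun t => hFmeas.comp measurable_prodMk_left
  have hmf : ∀ t ∈ I, Measurable (f t) := by
    intro t ht
    have h := hm t
    rwa [show (fun ω => F (t, ω)) = f t from funext (hFeq t ht)] at h
  -- basic integrability
  have hsq : ∀ t ∈ I, Integrable (fun ω => f t ω ^ 2) P := by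
    intro t ht
    by_contra hcon
    have h := hvar t ht
    rw [integral_undef hcon] at h
    exact one_ne_zero h.symm
  have hL2 : ∀ t ∈ I, MemLp (f t) 2 P := fun t ht =>
    (memLp_two_iff_integrable_sq (hmf t ht).aestronglyMeasurable).2 (hsq t ht)
  have hmul : ∀ t ∈ I, ∀ s ∈ I, Integrable (fun ω => f t ω * f s ω) P := fun t ht s hs =>
    helper_int_mul (hmf t ht).aestronglyMeasurable (hmf s hs).aestronglyMeasurable
      (hsq t ht) (hsq s hs)
  have habs : ∀ t ∈ I, ∀ s ∈ I, ∫ ω, |f t ω * f s ω| ∂P ≤ 1 := by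
    intro t ht s hs
    have hb : ∀ ω, |f t ω * f s ω| ≤ (f t ω ^ 2 + f s ω ^ 2) / 2 := fun ω => by
      rw [abs_mul]
      nlinarith [sq_nonneg (|f t ω| - |f s ω|), sq_abs (f t ω), sq_abs (f s ω),
        abs_nonneg (f t ω), abs_nonneg (f s ω)]
    calc ∫ ω, |f t ω * f s ω| ∂P ≤ ∫ ω, (f t ω ^ 2 + f s ω ^ 2) / 2 ∂P :=
          integral_mono (hmul t ht s hs).abs (((hsq t ht).add (hsq s hs)).div_const 2) hb
      _ = 1 := by
          rw [integral_div, integral_add (hsq t ht) (hsq s hs), hvar t ht, hvar s hs]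
          norm_num
  have hlintmul : ∀ t ∈ I, ∀ s ∈ I, ∫⁻ ω, ‖f t ω * f s ω‖₊ ∂P ≤ 1 := by
    intro t ht s hs
    change ∫⁻ ω, ‖f t ω * f s ω‖ₑ ∂P ≤ 1
    rw [← ofReal_integral_norm_eq_lintegral_enorm (hmul t ht s hs), ← ENNReal.ofReal_one]
    exact ENNReal.ofReal_le_ofReal (by simpa [Real.norm_eq_abs, abs_mul] using habs t ht s hs)
  have hlintF : ∀ t s : ℝ, ∫⁻ ω, ‖F (t, ω) * F (s, ω)‖₊ ∂P ≤ 1 := by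
    intro t s
    by_cases ht : t ∈ I
    · by_cases hs : s ∈ I
      · calc ∫⁻ ω, ‖F (t, ω) * F (s, ω)‖₊ ∂P = ∫⁻ ω, ‖f t ω * f s ω‖₊ ∂P := by
              apply lintegral_congr fun ω => by rw [hFeq t ht ω, hFeq s hs ω]
          _ ≤ 1 := hlintmul t ht s hs
      · have hz : ∀ ω, F (s, ω) = 0 := fun ω => by simp [hFdef, hs]
        simp [hz]
    · have hz : ∀ ω, F (t, ω) = 0 := fun ω => by simp [hFdef, ht]
      simp [hz]
  have hlintF1 : ∀ t : ℝ, ∫⁻ ω, ‖F (t, ω)‖₊ ∂P ≤ 1 := by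
    intro t
    by_cases ht : t ∈ I
    · have habs1 : ∫ ω, |f t ω| ∂P ≤ 1 := by
        have hb : ∀ ω, |f t ω| ≤ (1 + f t ω ^ 2) / 2 := fun ω => by
          nlinarith [sq_nonneg (|f t ω| - 1), sq_abs (f t ω)]
        calc ∫ ω, |f t ω| ∂P ≤ ∫ ω, (1 + f t ω ^ 2) / 2 ∂P :=
              integral_mono ((hL2 t ht).integrable one_le_two).abs
                (((integrable_const 1).add (hsq t ht)).div_const 2) hb
          _ = 1 := by
              rw [integral_div, integral_add (integrable_const 1) (hsq t ht), hvar t ht]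
              simp
      calc ∫⁻ ω, ‖F (t, ω)‖₊ ∂P = ∫⁻ ω, ‖f t ω‖₊ ∂P :=
            lintegral_congr fun ω => by rw [hFeq t ht ω]
        _ ≤ 1 := by
            change ∫⁻ ω, ‖f t ω‖ₑ ∂P ≤ 1
            rw [← ofReal_integral_norm_eq_lintegral_enorm ((hL2 t ht).integrable one_le_two),
              ← ENNReal.ofReal_one]
            exact ENNReal.ofReal_le_ofReal (by simpa [Real.norm_eq_abs] using habs1)
    · have hz : ∀ ω, F (t, ω) = 0 := fun ω => by simp [hFdef, ht]
      simp [hz]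
  -- integrability on product spaces
  have hintF : Integrable F (ν.prod P) := helper_integrable_prod ν P hFmeas hlintF1
  have hintFs : ∀ s ∈ I, Integrable (fun p : ℝ × Ω => F p * f s p.2) (ν.prod P) := by
    intro s hs
    refine helper_integrable_prod ν P (hFmeas.mul ((hmf s hs).comp measurable_snd)) fun t => ?_
    calc ∫⁻ ω, ‖F (t, ω) * f s ω‖₊ ∂P = ∫⁻ ω, ‖F (t, ω) * F (s, ω)‖₊ ∂P :=
          lintegral_congr fun ω => by rw [hFeq s hs ω]
      _ ≤ 1 := hlintF t s
  -- the master second-moment computation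
  have hsing : ∀ s : ℝ, ν {s} = 0 := by
    intro s
    rw [hνdef, Measure.restrict_apply (measurableSet_singleton s)]
    exact measure_mono_null Set.inter_subset_left Real.volume_singleton
  have haeI : ∀ᵐ t ∂ν, t ∈ I := by
    rw [hνdef]
    exact ae_restrict_mem measurableSet_Icc
  have haene : ∀ s : ℝ, ∀ᵐ t ∂ν, t ≠ s := by
    intro s
    have : ν {t : ℝ | ¬ t ≠ s} = 0 := by
      refine measure_mono_null ?_ (hsing s)
      intro t ht
      simp only [Set.mem_setOf_eq, not_not] at ht
      simp [ht]
    exact (ae_iff).2 this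
  have hdiag : (ν.prod ν) {p : ℝ × ℝ | p.1 = p.2} = 0 := by
    have hDm : MeasurableSet {p : ℝ × ℝ | p.1 = p.2} :=
      measurableSet_eq_fun measurable_fst measurable_snd
    rw [Measure.prod_apply hDm]
    have : ∀ t : ℝ, ν (Prod.mk t ⁻¹' {p : ℝ × ℝ | p.1 = p.2}) = 0 := by
      intro t
      have : Prod.mk t ⁻¹' {p : ℝ × ℝ | p.1 = p.2} = {t} := by
        ext x; simp [eq_comm]
      rw [this]
      exact hsing t
    simp [this]
  have haeprod : ∀ᵐ p ∂(ν.prod ν), (p.1 ∈ I ∧ p.2 ∈ I) ∧ p.1 ≠ p.2 := by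
    have h1 : ν Iᶜ = 0 := by
      rw [hνdef, Measure.restrict_apply measurableSet_Icc.compl]
      rw [Set.compl_inter_self, measure_empty]
    have h2 : (ν.prod ν) {p : ℝ × ℝ | ¬ ((p.1 ∈ I ∧ p.2 ∈ I) ∧ p.1 ≠ p.2)} = 0 := by
      refine measure_mono_null (fun p hp => ?_)
        (measure_union_null (measure_union_null
          (show (ν.prod ν) (Iᶜ ×ˢ Set.univ) = 0 by rw [Measure.prod_prod, h1, zero_mul])
          (show (ν.prod ν) (Set.univ ×ˢ Iᶜ) = 0 by rw [Measure.prod_prod, h1, mul_zero]))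
          hdiag)
      simp only [Set.mem_setOf_eq] at hp
      simp only [Set.mem_union, Set.mem_prod, Set.mem_compl_iff, Set.mem_univ, and_true,
        true_and, Set.mem_setOf_eq]
      by_cases hd : p.1 = p.2
      · exact Or.inr hd
      by_cases h1' : p.1 ∈ I
      · by_cases h2' : p.2 ∈ I
        · exact absurd ⟨⟨h1', h2'⟩, hd⟩ hp
        · exact Or.inl (Or.inr h2')
      · exact Or.inl (Or.inl h1')
    exact (ae_iff).2 h2
  have hmaster : ∀ A B : Set ℝ, MeasurableSet A → MeasurableSet B →
      ∫ ω, (∫ t in A, F (t, ω) ∂ν) * (∫ t in B, F (t, ω) ∂ν) ∂P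
        = ρ * (ν A).toReal * (ν B).toReal := by
    intro A B hA hB
    set iA : ℝ → ℝ := A.indicator (fun _ => (1:ℝ)) with hiA
    set iB : ℝ → ℝ := B.indicator (fun _ => (1:ℝ)) with hiB
    have hiAm : Measurable iA := measurable_const.indicator hA
    have hiBm : Measurable iB := measurable_const.indicator hB
    have hiabsA : ∀ x, iA x = 0 ∨ iA x = 1 := fun x => by
      by_cases hx : x ∈ A <;> simp [hiA, hx]
    have hiabsB : ∀ x, iB x = 0 ∨ iB x = 1 := fun x => by
      by_cases hx : x ∈ B <;> simp [hiB, hx]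
    -- pointwise rewriting of the product of set integrals
    have hpt : ∀ ω, (∫ t in A, F (t, ω) ∂ν) * (∫ t in B, F (t, ω) ∂ν)
        = ∫ p : ℝ × ℝ, (iA p.1 * F (p.1, ω)) * (iB p.2 * F (p.2, ω)) ∂(ν.prod ν) := by
      intro ω
      rw [integral_prod_mul (μ := ν) (ν := ν) (f := fun t => iA t * F (t, ω))
        (g := fun t => iB t * F (t, ω))]
      have eA : ∫ t, iA t * F (t, ω) ∂ν = ∫ t in A, F (t, ω) ∂ν := by
        rw [← integral_indicator hA]
        refine integral_congr_ae (Filter.Eventually.of_forall fun t => ?_)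
        by_cases ht : t ∈ A <;> simp [hiA, ht]
      have eB : ∫ t, iB t * F (t, ω) ∂ν = ∫ t in B, F (t, ω) ∂ν := by
        rw [← integral_indicator hB]
        refine integral_congr_ae (Filter.Eventually.of_forall fun t => ?_)
        by_cases ht : t ∈ B <;> simp [hiB, ht]
      rw [eA, eB]
    -- integrability of the big integrand
    have hbig : Integrable (fun q : (ℝ × ℝ) × Ω =>
        (iA q.1.1 * F (q.1.1, q.2)) * (iB q.1.2 * F (q.1.2, q.2))) ((ν.prod ν).prod P) := by
      refine helper_integrable_prod (ν.prod ν) P ?_ ?_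
      · exact ((hiAm.comp (measurable_fst.comp measurable_fst)).mul
          (hFmeas.comp ((measurable_fst.comp measurable_fst).prodMk measurable_snd))).mul
          ((hiBm.comp (measurable_snd.comp measurable_fst)).mul
          (hFmeas.comp ((measurable_snd.comp measurable_fst).prodMk measurable_snd)))
      · intro p
        have h1 : |iA p.1| ≤ 1 := by rcases hiabsA p.1 with h | h <;> simp [h]
        have h2 : |iB p.2| ≤ 1 := by rcases hiabsB p.2 with h | h <;> simp [h]
        refine le_trans (lintegral_mono fun y => ?_) (hlintF p.1 p.2)
        show (‖iA p.1 * F (p.1, y) * (iB p.2 * F (p.2, y))‖₊ : ENNReal)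
          ≤ (‖F (p.1, y) * F (p.2, y)‖₊ : ENNReal)
        refine ENNReal.coe_le_coe.2 ?_
        have habs' : |iA p.1 * F (p.1, y) * (iB p.2 * F (p.2, y))|
            ≤ |F (p.1, y) * F (p.2, y)| := by
          rw [abs_mul, abs_mul, abs_mul, abs_mul]
          have e1 : |iA p.1| * |F (p.1, y)| ≤ |F (p.1, y)| :=
            mul_le_of_le_one_left (abs_nonneg _) h1
          have e2 : |iB p.2| * |F (p.2, y)| ≤ |F (p.2, y)| :=
            mul_le_of_le_one_left (abs_nonneg _) h2
          exact mul_le_mul e1 e2 (mul_nonneg (abs_nonneg _) (abs_nonneg _)) (abs_nonneg _)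
        have hnorm : ‖iA p.1 * F (p.1, y) * (iB p.2 * F (p.2, y))‖
            ≤ ‖F (p.1, y) * F (p.2, y)‖ := by
          simpa [Real.norm_eq_abs, abs_mul] using habs'
        exact_mod_cast hnorm
    -- swap the order of integration
    have hswap := integral_integral_swap
      (f := fun (p : ℝ × ℝ) (ω : Ω) => (iA p.1 * F (p.1, ω)) * (iB p.2 * F (p.2, ω)))
      (μ := ν.prod ν) (ν := P) (by exact hbig)
    calc ∫ ω, (∫ t in A, F (t, ω) ∂ν) * (∫ t in B, F (t, ω) ∂ν) ∂P
        = ∫ ω, ∫ p : ℝ × ℝ, (iA p.1 * F (p.1, ω)) * (iB p.2 * F (p.2, ω)) ∂(ν.prod ν) ∂P := by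
          exact integral_congr_ae (Filter.Eventually.of_forall fun ω => hpt ω)
      _ = ∫ p : ℝ × ℝ, ∫ ω, (iA p.1 * F (p.1, ω)) * (iB p.2 * F (p.2, ω)) ∂P ∂(ν.prod ν) :=
          hswap.symm
      _ = ∫ p : ℝ × ℝ, iA p.1 * iB p.2 * ρ ∂(ν.prod ν) := by
          refine integral_congr_ae ?_
          filter_upwards [haeprod] with p hp
          obtain ⟨⟨hp1, hp2⟩, hpne⟩ := hp
          have : ∀ ω, (iA p.1 * F (p.1, ω)) * (iB p.2 * F (p.2, ω))
              = (iA p.1 * iB p.2) * (f p.1 ω * f p.2 ω) := fun ω => by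
            rw [hFeq p.1 hp1 ω, hFeq p.2 hp2 ω]; ring
          rw [show (fun ω => (iA p.1 * F (p.1, ω)) * (iB p.2 * F (p.2, ω)))
              = fun ω => (iA p.1 * iB p.2) * (f p.1 ω * f p.2 ω) from funext this]
          rw [integral_const_mul, hcov p.1 hp1 p.2 hp2 hpne]
      _ = ρ * (ν A).toReal * (ν B).toReal := by
          rw [show (fun p : ℝ × ℝ => iA p.1 * iB p.2 * ρ)
              = fun p : ℝ × ℝ => ρ * (iA p.1 * iB p.2) from funext fun p => by ring]
          rw [integral_const_mul, integral_prod_mul (f := iA) (g := iB)]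
          rw [hiA, hiB, integral_indicator_const (1:ℝ) hA, integral_indicator_const (1:ℝ) hB]
          simp only [smul_eq_mul, mul_one]
          rw [measureReal_def, measureReal_def]
          ring
  -- strong measurability of the averaged process
  have hmt : ∀ ω, Measurable fun t => F (t, ω) := fun ω =>
    hFmeas.comp (measurable_id.prodMk measurable_const)
  have hYsm : StronglyMeasurable fun ω => ∫ t, F (t, ω) ∂ν :=
    hFmeas.stronglyMeasurable.integral_prod_left'
  have hYm : Measurable fun ω => ∫ t, F (t, ω) ∂ν := hYsm.measurable
  -- an L² bound for all averaged quantities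
  have hlint2F : ∫⁻ ω, (∫⁻ t, ‖F (t, ω)‖₊ ∂ν) ^ 2 ∂P ≤ 1 := by
    have hsq_prod : ∀ ω, (∫⁻ t, ‖F (t, ω)‖₊ ∂ν) ^ 2
        = ∫⁻ p : ℝ × ℝ, ‖F (p.1, ω)‖₊ * ‖F (p.2, ω)‖₊ ∂(ν.prod ν) := by
      intro ω
      rw [lintegral_prod_mul ((hmt ω).nnnorm.coe_nnreal_ennreal.aemeasurable) ((hmt ω).nnnorm.coe_nnreal_ennreal.aemeasurable)]
      ring
    have hmeasbig : Measurable fun q : Ω × (ℝ × ℝ) =>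
        (‖F (q.2.1, q.1)‖₊ : ENNReal) * ‖F (q.2.2, q.1)‖₊ :=
      ((hFmeas.comp ((measurable_fst.comp measurable_snd).prodMk measurable_fst)).nnnorm.coe_nnreal_ennreal).mul
        ((hFmeas.comp ((measurable_snd.comp measurable_snd).prodMk measurable_fst)).nnnorm.coe_nnreal_ennreal)
    calc ∫⁻ ω, (∫⁻ t, ‖F (t, ω)‖₊ ∂ν) ^ 2 ∂P
        = ∫⁻ ω, ∫⁻ p : ℝ × ℝ, ‖F (p.1, ω)‖₊ * ‖F (p.2, ω)‖₊ ∂(ν.prod ν) ∂P :=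
          lintegral_congr hsq_prod
      _ = ∫⁻ p : ℝ × ℝ, ∫⁻ ω, ‖F (p.1, ω)‖₊ * ‖F (p.2, ω)‖₊ ∂P ∂(ν.prod ν) :=
          lintegral_lintegral_swap hmeasbig.aemeasurable
      _ ≤ ∫⁻ _ : ℝ × ℝ, 1 ∂(ν.prod ν) := by
          refine lintegral_mono fun p => ?_
          have he : ∀ ω, (‖F (p.1, ω)‖₊ : ENNReal) * ‖F (p.2, ω)‖₊
              = ‖F (p.1, ω) * F (p.2, ω)‖₊ := fun ω => by
            rw [nnnorm_mul, ENNReal.coe_mul]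
          rw [lintegral_congr he]
          exact hlintF p.1 p.2
      _ = 1 := by simp
  -- all averaged quantities are in L²
  have hMem2 : ∀ A : Set ℝ, MeasurableSet A →
      MemLp (fun ω => ∫ t in A, F (t, ω) ∂ν) 2 P := by
    intro A hA
    have hsm : StronglyMeasurable fun ω => ∫ t in A, F (t, ω) ∂ν :=
      hFmeas.stronglyMeasurable.integral_prod_left'
    refine (memLp_two_iff_integrable_sq hsm.aestronglyMeasurable).2 ?_
    have hexp : (fun ω => (∫ t in A, F (t, ω) ∂ν) ^ 2)
        = fun ω => (∫ t in A, F (t, ω) ∂ν) * (∫ t in A, F (t, ω) ∂ν) :=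
      funext fun ω => by ring
    rw [hexp]
    refine ⟨(hsm.mul hsm).aestronglyMeasurable, ?_⟩
    rw [HasFiniteIntegral]
    have hbd : ∀ ω, (‖(∫ t in A, F (t, ω) ∂ν) * (∫ t in A, F (t, ω) ∂ν)‖₊ : ENNReal)
        ≤ (∫⁻ t, ‖F (t, ω)‖₊ ∂ν) ^ 2 := by
      intro ω
      rw [nnnorm_mul, ENNReal.coe_mul]
      have h1 : (‖∫ t in A, F (t, ω) ∂ν‖₊ : ENNReal) ≤ ∫⁻ t, ‖F (t, ω)‖₊ ∂ν :=
        le_trans (enorm_integral_le_lintegral_enorm _) (setLIntegral_le_lintegral _ _)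
      calc (‖∫ t in A, F (t, ω) ∂ν‖₊ : ENNReal) * ‖∫ t in A, F (t, ω) ∂ν‖₊
          ≤ (∫⁻ t, ‖F (t, ω)‖₊ ∂ν) * (∫⁻ t, ‖F (t, ω)‖₊ ∂ν) := mul_le_mul' h1 h1
        _ = (∫⁻ t, ‖F (t, ω)‖₊ ∂ν) ^ 2 := by ring
    calc ∫⁻ ω, ‖(∫ t in A, F (t, ω) ∂ν) * (∫ t in A, F (t, ω) ∂ν)‖₊ ∂P
        ≤ ∫⁻ ω, (∫⁻ t, ‖F (t, ω)‖₊ ∂ν) ^ 2 ∂P := lintegral_mono hbd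
      _ ≤ 1 := hlint2F
      _ < ⊤ := by norm_num
  have hYL2 : MemLp (fun ω => ∫ t, F (t, ω) ∂ν) 2 P := by
    have h := hMem2 Set.univ MeasurableSet.univ
    simpa [Measure.restrict_univ] using h
  -- mixed moment of the process with its average
  have hfY : ∀ s ∈ I, ∫ ω, (∫ t, F (t, ω) ∂ν) * f s ω ∂P = ρ := by
    intro s hs
    have h1 : ∀ ω, (∫ t, F (t, ω) ∂ν) * f s ω = ∫ t, F (t, ω) * f s ω ∂ν := fun ω =>
      (integral_mul_const _ _).symm
    calc ∫ ω, (∫ t, F (t, ω) ∂ν) * f s ω ∂P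
        = ∫ ω, ∫ t, F (t, ω) * f s ω ∂ν ∂P :=
          integral_congr_ae (Filter.Eventually.of_forall h1)
      _ = ∫ t, ∫ ω, F (t, ω) * f s ω ∂P ∂ν := by
          refine (integral_integral_swap (f := fun t ω => F (t, ω) * f s ω) ?_).symm
          have := hintFs s hs
          exact this
      _ = ρ := by
          have hae : (fun t => ∫ ω, F (t, ω) * f s ω ∂P) =ᵐ[ν] fun _ => ρ := by
            filter_upwards [haeI, haene s] with t htI htne
            have he : ∀ ω, F (t, ω) * f s ω = f t ω * f s ω := fun ω => by
              rw [hFeq t htI ω]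
            rw [show (fun ω => F (t, ω) * f s ω) = fun ω => f t ω * f s ω from funext he]
            exact hcov t htI s hs htne
          rw [integral_congr_ae hae]
          simp
  -- second moment of the average
  have hYY2 : ∫ ω, (∫ t, F (t, ω) ∂ν) * (∫ t, F (t, ω) ∂ν) ∂P = ρ := by
    have h := hmaster Set.univ Set.univ MeasurableSet.univ MeasurableSet.univ
    simpa [Measure.restrict_univ, measure_univ] using h
  -- the partial averages agree a.s. with the scaled full average
  have hW : ∀ q : ℚ, ∀ᵐ ω ∂P,
      (∫ t in Set.Iio (q:ℝ), F (t, ω) ∂ν)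
        = (ν (Set.Iio (q:ℝ))).toReal * ∫ t, F (t, ω) ∂ν := by
    intro q
    set A := Set.Iio ((q:ℚ):ℝ) with hAdef
    have hAm : MeasurableSet A := measurableSet_Iio
    set a := (ν A).toReal with hadef
    have hZZ := hmaster A A hAm hAm
    have hZY := hmaster A Set.univ hAm MeasurableSet.univ
    simp only [Measure.restrict_univ, measure_univ, ENNReal.toReal_one, mul_one] at hZY
    have hZL2 := hMem2 A hAm
    have iZZ : Integrable (fun ω => (∫ t in A, F (t, ω) ∂ν) * (∫ t in A, F (t, ω) ∂ν)) P :=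
      helper_int_mul hZL2.aestronglyMeasurable hZL2.aestronglyMeasurable
        hZL2.integrable_sq hZL2.integrable_sq
    have iZY : Integrable (fun ω => (∫ t in A, F (t, ω) ∂ν) * (∫ t, F (t, ω) ∂ν)) P :=
      helper_int_mul hZL2.aestronglyMeasurable hYL2.aestronglyMeasurable
        hZL2.integrable_sq hYL2.integrable_sq
    have iYY : Integrable (fun ω => (∫ t, F (t, ω) ∂ν) * (∫ t, F (t, ω) ∂ν)) P :=
      helper_int_mul hYL2.aestronglyMeasurable hYL2.aestronglyMeasurable
        hYL2.integrable_sq hYL2.integrable_sq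
    have hWsqint : ∫ ω, ((∫ t in A, F (t, ω) ∂ν) - a * (∫ t, F (t, ω) ∂ν)) ^ 2 ∂P = 0 := by
      have hexp : (fun ω => ((∫ t in A, F (t, ω) ∂ν) - a * (∫ t, F (t, ω) ∂ν)) ^ 2)
          = fun ω => ((∫ t in A, F (t, ω) ∂ν) * (∫ t in A, F (t, ω) ∂ν)
              - (2 * a) * ((∫ t in A, F (t, ω) ∂ν) * (∫ t, F (t, ω) ∂ν)))
              + (a * a) * ((∫ t, F (t, ω) ∂ν) * (∫ t, F (t, ω) ∂ν)) :=
        funext fun ω => by ring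
      have iSub : Integrable (fun ω => (∫ t in A, F (t, ω) ∂ν) * (∫ t in A, F (t, ω) ∂ν)
          - (2 * a) * ((∫ t in A, F (t, ω) ∂ν) * (∫ t, F (t, ω) ∂ν))) P :=
        iZZ.sub (iZY.const_mul (2 * a))
      have iC : Integrable (fun ω =>
          (a * a) * ((∫ t, F (t, ω) ∂ν) * (∫ t, F (t, ω) ∂ν))) P := iYY.const_mul (a * a)
      rw [hexp, integral_add iSub iC,
        integral_sub iZZ (iZY.const_mul (2 * a)), integral_const_mul, integral_const_mul,
        hZZ, hZY, hYY2]
      ring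
    have hWL2 : MemLp (fun ω => (∫ t in A, F (t, ω) ∂ν) - a * (∫ t, F (t, ω) ∂ν)) 2 P :=
      hZL2.sub (hYL2.const_mul a)
    have hae0 := (integral_eq_zero_iff_of_nonneg
      (f := fun ω => ((∫ t in A, F (t, ω) ∂ν) - a * (∫ t, F (t, ω) ∂ν)) ^ 2)
      (fun ω => sq_nonneg _) hWL2.integrable_sq).1 hWsqint
    filter_upwards [hae0] with ω hω
    have h' : ((∫ t in A, F (t, ω) ∂ν) - a * (∫ t, F (t, ω) ∂ν)) ^ 2 = 0 := by simpa using hω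
    have h'' := (pow_eq_zero_iff (two_ne_zero)).1 h'
    linarith [h'']
  -- a.e. constancy in t, for a.e. ω
  have hsecint : ∀ᵐ ω ∂P, Integrable (fun t => F (t, ω)) ν := hintF.prod_left_ae
  have hWall : ∀ᵐ ω ∂P, ∀ q : ℚ,
      (∫ t in Set.Iio (q:ℝ), F (t, ω) ∂ν)
        = (ν (Set.Iio (q:ℝ))).toReal * ∫ t, F (t, ω) ∂ν := ae_all_iff.2 hW
  have hconst : ∀ᵐ ω ∂P, ∀ᵐ t ∂ν, F (t, ω) = ∫ s, F (s, ω) ∂ν := by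
    filter_upwards [hsecint, hWall] with ω hω1 hω2
    have h0 : ∀ q : ℚ, ∫ t in Set.Iio (q:ℝ), (F (t, ω) - ∫ s, F (s, ω) ∂ν) ∂ν = 0 := by
      intro q
      rw [integral_sub hω1.integrableOn (integrableOn_const (measure_lt_top _ _).ne),
        setIntegral_const, smul_eq_mul, hω2 q, measureReal_def, sub_self]
    have hae := helper_ae_zero (h := fun t => F (t, ω) - ∫ s, F (s, ω) ∂ν)
      (hω1.sub (integrable_const _)) h0
    filter_upwards [hae] with t ht
    have h' : F (t, ω) - ∫ s, F (s, ω) ∂ν = 0 := by simpa using ht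
    linarith
  -- measurability of the agreement set, and swapping the order of a.e. quantifiers
  have hNmeas : MeasurableSet {x : Ω × ℝ | F (x.2, x.1) = ∫ s, F (s, x.1) ∂ν} :=
    helper_measurableSet_eq (fun x : Ω × ℝ => F (x.2, x.1)) (fun x : Ω × ℝ => ∫ s, F (s, x.1) ∂ν)
      (hFmeas.comp (measurable_snd.prodMk measurable_fst)) (hYm.comp measurable_fst)
  have hswap2 : ∀ᵐ t ∂ν, ∀ᵐ ω ∂P, F (t, ω) = ∫ s, F (s, ω) ∂ν :=
    (Measure.ae_ae_comm (μ := P) (ν := ν)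
      (p := fun ω t => F (t, ω) = ∫ s, F (s, ω) ∂ν) hNmeas).1 hconst
  -- pick a good time t₀ in [0,1]
  haveI : (MeasureTheory.ae ν).NeBot := ae_neBot.2 (IsProbabilityMeasure.ne_zero ν)
  obtain ⟨t₀, ht₀, ht₀I⟩ := (hswap2.and haeI).exists
  -- uniform second moment of the deviation from the average
  have hvarY : ∀ t ∈ I, ∫ ω, (f t ω - ∫ s, F (s, ω) ∂ν) ^ 2 ∂P = 1 - 2 * ρ + ρ := by
    intro t ht
    have iYf : Integrable (fun ω => (∫ s, F (s, ω) ∂ν) * f t ω) P :=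
      helper_int_mul hYL2.aestronglyMeasurable (hmf t ht).aestronglyMeasurable
        hYL2.integrable_sq (hsq t ht)
    have iYY : Integrable (fun ω => (∫ s, F (s, ω) ∂ν) * (∫ s, F (s, ω) ∂ν)) P :=
      helper_int_mul hYL2.aestronglyMeasurable hYL2.aestronglyMeasurable
        hYL2.integrable_sq hYL2.integrable_sq
    have hexp : (fun ω => (f t ω - ∫ s, F (s, ω) ∂ν) ^ 2)
        = fun ω => (f t ω ^ 2 - 2 * ((∫ s, F (s, ω) ∂ν) * f t ω))
            + (∫ s, F (s, ω) ∂ν) * (∫ s, F (s, ω) ∂ν) :=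
      funext fun ω => by ring
    have iSub2 : Integrable (fun ω =>
        f t ω ^ 2 - 2 * ((∫ s, F (s, ω) ∂ν) * f t ω)) P := (hsq t ht).sub (iYf.const_mul 2)
    rw [hexp, integral_add iSub2 iYY,
      integral_sub (hsq t ht) (iYf.const_mul 2), integral_const_mul,
      hvar t ht, hfY t ht, hYY2]
  -- ρ must be 1
  have hρ : ρ = 1 := by
    have h1 := hvarY t₀ ht₀I
    have h2 : ∫ ω, (f t₀ ω - ∫ s, F (s, ω) ∂ν) ^ 2 ∂P = 0 := by
      refine integral_eq_zero_of_ae ?_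
      filter_upwards [ht₀] with ω hω
      have h3 : f t₀ ω = ∫ s, F (s, ω) ∂ν := by rw [← hFeq t₀ ht₀I ω]; exact hω
      simp [h3]
    rw [h2] at h1
    linarith
  -- every f t agrees a.s. with the average
  have hfinal : ∀ t ∈ I, P {ω | f t ω = ∫ s, F (s, ω) ∂ν} = 1 := by
    intro t ht
    have h0 : ∫ ω, (f t ω - ∫ s, F (s, ω) ∂ν) ^ 2 ∂P = 0 := by
      rw [hvarY t ht, hρ]; ring
    have hi : Integrable (fun ω => (f t ω - ∫ s, F (s, ω) ∂ν) ^ 2) P :=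
      ((hL2 t ht).sub hYL2).integrable_sq
    have hae := (integral_eq_zero_iff_of_nonneg (fun ω => sq_nonneg _) hi).1 h0
    have hae' : ∀ᵐ ω ∂P, f t ω = ∫ s, F (s, ω) ∂ν := by
      filter_upwards [hae] with ω hω
      have h' : (f t ω - ∫ s, F (s, ω) ∂ν) ^ 2 = 0 := by simpa using hω
      have h'' := (pow_eq_zero_iff (two_ne_zero)).1 h'
      linarith
    have hms : MeasurableSet {ω | f t ω = ∫ s, F (s, ω) ∂ν} :=
      helper_measurableSet_eq _ _ (hmf t ht) hYm
    rw [← prob_compl_eq_zero_iff hms]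
    have : {ω | f t ω = ∫ s, F (s, ω) ∂ν}ᶜ = {ω | ¬ f t ω = ∫ s, F (s, ω) ∂ν} := rfl
    rw [this]
    exact ae_iff.1 hae'
  constructor
  · intro t ht s hs
    have h1 := hfinal t ht
    have h2 := hfinal s hs
    have hm1 : MeasurableSet {ω | f t ω = ∫ u, F (u, ω) ∂ν} := helper_measurableSet_eq _ _ (hmf t ht) hYm
    have hm2 : MeasurableSet {ω | f s ω = ∫ u, F (u, ω) ∂ν} := helper_measurableSet_eq _ _ (hmf s hs) hYm
    have hc1 : P {ω | f t ω = ∫ u, F (u, ω) ∂ν}ᶜ = 0 := (prob_compl_eq_zero_iff hm1).2 h1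
    have hc2 : P {ω | f s ω = ∫ u, F (u, ω) ∂ν}ᶜ = 0 := (prob_compl_eq_zero_iff hm2).2 h2
    have hinter : P ({ω | f t ω = ∫ u, F (u, ω) ∂ν} ∩ {ω | f s ω = ∫ u, F (u, ω) ∂ν}) = 1 := by
      rw [← prob_compl_eq_zero_iff (hm1.inter hm2), Set.compl_inter]
      exact measure_union_null hc1 hc2
    refine le_antisymm prob_le_one ?_
    calc (1 : ENNReal)
        = P ({ω | f t ω = ∫ u, F (u, ω) ∂ν} ∩ {ω | f s ω = ∫ u, F (u, ω) ∂ν}) := hinter.symm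
      _ ≤ P {ω | f t ω = f s ω} := by
          refine measure_mono ?_
          rintro ω ⟨ha, hb⟩
          exact ha.trans hb.symm
  · exact ⟨fun ω => ∫ s, F (s, ω) ∂ν, hfinal⟩
end

section
/- Let f be a measurable stochastic process on [0,1] such that E[f(t)] = 0 and E[f(t)²] = 1 for all t ∈ [0,1], and suppose there exists ρ ∈ ℝ such that E[f(t)f(s)] = ρ for all t, s ∈ [0,1] with t ≠ s. Then ρ = 1. -/
open MeasureTheory ProbabilityTheory

private lemma nfl_sq_integral_le {α : Type*} [MeasurableSpace α] {μ : Measure α}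
    [IsProbabilityMeasure μ] {u : α → ℝ} (hu : MemLp u 2 μ) :
    (∫ x, u x ∂μ) ^ 2 ≤ ∫ x, u x ^ 2 ∂μ := by
  have h := variance_nonneg u μ
  rw [variance_eq_sub hu] at h
  simp only [Pi.pow_apply] at h
  linarith

private lemma nfl_int_mul {α : Type*} [MeasurableSpace α] {μ : Measure α} {u v : α → ℝ}
    (hum : AEStronglyMeasurable u μ) (hvm : AEStronglyMeasurable v μ)
    (hu : Integrable (fun x => u x ^ 2) μ) (hv : Integrable (fun x => v x ^ 2) μ) :
    Integrable (fun x => u x * v x) μ := by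
  refine Integrable.mono' ((hu.add hv).div_const 2) (hum.mul hvm)
    (Filter.Eventually.of_forall fun x => ?_)
  have h1 : |u x * v x| ≤ (u x ^ 2 + v x ^ 2) / 2 := by
    nlinarith [sq_nonneg (|u x| - |v x|), abs_mul (u x) (v x), sq_abs (u x), sq_abs (v x),
      abs_nonneg (u x), abs_nonneg (v x)]
  simpa [Real.norm_eq_abs, abs_mul] using h1

private lemma nfl_int_norm_mul_le {α : Type*} [MeasurableSpace α] {μ : Measure α} {u v : α → ℝ}
    (hum : AEStronglyMeasurable u μ) (hvm : AEStronglyMeasurable v μ)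
    (hu : Integrable (fun x => u x ^ 2) μ) (hv : Integrable (fun x => v x ^ 2) μ)
    (h1 : ∫ x, u x ^ 2 ∂μ ≤ 1) (h2 : ∫ x, v x ^ 2 ∂μ ≤ 1) :
    ∫ x, ‖u x * v x‖ ∂μ ≤ 1 := by
  have hint := nfl_int_mul hum hvm hu hv
  have hb : ∫ x, ‖u x * v x‖ ∂μ ≤ ∫ x, (u x ^ 2 + v x ^ 2) / 2 ∂μ := by
    refine integral_mono hint.norm ((hu.add hv).div_const 2) fun x => ?_
    have : |u x * v x| ≤ (u x ^ 2 + v x ^ 2) / 2 := by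
      nlinarith [sq_nonneg (|u x| - |v x|), abs_mul (u x) (v x), sq_abs (u x), sq_abs (v x),
        abs_nonneg (u x), abs_nonneg (v x)]
    simpa [Real.norm_eq_abs, abs_mul] using this
  have hc : ∫ x, (u x ^ 2 + v x ^ 2) / 2 ∂μ = ((∫ x, u x ^ 2 ∂μ) + ∫ x, v x ^ 2 ∂μ) / 2 := by
    rw [integral_div, integral_add hu hv]
  linarith

theorem nfl_normalized_process_correlation_one
    {Ω : Type*} [MeasurableSpace Ω] (P : Measure Ω) [IsProbabilityMeasure P]
    (f : ℝ → Ω → ℝ)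
    (hmeas : Measurable fun p : Set.Icc (0 : ℝ) 1 × Ω => f p.1 p.2)
    (hmean : ∀ t ∈ Set.Icc (0 : ℝ) 1, ∫ ω, f t ω ∂P = 0)
    (hvar : ∀ t ∈ Set.Icc (0 : ℝ) 1, ∫ ω, (f t ω) ^ 2 ∂P = 1)
    (ρ : ℝ)
    (hcov : ∀ t ∈ Set.Icc (0 : ℝ) 1, ∀ s ∈ Set.Icc (0 : ℝ) 1, t ≠ s →
      ∫ ω, f t ω * f s ω ∂P = ρ) :
    ρ = 1 := by
  set I : Set ℝ := Set.Icc 0 1 with hI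
  have hIm : MeasurableSet I := measurableSet_Icc
  set μ : Measure ℝ := volume.restrict I with hμdef
  haveI hμP : IsProbabilityMeasure μ := by
    constructor
    rw [hμdef, Measure.restrict_apply_univ, hI, Real.volume_Icc]
    norm_num
  -- the measurable extension F of f to ℝ × Ω
  set e : I × Ω → ℝ × Ω := fun q => ((q.1 : ℝ), q.2) with he_def
  have he : MeasurableEmbedding e :=
    (MeasurableEmbedding.subtype_coe hIm).prodMap MeasurableEmbedding.id
  set F : ℝ × Ω → ℝ := Function.extend e (fun q => f q.1 q.2) (fun _ => 0) with hFdef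
  have hFmeas : Measurable F := he.measurable_extend hmeas measurable_const
  have hFeq : ∀ t, t ∈ I → ∀ ω, F (t, ω) = f t ω := by
    intro t ht ω
    have h : (t, ω) = e (⟨t, ht⟩, ω) := rfl
    rw [hFdef, h, he.injective.extend_apply]
  -- basic per-t facts
  have hfm : ∀ t, t ∈ I → Measurable (f t) := by
    intro t ht
    exact hmeas.comp (measurable_const.prodMk measurable_id :
      Measurable fun ω : Ω => ((⟨t, ht⟩ : I), ω))
  have hint2 : ∀ t, t ∈ I → Integrable (fun ω => f t ω ^ 2) P := by
    intro t ht
    by_contra h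
    have := hvar t ht
    rw [integral_undef h] at this
    exact zero_ne_one this
  have hfsint : ∀ t, t ∈ I → ∀ s, s ∈ I → Integrable (fun ω => f t ω * f s ω) P :=
    fun t ht s hs => nfl_int_mul (hfm t ht).aestronglyMeasurable
      (hfm s hs).aestronglyMeasurable (hint2 t ht) (hint2 s hs)
  have hfsnorm : ∀ t, t ∈ I → ∀ s, s ∈ I → ∫ ω, ‖f t ω * f s ω‖ ∂P ≤ 1 :=
    fun t ht s hs => nfl_int_norm_mul_le (hfm t ht).aestronglyMeasurable
      (hfm s hs).aestronglyMeasurable (hint2 t ht) (hint2 s hs)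
      (le_of_eq (hvar t ht)) (le_of_eq (hvar s hs))
  -- the product measures
  set μ2 : Measure (ℝ × ℝ) := μ.prod μ with hμ2
  set ν : Measure (ℝ × Ω) := μ.prod P with hνdef
  have hae2 : ∀ᵐ p ∂μ2, p.1 ∈ I ∧ p.2 ∈ I := by
    rw [hμ2, hμdef, Measure.prod_restrict]
    filter_upwards [ae_restrict_mem (hIm.prod hIm)] with p hp
    exact ⟨hp.1, hp.2⟩
  have hdiag : ∀ᵐ p ∂μ2, p.1 ≠ p.2 := by
    have hDm : MeasurableSet {p : ℝ × ℝ | p.1 = p.2} :=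
      measurable_fst.stronglyMeasurable.measurableSet_eq_fun measurable_snd.stronglyMeasurable
    have hD0 : μ2 {p : ℝ × ℝ | p.1 = p.2} = 0 := by
      rw [hμ2, Measure.prod_apply hDm]
      have h : ∀ t : ℝ, μ (Prod.mk t ⁻¹' {p : ℝ × ℝ | p.1 = p.2}) = 0 := by
        intro t
        have hsub : (Prod.mk t ⁻¹' {p : ℝ × ℝ | p.1 = p.2}) = {t} := by
          ext s; simp [eq_comm]
        rw [hsub, hμdef, Measure.restrict_apply (measurableSet_singleton t)]
        exact measure_mono_null Set.inter_subset_left Real.volume_singleton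
      simp [h]
    rw [ae_iff]
    simpa only [not_not] using hD0
  -- the master kernel Φ and its integrability
  set Φ : (ℝ × ℝ) × Ω → ℝ := fun q => F (q.1.1, q.2) * F (q.1.2, q.2) with hΦdef
  have hΦmeas : Measurable Φ :=
    (hFmeas.comp (measurable_fst.fst.prodMk measurable_snd)).mul
      (hFmeas.comp (measurable_fst.snd.prodMk measurable_snd))
  have hΦslice : ∀ p : ℝ × ℝ, p.1 ∈ I → p.2 ∈ I →
      (fun ω => Φ (p, ω)) = fun ω => f p.1 ω * f p.2 ω := by
    intro p h1 h2
    funext ω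
    simp only [hΦdef]
    rw [hFeq _ h1, hFeq _ h2]
  have hΦint : Integrable Φ (μ2.prod P) := by
    rw [integrable_prod_iff hΦmeas.aestronglyMeasurable]
    constructor
    · filter_upwards [hae2] with p hp
      rw [hΦslice p hp.1 hp.2]
      exact hfsint _ hp.1 _ hp.2
    · refine Integrable.mono' (integrable_const 1)
        (hΦmeas.norm.aestronglyMeasurable.integral_prod_right') ?_
      filter_upwards [hae2] with p hp
      rw [Real.norm_eq_abs, abs_of_nonneg (integral_nonneg fun ω => norm_nonneg _)]
      have hc : ∫ ω, ‖Φ (p, ω)‖ ∂P = ∫ ω, ‖f p.1 ω * f p.2 ω‖ ∂P := by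
        refine integral_congr_ae (Filter.Eventually.of_forall fun ω => ?_)
        show ‖Φ (p, ω)‖ = ‖f p.1 ω * f p.2 ω‖
        rw [congrFun (hΦslice p hp.1 hp.2) ω]
      rw [hc]
      exact hfsnorm _ hp.1 _ hp.2
  -- F² is integrable on ν
  have hF2 : Integrable (fun p : ℝ × Ω => F p ^ 2) ν := by
    rw [hνdef, integrable_prod_iff ((hFmeas.pow_const 2).aestronglyMeasurable)]
    constructor
    · filter_upwards [ae_restrict_mem hIm] with t ht
      have h : (fun ω => F (t, ω) ^ 2) = fun ω => f t ω ^ 2 := by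
        funext ω; rw [hFeq t ht]
      exact h ▸ hint2 t ht
    · refine Integrable.mono' (integrable_const 1)
        (((hFmeas.pow_const 2).norm.aestronglyMeasurable).integral_prod_right') ?_
      filter_upwards [ae_restrict_mem hIm] with t ht
      rw [Real.norm_eq_abs, abs_of_nonneg (integral_nonneg fun ω => norm_nonneg _)]
      have h : (fun ω => ‖F (t, ω) ^ 2‖) = fun ω => f t ω ^ 2 := by
        funext ω; rw [hFeq t ht, Real.norm_eq_abs, abs_of_nonneg (sq_nonneg _)]
      rw [h, hvar t ht]
  have hF1 : Integrable F ν :=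
    ((memLp_two_iff_integrable_sq hFmeas.aestronglyMeasurable).2 hF2).integrable one_le_two
  -- the dominating function w
  set w : Ω → ℝ := fun ω => ∫ t, F (t, ω) ^ 2 ∂μ with hwdef
  have hwint : Integrable w P := by
    have := hF2.integral_prod_right
    simpa [hwdef] using this
  have haew2 : ∀ᵐ ω ∂P, Integrable (fun t => F (t, ω) ^ 2) μ := hF2.prod_left_ae
  -- the partial integrals Y
  set Y : Set ℝ → Ω → ℝ := fun A ω => ∫ t in A, F (t, ω) ∂μ with hYdef
  have hYmeas : ∀ A : Set ℝ, MeasurableSet A → Measurable (Y A) := by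
    intro A hA
    have hGm : StronglyMeasurable fun p : ℝ × Ω => Set.indicator (A ×ˢ Set.univ) F p :=
      (hFmeas.indicator (hA.prod MeasurableSet.univ)).stronglyMeasurable
    have heq : Y A = fun ω => ∫ t, Set.indicator (A ×ˢ Set.univ) F (t, ω) ∂μ := by
      funext ω
      simp only [hYdef]
      rw [← integral_indicator hA]
      congr 1
      funext t
      by_cases ht : t ∈ A
      · simp [Set.indicator_of_mem, ht, Set.mem_prod]
      · simp [Set.indicator_of_notMem, ht, Set.mem_prod]
    rw [heq]
    exact hGm.integral_prod_left'.measurable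
  have hYsq : ∀ A : Set ℝ, MeasurableSet A → ∀ᵐ ω ∂P, Y A ω ^ 2 ≤ w ω := by
    intro A hA
    filter_upwards [haew2] with ω hω
    set u : ℝ → ℝ := fun t => Set.indicator A (fun t => F (t, ω)) t with hudef
    have hum : Measurable u :=
      ((hFmeas.comp (measurable_id.prodMk measurable_const))).indicator hA
    have hule : ∀ t, u t ^ 2 ≤ F (t, ω) ^ 2 := by
      intro t
      by_cases ht : t ∈ A
      · simp [hudef, Set.indicator_of_mem, ht]
      · simp [hudef, Set.indicator_of_notMem, ht, sq_nonneg]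
    have hu2 : Integrable (fun t => u t ^ 2) μ := by
      refine hω.mono' ((hum.pow_const 2).aestronglyMeasurable)
        (Filter.Eventually.of_forall fun t => ?_)
      rw [Real.norm_eq_abs, abs_of_nonneg (sq_nonneg _)]
      exact hule t
    have hmem : MemLp u 2 μ := (memLp_two_iff_integrable_sq hum.aestronglyMeasurable).2 hu2
    have h1 : (∫ t, u t ∂μ) ^ 2 ≤ ∫ t, u t ^ 2 ∂μ := nfl_sq_integral_le hmem
    have h2 : ∫ t, u t ∂μ = Y A ω := by
      simp only [hudef, hYdef]
      rw [integral_indicator hA]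
    have h3 : ∫ t, u t ^ 2 ∂μ ≤ w ω := integral_mono hu2 hω hule
    rw [h2] at h1
    exact h1.trans h3
  have hYY_int : ∀ A B : Set ℝ, MeasurableSet A → MeasurableSet B →
      Integrable (fun ω => Y A ω * Y B ω) P := by
    intro A B hA hB
    refine Integrable.mono' hwint ((hYmeas A hA).mul (hYmeas B hB)).aestronglyMeasurable ?_
    filter_upwards [hYsq A hA, hYsq B hB] with ω h1 h2
    rw [Real.norm_eq_abs, abs_mul]
    nlinarith [sq_nonneg (|Y A ω| - |Y B ω|), sq_abs (Y A ω), sq_abs (Y B ω),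
      abs_nonneg (Y A ω), abs_nonneg (Y B ω)]
  -- the master identity
  have hYY : ∀ A B : Set ℝ, MeasurableSet A → MeasurableSet B →
      ∫ ω, Y A ω * Y B ω ∂P = ρ * (μ A).toReal * (μ B).toReal := by
    intro A B hA hB
    have hRm : MeasurableSet (A ×ˢ B) := hA.prod hB
    have hres : (μ2.restrict (A ×ˢ B)).prod P = (μ2.prod P).restrict ((A ×ˢ B) ×ˢ Set.univ) := by
      conv_rhs => rw [← Measure.prod_restrict]
      rw [Measure.restrict_univ]
    have hΦR : Integrable Φ ((μ2.restrict (A ×ˢ B)).prod P) := by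
      rw [hres]; exact hΦint.integrableOn
    have h1 : ∫ q, Φ q ∂((μ2.restrict (A ×ˢ B)).prod P)
        = ∫ p in A ×ˢ B, ∫ ω, Φ (p, ω) ∂P ∂μ2 := integral_prod Φ hΦR
    have h2 : ∫ q, Φ q ∂((μ2.restrict (A ×ˢ B)).prod P)
        = ∫ ω, ∫ p in A ×ˢ B, Φ (p, ω) ∂μ2 ∂P := integral_prod_symm Φ hΦR
    have h3 : ∫ p in A ×ˢ B, ∫ ω, Φ (p, ω) ∂P ∂μ2 = ρ * (μ A).toReal * (μ B).toReal := by
      have hcongr : ∀ᵐ p ∂(μ2.restrict (A ×ˢ B)), (∫ ω, Φ (p, ω) ∂P) = ρ := by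
        filter_upwards [ae_restrict_of_ae hae2, ae_restrict_of_ae hdiag] with p hp hne
        rw [hΦslice p hp.1 hp.2]
        exact hcov _ hp.1 _ hp.2 hne
      rw [integral_congr_ae hcongr, integral_const, measureReal_def, Measure.restrict_apply_univ, hμ2,
        Measure.prod_prod, ENNReal.toReal_mul, smul_eq_mul]
      ring
    have h4 : ∫ ω, ∫ p in A ×ˢ B, Φ (p, ω) ∂μ2 ∂P = ∫ ω, Y A ω * Y B ω ∂P := by
      refine integral_congr_ae (Filter.Eventually.of_forall fun ω => ?_)
      show ∫ p in A ×ˢ B, Φ (p, ω) ∂μ2 = Y A ω * Y B ω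
      have h : ∫ p in A ×ˢ B, Φ (p, ω) ∂μ2
          = (∫ t in A, F (t, ω) ∂μ) * ∫ s in B, F (s, ω) ∂μ := by
        simp only [hΦdef, hμ2]
        exact setIntegral_prod_mul (fun t => F (t, ω)) (fun s => F (s, ω)) A B
      rw [h]
    rw [← h4, ← h2, h1, h3]
  have hone : (μ Set.univ).toReal = 1 := by
    rw [hμP.measure_univ]; simp
  -- the residual process vanishes
  set g : Ω → ℝ := Y Set.univ with hgdef
  have hX0 : ∀ A : Set ℝ, MeasurableSet A →
      (fun ω => Y A ω - (μ A).toReal * g ω) =ᵐ[P] 0 := by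
    intro A hA
    set c := (μ A).toReal with hcdef
    have hexp : (fun ω => (Y A ω - c * g ω) ^ 2)
        = fun ω => (Y A ω * Y A ω - (2 * c) * (Y A ω * Y Set.univ ω))
            + c ^ 2 * (Y Set.univ ω * Y Set.univ ω) := by
      funext ω; simp only [hgdef]; ring
    have hi1 := hYY_int A A hA hA
    have hi2 := hYY_int A Set.univ hA MeasurableSet.univ
    have hi3 := hYY_int Set.univ Set.univ MeasurableSet.univ MeasurableSet.univ
    have hi2' : Integrable (fun ω => 2 * c * (Y A ω * Y Set.univ ω)) P := hi2.const_mul _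
    have hi3' : Integrable (fun ω => c ^ 2 * (Y Set.univ ω * Y Set.univ ω)) P := hi3.const_mul _
    have h1' : Integrable (fun ω => Y A ω * Y A ω - 2 * c * (Y A ω * Y Set.univ ω)) P :=
      hi1.sub hi2'
    have hQint : Integrable (fun ω => (Y A ω - c * g ω) ^ 2) P := by
      rw [hexp]
      exact h1'.add hi3'
    have hQval : ∫ ω, (Y A ω - c * g ω) ^ 2 ∂P = 0 := by
      rw [hexp, integral_add h1' hi3', integral_sub hi1 hi2',
        integral_const_mul, integral_const_mul,
        hYY A A hA hA, hYY A Set.univ hA MeasurableSet.univ,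
        hYY Set.univ Set.univ MeasurableSet.univ MeasurableSet.univ, hone]
      ring
    have h0 := (integral_eq_zero_iff_of_nonneg_ae
      (Filter.Eventually.of_forall fun ω => sq_nonneg _) hQint).1 hQval
    filter_upwards [h0] with ω hω
    have : (Y A ω - c * g ω) ^ 2 = 0 := hω
    exact pow_eq_zero_iff two_ne_zero |>.1 this
  -- H = F - g ∘ snd
  have hgmeas : Measurable g := hYmeas _ MeasurableSet.univ
  have hg2 : Integrable (fun ω => g ω ^ 2) P := by
    have := hYY_int Set.univ Set.univ MeasurableSet.univ MeasurableSet.univ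
    simpa [hgdef, sq] using this
  have hg1 : Integrable g P :=
    ((memLp_two_iff_integrable_sq hgmeas.aestronglyMeasurable).2 hg2).integrable one_le_two
  set H : ℝ × Ω → ℝ := fun p => F p - g p.2 with hHdef
  have hHmeas : Measurable H := hFmeas.sub (hgmeas.comp measurable_snd)
  have hgsnd : Integrable (fun p : ℝ × Ω => g p.2) ν := by
    rw [hνdef, integrable_prod_iff
      ((show Measurable fun p : ℝ × Ω => g p.2 from hgmeas.comp measurable_snd).aestronglyMeasurable)]
    exact ⟨Filter.Eventually.of_forall fun t => hg1,
      (integrable_const (∫ ω, ‖g ω‖ ∂P) : Integrable (fun _ : ℝ => ∫ ω, ‖g ω‖ ∂P) μ)⟩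
  have hH1 : Integrable H ν := hF1.sub hgsnd
  -- rectangle integrals of H vanish
  have hrect : ∀ (A : Set ℝ) (B : Set Ω), MeasurableSet A → MeasurableSet B →
      ∫ p in A ×ˢ B, H p ∂ν = 0 := by
    intro A B hA hB
    have hres : (μ.restrict A).prod (P.restrict B) = ν.restrict (A ×ˢ B) := by
      rw [hνdef, Measure.prod_restrict]
    have hHint' : Integrable H ((μ.restrict A).prod (P.restrict B)) := by
      rw [hres]; exact hH1.integrableOn
    have h2 : ∫ p in A ×ˢ B, H p ∂ν = ∫ ω in B, ∫ t in A, H (t, ω) ∂μ ∂P := by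
      rw [← hres]
      exact integral_prod_symm H hHint'
    rw [h2]
    have hae' : ∀ᵐ ω ∂(P.restrict B), ∫ t in A, H (t, ω) ∂μ
        = Y A ω - (μ A).toReal * g ω := by
      refine ae_restrict_of_ae ?_
      filter_upwards [hF1.prod_left_ae] with ω hω
      have h : ∫ t in A, H (t, ω) ∂μ = (∫ t in A, F (t, ω) ∂μ) - ∫ t in A, g ω ∂μ := by
        simp only [hHdef]
        exact integral_sub hω.integrableOn (integrableOn_const (measure_ne_top μ A))
      rw [h, setIntegral_const]
      simp only [hYdef, smul_eq_mul, measureReal_def]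
    rw [integral_congr_ae hae', integral_congr_ae (ae_restrict_of_ae (hX0 A hA))]
    simp
  -- conclude H = 0 a.e.
  have hH0 : H =ᵐ[ν] 0 := by
    have hsplit : ∀ s : Set (ℝ × Ω), MeasurableSet s →
        ∫ p in s, H p ∂ν
          = (ν.withDensity (fun p => ENNReal.ofReal (H p)) s).toReal
            - (ν.withDensity (fun p => ENNReal.ofReal (-H p)) s).toReal := by
      intro s hs
      rw [withDensity_apply _ hs, withDensity_apply _ hs]
      exact integral_eq_lintegral_pos_part_sub_lintegral_neg_part hH1.integrableOn
    have hfin1 : IsFiniteMeasure (ν.withDensity (fun p => ENNReal.ofReal (H p))) := by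
      constructor
      rw [withDensity_apply _ MeasurableSet.univ, Measure.restrict_univ]
      calc ∫⁻ p, ENNReal.ofReal (H p) ∂ν ≤ ∫⁻ p, ‖H p‖₊ ∂ν := by
            refine lintegral_mono fun p => ?_
            rw [← enorm_eq_nnnorm, ← ofReal_norm]
            exact ENNReal.ofReal_le_ofReal (le_abs_self _)
        _ < ⊤ := hH1.2
    have hfin2 : IsFiniteMeasure (ν.withDensity (fun p => ENNReal.ofReal (-H p))) := by
      constructor
      rw [withDensity_apply _ MeasurableSet.univ, Measure.restrict_univ]
      calc ∫⁻ p, ENNReal.ofReal (-H p) ∂ν ≤ ∫⁻ p, ‖H p‖₊ ∂ν := by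
            refine lintegral_mono fun p => ?_
            rw [← enorm_eq_nnnorm, ← ofReal_norm]
            exact ENNReal.ofReal_le_ofReal (neg_le_abs _)
        _ < ⊤ := hH1.2
    have hCeq : ∀ s : Set (ℝ × Ω), MeasurableSet s → ∫ p in s, H p ∂ν = 0 →
        (ν.withDensity (fun p => ENNReal.ofReal (H p))) s
          = (ν.withDensity (fun p => ENNReal.ofReal (-H p))) s := by
      intro s hs h0
      have h := hsplit s hs
      rw [h0] at h
      have h1 : (ν.withDensity (fun p => ENNReal.ofReal (H p)) s).toReal
          = (ν.withDensity (fun p => ENNReal.ofReal (-H p)) s).toReal := by linarith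
      exact (ENNReal.toReal_eq_toReal_iff' (measure_ne_top _ _) (measure_ne_top _ _)).1 h1
    have heqm : ν.withDensity (fun p => ENNReal.ofReal (H p))
        = ν.withDensity (fun p => ENNReal.ofReal (-H p)) := by
      refine ext_of_generate_finite _ generateFrom_prod.symm isPiSystem_prod ?_ ?_
      · rintro s ⟨A, hA, B, hB, rfl⟩
        exact hCeq _ ((show MeasurableSet A from hA).prod (show MeasurableSet B from hB))
          (hrect A B hA hB)
      · have huniv : (Set.univ : Set (ℝ × Ω)) = Set.univ ×ˢ Set.univ := by
          rw [Set.univ_prod_univ]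
        rw [huniv]
        exact hCeq _ (MeasurableSet.univ.prod MeasurableSet.univ)
          (hrect _ _ MeasurableSet.univ MeasurableSet.univ)
    refine hH1.ae_eq_zero_of_forall_setIntegral_eq_zero fun s hs _ => ?_
    rw [hsplit s hs, heqm, sub_self]
  -- finish
  have hae_eq : ∀ᵐ t ∂μ, ∀ᵐ ω ∂P, F (t, ω) = g ω := by
    have h := Measure.ae_ae_of_ae_prod (hνdef ▸ hH0 : ∀ᵐ p ∂(μ.prod P), H p = 0)
    filter_upwards [h] with t ht
    filter_upwards [ht] with ω hω
    have : F (t, ω) - g ω = 0 := hω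
    linarith
  set S : Set ℝ := {t | t ∈ I ∧ ∀ᵐ ω ∂P, f t ω = g ω} with hSdef
  have hSae : ∀ᵐ t ∂μ, t ∈ S := by
    filter_upwards [ae_restrict_mem hIm, hae_eq] with t h1 h2
    refine ⟨h1, ?_⟩
    filter_upwards [h2] with ω hω
    rw [← hFeq t h1 ω]
    exact hω
  have hSne : ¬ S.Subsingleton := by
    intro hsub
    have h1 : μ Sᶜ = 0 := by
      have := hSae
      rw [ae_iff] at this
      simpa [Set.compl_def] using this
    have h2 : μ S = 0 := by
      rcases hsub.eq_empty_or_singleton with h | ⟨x, h⟩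
      · simp [h]
      · rw [h, hμdef, Measure.restrict_apply (measurableSet_singleton x)]
        exact measure_mono_null Set.inter_subset_left Real.volume_singleton
    have h3 : (1 : ENNReal) ≤ 0 := by
      calc (1 : ENNReal) = μ Set.univ := hμP.measure_univ.symm
        _ ≤ μ S + μ Sᶜ := by
            rw [← Set.union_compl_self S]
            exact measure_union_le _ _
        _ = 0 := by rw [h1, h2, add_zero]
    simp at h3
  obtain ⟨t, ht, s, hs, hts⟩ := Set.not_subsingleton_iff.1 hSne
  have h1 : ∫ ω, f t ω * f s ω ∂P = ∫ ω, f t ω ^ 2 ∂P := by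
    refine integral_congr_ae ?_
    filter_upwards [ht.2, hs.2] with ω hω1 hω2
    rw [hω2, ← hω1]
    ring
  exact (hcov t ht.1 s hs.1 hts).symm.trans (h1.trans (hvar t ht.1))
end

section
/- Let f be a measurable second-order stochastic process on [0,1] whose random variables f(t) are identically distributed and whose covariance Cov(f(t), f(s)) is equal to a constant ρ for all t ≠ s in [0,1]. Then there exists a random variable X : Ω → ℝ such that P{ω : f(t,ω) = X(ω)} = 1 for every t ∈ [0,1]. -/
open MeasureTheory ProbabilityTheory
open scoped ENNReal NNReal

/-!
Statement 9: a measurable second-order process on `[0,1]` with identically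
distributed random variables and constant off-diagonal covariance is constant:
there is a random variable `X` with `f(t) = X` a.s. for every `t ∈ [0,1]`.
-/

private lemma nfl_mul_integrable {Ω : Type*} [MeasurableSpace Ω] {P : Measure Ω}
    {g h : Ω → ℝ} (hg : MemLp g 2 P) (hh : MemLp h 2 P) :
    Integrable (fun ω => g ω * h ω) P := by
  refine Integrable.mono' ((hg.integrable_sq.add hh.integrable_sq).div_const 2)
      (hg.aestronglyMeasurable.mul hh.aestronglyMeasurable) ?_
  filter_upwards with ω
  have h1 : |g ω| * |h ω| ≤ (g ω ^ 2 + h ω ^ 2) / 2 := by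
    nlinarith [sq_nonneg (|g ω| - |h ω|), sq_abs (g ω), sq_abs (h ω)]
  simpa [Real.norm_eq_abs, abs_mul] using h1

private lemma nfl_ae_prod_fst {α β : Type*} [MeasurableSpace α] [MeasurableSpace β]
    (μ : Measure α) (κ : Measure β) [SFinite μ] [SFinite κ] {B : Set α} (h : μ Bᶜ = 0) :
    ∀ᵐ p ∂(μ.prod κ), p.1 ∈ B := by
  rw [ae_iff]
  have hs : {p : α × β | ¬ p.1 ∈ B} = Bᶜ ×ˢ Set.univ := by ext p; simp
  rw [hs, Measure.prod_prod, h, zero_mul]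

private lemma nfl_ae_prod_snd {α β : Type*} [MeasurableSpace α] [MeasurableSpace β]
    (μ : Measure α) (κ : Measure β) [SFinite μ] [SFinite κ] {B : Set β} (h : κ Bᶜ = 0) :
    ∀ᵐ p ∂(μ.prod κ), p.2 ∈ B := by
  rw [ae_iff]
  have hs : {p : α × β | ¬ p.2 ∈ B} = Set.univ ×ˢ Bᶜ := by ext p; simp
  rw [hs, Measure.prod_prod, h, mul_zero]

set_option maxHeartbeats 2000000 in
private lemma nfl_aux {Ω : Type*} [MeasurableSpace Ω] (P : Measure Ω) [IsProbabilityMeasure P]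
    (f : ℝ → Ω → ℝ)
    (hf : Measurable (Function.uncurry f))
    (hL2 : ∀ t ∈ Set.Icc (0 : ℝ) 1, MemLp (f t) 2 P)
    (hid : ∀ t ∈ Set.Icc (0 : ℝ) 1, ∀ s ∈ Set.Icc (0 : ℝ) 1,
      P.map (f t) = P.map (f s))
    (ρ : ℝ)
    (hcov : ∀ t ∈ Set.Icc (0 : ℝ) 1, ∀ s ∈ Set.Icc (0 : ℝ) 1, t ≠ s →
      ∫ ω, f t ω * f s ω ∂P - (∫ ω, f t ω ∂P) * (∫ ω, f s ω ∂P) = ρ) :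
    ∃ X : Ω → ℝ, ∀ t ∈ Set.Icc (0 : ℝ) 1, P {ω | f t ω = X ω} = 1 := by
  have h0I : (0:ℝ) ∈ Set.Icc (0:ℝ) 1 := ⟨le_refl _, zero_le_one⟩
  have hft : ∀ t : ℝ, Measurable (f t) := fun t => hf.comp measurable_prodMk_left
  -- constant mean and second moment
  set μ0 := ∫ ω, f 0 ω ∂P with hμ0
  have hmap : ∀ (t : ℝ) (φ : ℝ → ℝ), Measurable φ →
      ∫ x, φ x ∂(P.map (f t)) = ∫ ω, φ (f t ω) ∂P := fun t φ hφ =>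
    integral_map (hft t).aemeasurable hφ.aestronglyMeasurable
  have hmean : ∀ t ∈ Set.Icc (0:ℝ) 1, ∫ ω, f t ω ∂P = μ0 := by
    intro t ht
    have h1 := hmap t (fun x => x) measurable_id
    have h2 := hmap 0 (fun x => x) measurable_id
    rw [hμ0, ← h1, ← h2, hid t ht 0 h0I]
  set C2 := ∫ ω, f 0 ω ^ 2 ∂P with hC2def
  have hsq : ∀ t ∈ Set.Icc (0:ℝ) 1, ∫ ω, f t ω ^ 2 ∂P = C2 := by
    intro t ht
    have h1 := hmap t (fun x => x ^ 2) (measurable_id.pow_const 2)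
    have h2 := hmap 0 (fun x => x ^ 2) (measurable_id.pow_const 2)
    rw [hC2def, ← h1, ← h2, hid t ht 0 h0I]
  set K := ρ + μ0 ^ 2 with hKdef
  have hK : ∀ t ∈ Set.Icc (0:ℝ) 1, ∀ s ∈ Set.Icc (0:ℝ) 1, t ≠ s →
      ∫ ω, f t ω * f s ω ∂P = K := by
    intro t ht s hs hne
    have h := hcov t ht s hs hne
    rw [hmean t ht, hmean s hs] at h
    rw [hKdef, pow_two]; linarith
  -- uniform second moment in `ℝ≥0∞`
  set e2 : ℝ≥0∞ := ∫⁻ ω, (‖f 0 ω‖₊ : ℝ≥0∞) ^ (2:ℝ) ∂P with he2def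
  have hrpow2 : ∀ x : ℝ≥0∞, x ^ (2:ℝ) = x ^ (2:ℕ) := fun x => by
    rw [← ENNReal.rpow_natCast]; norm_num
  have hnnm : Measurable (fun x : ℝ => (‖x‖₊ : ℝ≥0∞) ^ (2:ℝ)) := by
    simp_rw [hrpow2]
    exact (measurable_coe_nnreal_ennreal.comp measurable_nnnorm).pow_const 2
  have he2 : ∀ t ∈ Set.Icc (0:ℝ) 1, ∫⁻ ω, (‖f t ω‖₊ : ℝ≥0∞) ^ (2:ℝ) ∂P = e2 := by
    intro t ht
    rw [he2def, ← lintegral_map hnnm (hft t), ← lintegral_map hnnm (hft 0), hid t ht 0 h0I]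
  have he2top : e2 ≠ ⊤ := by
    have h1 : Integrable (fun ω => f 0 ω ^ 2) P := (hL2 0 h0I).integrable_sq
    have h2 : (∫⁻ ω, (‖f 0 ω ^ 2‖₊ : ℝ≥0∞) ∂P) < ⊤ := h1.2
    have h3 : ∀ ω, (‖f 0 ω‖₊ : ℝ≥0∞) ^ (2:ℝ) = (‖f 0 ω ^ 2‖₊ : ℝ≥0∞) := by
      intro ω
      rw [hrpow2, nnnorm_pow, ENNReal.coe_pow]
    rw [he2def]
    simp_rw [h3]
    exact h2.ne
  have hpq : (2:ℝ).HolderConjugate 2 := Real.HolderConjugate.two_two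
  -- Hölder bounds
  have hold : ∀ t ∈ Set.Icc (0:ℝ) 1, ∀ s ∈ Set.Icc (0:ℝ) 1,
      ∫⁻ ω, (‖f t ω‖₊ : ℝ≥0∞) * (‖f s ω‖₊ : ℝ≥0∞) ∂P ≤ e2 := by
    intro t ht s hs
    have h := ENNReal.lintegral_mul_le_Lp_mul_Lq P hpq
      ((hft t).nnnorm.coe_nnreal_ennreal.aemeasurable) ((hft s).nnnorm.coe_nnreal_ennreal.aemeasurable)
    rw [he2 t ht, he2 s hs] at h
    calc ∫⁻ ω, (‖f t ω‖₊ : ℝ≥0∞) * (‖f s ω‖₊ : ℝ≥0∞) ∂P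
        ≤ e2 ^ (1/2:ℝ) * e2 ^ (1/2:ℝ) := h
      _ = e2 := by
          rw [← ENNReal.rpow_add_of_nonneg _ _ (by norm_num) (by norm_num)]
          norm_num
  have hold1 : ∀ t ∈ Set.Icc (0:ℝ) 1,
      ∫⁻ ω, (‖f t ω‖₊ : ℝ≥0∞) ∂P ≤ e2 ^ (1/2:ℝ) := by
    intro t ht
    have h := ENNReal.lintegral_mul_le_Lp_mul_Lq P hpq
      ((hft t).nnnorm.coe_nnreal_ennreal.aemeasurable) (aemeasurable_const (b := (1:ℝ≥0∞)))
    simp only [Pi.mul_apply, mul_one, ENNReal.one_rpow, lintegral_const,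
      measure_univ, one_mul, ENNReal.one_rpow] at h
    rw [he2 t ht] at h
    simpa using h
  -- the base measure on the time interval
  set ν : Measure ℝ := volume.restrict (Set.Ioo 0 1) with hνdef
  have hν1 : ν Set.univ = 1 := by
    rw [hνdef, Measure.restrict_apply_univ, Real.volume_Ioo]; norm_num
  haveI : IsProbabilityMeasure ν := ⟨hν1⟩
  have hνIcc : ν (Set.Icc (0:ℝ) 1)ᶜ = 0 := by
    rw [hνdef, Measure.restrict_apply measurableSet_Icc.compl]
    have : (Set.Icc (0:ℝ) 1)ᶜ ∩ Set.Ioo 0 1 = ∅ := by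
      rw [Set.eq_empty_iff_forall_notMem]
      rintro x ⟨hc, hx⟩
      exact hc (Set.Ioo_subset_Icc_self hx)
    rw [this, measure_empty]
  have hνI : ∀ᵐ t ∂ν, t ∈ Set.Icc (0:ℝ) 1 := by
    rw [ae_iff]
    have h : {t : ℝ | ¬ t ∈ Set.Icc (0:ℝ) 1} = (Set.Icc (0:ℝ) 1)ᶜ := rfl
    rw [h]; exact hνIcc
  have hmemS : ∀ S : Set ℝ, (ν.restrict S) (Set.Icc (0:ℝ) 1)ᶜ = 0 := by
    intro S
    rw [Measure.restrict_apply measurableSet_Icc.compl]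
    exact measure_mono_null Set.inter_subset_left hνIcc
  have hmemprod : ∀ S T : Set ℝ, ∀ᵐ p ∂((ν.restrict S).prod (ν.restrict T)),
      p.1 ∈ Set.Icc (0:ℝ) 1 ∧ p.2 ∈ Set.Icc (0:ℝ) 1 := fun S T =>
    (nfl_ae_prod_fst _ _ (hmemS S)).and (nfl_ae_prod_snd _ _ (hmemS T))
  have hdiag : ∀ S T : Set ℝ,
      ((ν.restrict S).prod (ν.restrict T)) {p : ℝ × ℝ | p.1 = p.2} = 0 := by
    intro S T
    have hDm : MeasurableSet {p : ℝ × ℝ | p.1 = p.2} :=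
      measurableSet_eq_fun measurable_fst measurable_snd
    rw [Measure.prod_apply hDm]
    have h1 : ∀ t : ℝ, (ν.restrict T) (Prod.mk t ⁻¹' {p : ℝ × ℝ | p.1 = p.2}) = 0 := by
      intro t
      have hpre : (Prod.mk t ⁻¹' {p : ℝ × ℝ | p.1 = p.2}) = {t} := by
        ext s; simp [eq_comm]
      rw [hpre, Measure.restrict_apply (measurableSet_singleton t)]
      refine measure_mono_null Set.inter_subset_left ?_
      rw [hνdef, Measure.restrict_apply (measurableSet_singleton t)]
      exact measure_mono_null Set.inter_subset_left Real.volume_singleton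
    simp_rw [h1]
    exact lintegral_zero
  -- joint measurability of the product process
  have hGmeas : ∀ (_ _ : Set ℝ), Measurable fun q : (ℝ × ℝ) × Ω => f q.1.1 q.2 * f q.1.2 q.2 := by
    intro _ _
    exact (hf.comp ((measurable_fst.comp measurable_fst).prodMk measurable_snd)).mul
      (hf.comp ((measurable_snd.comp measurable_fst).prodMk measurable_snd))
  have hGint : ∀ S T : Set ℝ,
      Integrable (fun q : (ℝ × ℝ) × Ω => f q.1.1 q.2 * f q.1.2 q.2)
        (((ν.restrict S).prod (ν.restrict T)).prod P) := by
    intro S T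
    refine ⟨(hGmeas S T).aestronglyMeasurable, ?_⟩
    show (∫⁻ q, (‖f q.1.1 q.2 * f q.1.2 q.2‖₊ : ℝ≥0∞)
      ∂(((ν.restrict S).prod (ν.restrict T)).prod P)) < ⊤
    rw [lintegral_prod _ ((hGmeas S T).nnnorm.coe_nnreal_ennreal.aemeasurable)]
    calc ∫⁻ p, ∫⁻ ω, (‖f p.1 ω * f p.2 ω‖₊ : ℝ≥0∞) ∂P ∂((ν.restrict S).prod (ν.restrict T))
        ≤ ∫⁻ _, e2 ∂((ν.restrict S).prod (ν.restrict T)) := by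
          refine lintegral_mono_ae ?_
          filter_upwards [hmemprod S T] with p hp
          have h1 : ∀ ω, (‖f p.1 ω * f p.2 ω‖₊ : ℝ≥0∞)
              = (‖f p.1 ω‖₊ : ℝ≥0∞) * (‖f p.2 ω‖₊ : ℝ≥0∞) := by
            intro ω; rw [nnnorm_mul, ENNReal.coe_mul]
          simp_rw [h1]
          exact hold p.1 hp.1 p.2 hp.2
      _ = e2 * ((ν.restrict S).prod (ν.restrict T)) Set.univ := lintegral_const _
      _ < ⊤ := ENNReal.mul_lt_top he2top.lt_top (measure_lt_top _ _)
  -- the key covariance computation for averages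
  have hkey : ∀ S T : Set ℝ, MeasurableSet S → MeasurableSet T →
      ∫ ω, (∫ t, f t ω ∂ν.restrict S) * (∫ t, f t ω ∂ν.restrict T) ∂P
        = (ν S).toReal * (ν T).toReal * K := by
    intro S T hS hT
    have h1 : ∀ ω : Ω, (∫ t, f t ω ∂ν.restrict S) * (∫ t, f t ω ∂ν.restrict T)
        = ∫ p, f p.1 ω * f p.2 ω ∂((ν.restrict S).prod (ν.restrict T)) := fun ω =>
      (integral_prod_mul (μ := ν.restrict S) (ν := ν.restrict T)
        (fun t => f t ω) (fun t => f t ω)).symm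
    simp_rw [h1]
    rw [← integral_integral_swap (hGint S T)]
    have h2 : ∀ᵐ p ∂((ν.restrict S).prod (ν.restrict T)),
        (∫ ω, f p.1 ω * f p.2 ω ∂P) = K := by
      have hne : ∀ᵐ p ∂((ν.restrict S).prod (ν.restrict T)), ¬ (p.1 = p.2) := by
        rw [ae_iff]; simpa [not_not] using hdiag S T
      filter_upwards [hmemprod S T, hne] with p hp hpne
      exact hK p.1 hp.1 p.2 hp.2 hpne
    rw [integral_congr_ae h2, integral_const]
    have h3 : ((ν.restrict S).prod (ν.restrict T)) Set.univ = ν S * ν T := by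
      rw [← Set.univ_prod_univ, Measure.prod_prod,
        Measure.restrict_apply_univ, Measure.restrict_apply_univ]
    rw [measureReal_def, h3, smul_eq_mul, ENNReal.toReal_mul]
  have hint_pair : ∀ S T : Set ℝ,
      Integrable (fun ω => (∫ t, f t ω ∂ν.restrict S) * (∫ t, f t ω ∂ν.restrict T)) P := by
    intro S T
    have h := (hGint S T).integral_prod_right
    refine h.congr (Filter.Eventually.of_forall fun ω => ?_)
    exact (integral_prod_mul (μ := ν.restrict S) (ν := ν.restrict T)
        (fun t => f t ω) (fun t => f t ω))
  set W : Ω → ℝ := fun ω => ∫ t, f t ω ∂ν with hWdef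
  have hWm : Measurable W := by
    have h := (hf.stronglyMeasurable.integral_prod_left' (μ := ν))
    exact h.measurable
  -- every average over a measurable set agrees a.s. with `(ν S) • W`
  have hstar : ∀ S : Set ℝ, MeasurableSet S →
      ∀ᵐ ω ∂P, (∫ t, f t ω ∂ν.restrict S) = (ν S).toReal * W ω := by
    intro S hS
    set c := (ν S).toReal with hc
    set A : Ω → ℝ := fun ω => ∫ t, f t ω ∂ν.restrict S with hA
    have hrw : (fun ω => ∫ t, f t ω ∂ν.restrict Set.univ) = W := by
      funext ω; rw [Measure.restrict_univ]
    have hAA : Integrable (fun ω => A ω * A ω) P := hint_pair S S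
    have hAW : Integrable (fun ω => A ω * W ω) P := by
      have h := hint_pair S Set.univ
      rwa [Measure.restrict_univ] at h
    have hWW : Integrable (fun ω => W ω * W ω) P := by
      have h := hint_pair Set.univ Set.univ
      rwa [Measure.restrict_univ] at h
    have hkSS : ∫ ω, A ω * A ω ∂P = c * c * K := hkey S S hS hS
    have hkSU : ∫ ω, A ω * W ω ∂P = c * K := by
      have h := hkey S Set.univ hS MeasurableSet.univ
      rw [Measure.restrict_univ, hν1, ENNReal.toReal_one, mul_one] at h
      exact h
    have hkUU : ∫ ω, W ω * W ω ∂P = K := by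
      have h := hkey Set.univ Set.univ MeasurableSet.univ MeasurableSet.univ
      rw [Measure.restrict_univ, hν1, ENNReal.toReal_one, one_mul, one_mul] at h
      exact h
    have hexp : (fun ω => (A ω - c * W ω) ^ 2)
        = fun ω => (A ω * A ω - (2*c) * (A ω * W ω)) + c^2 * (W ω * W ω) := by
      funext ω; ring
    have h1 : Integrable (fun ω => A ω * A ω - (2*c) * (A ω * W ω)) P :=
      hAA.sub (hAW.const_mul (2*c))
    have h2 : Integrable (fun ω => c^2 * (W ω * W ω)) P := hWW.const_mul (c^2)
    have hsqint : Integrable (fun ω => (A ω - c * W ω) ^ 2) P := by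
      rw [hexp]
      exact h1.add h2
    have hzero : ∫ ω, (A ω - c * W ω) ^ 2 ∂P = 0 := by
      rw [hexp, integral_add h1 h2,
        integral_sub hAA (hAW.const_mul (2*c)), integral_const_mul, integral_const_mul,
        hkSS, hkSU, hkUU]
      ring
    have h0 := (integral_eq_zero_iff_of_nonneg (fun ω => sq_nonneg _) hsqint).1 hzero
    filter_upwards [h0] with ω hω
    have h1 : (A ω - c * W ω) ^ 2 = 0 := hω
    have h2 := pow_eq_zero_iff (n := 2) (by norm_num) |>.1 h1
    linarith [sub_eq_zero.1 h2]
  -- integrability of the process on the product space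
  have hint1 : Integrable (Function.uncurry f) (ν.prod P) := by
    refine ⟨hf.aestronglyMeasurable, ?_⟩
    show (∫⁻ p, (‖Function.uncurry f p‖₊ : ℝ≥0∞) ∂(ν.prod P)) < ⊤
    rw [lintegral_prod _ hf.nnnorm.coe_nnreal_ennreal.aemeasurable]
    calc ∫⁻ t, ∫⁻ ω, (‖f t ω‖₊ : ℝ≥0∞) ∂P ∂ν
        ≤ ∫⁻ _, e2 ^ (1/2:ℝ) ∂ν := by
          refine lintegral_mono_ae ?_
          filter_upwards [hνI] with t ht using hold1 t ht
      _ = e2 ^ (1/2:ℝ) * ν Set.univ := lintegral_const _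
      _ < ⊤ := by
          rw [hν1, mul_one]
          exact ENNReal.rpow_lt_top_of_nonneg (by norm_num) he2top
  have hslice : ∀ᵐ ω ∂P, Integrable (fun t => f t ω) ν := hint1.prod_left_ae
  -- the key a.e. statement, for each fixed ω
  have hae : ∀ᵐ ω ∂P, ∀ᵐ t ∂ν, f t ω = W ω := by
    have hrat : ∀ᵐ ω ∂P, ∀ q : ℚ × ℚ,
        (∫ t, f t ω ∂ν.restrict (Set.Ioo (q.1:ℝ) q.2))
          = (ν (Set.Ioo (q.1:ℝ) q.2)).toReal * W ω :=
      ae_all_iff.2 fun q => hstar (Set.Ioo (q.1:ℝ) q.2) measurableSet_Ioo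
    filter_upwards [hslice, hrat] with ω hIω hratω
    set h : ℝ → ℝ := fun t => f t ω - W ω with hhdef
    have hhm : Measurable h :=
      (hf.comp (measurable_id.prodMk measurable_const)).sub measurable_const
    have hhint : Integrable h ν := hIω.sub (integrable_const _)
    have hzero : ∀ a b : ℚ, ∫ t in Set.Ioo (a:ℝ) b, h t ∂ν = 0 := by
      intro a b
      rw [hhdef]
      rw [integral_sub hIω.restrict (integrable_const _)]
      rw [hratω (a, b), integral_const, measureReal_def, Measure.restrict_apply_univ, smul_eq_mul, sub_self]
    have hbound : ∀ g : ℝ → ℝ, (∀ t, |g t| = |h t|) →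
        (∫⁻ t, ENNReal.ofReal (g t) ∂ν) ≠ ⊤ := by
      intro g hg
      refine (lt_of_le_of_lt (lintegral_mono fun t => ?_) hhint.2).ne
      rw [Real.enorm_eq_ofReal_abs, ← hg t]
      exact ENNReal.ofReal_le_ofReal (le_abs_self _)
    set μp := ν.withDensity (fun t => ENNReal.ofReal (h t)) with hμpdef
    set μm := ν.withDensity (fun t => ENNReal.ofReal (-h t)) with hμmdef
    haveI : IsFiniteMeasure μp := isFiniteMeasure_withDensity (hbound h (fun t => rfl))
    haveI : IsFiniteMeasure μm :=
      isFiniteMeasure_withDensity (hbound (fun t => -h t) (fun t => abs_neg _))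
    have hIoo : ∀ a b : ℚ, μp (Set.Ioo (a:ℝ) b) = μm (Set.Ioo (a:ℝ) b) := by
      intro a b
      have h1 := integral_eq_lintegral_pos_part_sub_lintegral_neg_part
        (hhint.restrict (s := Set.Ioo (a:ℝ) b))
      rw [hzero a b] at h1
      rw [hμpdef, hμmdef, withDensity_apply _ measurableSet_Ioo,
        withDensity_apply _ measurableSet_Ioo]
      have hAfin : (∫⁻ t in Set.Ioo (a:ℝ) b, ENNReal.ofReal (h t) ∂ν) ≠ ⊤ := by
        have := hμpdef ▸ measure_ne_top μp (Set.Ioo (a:ℝ) b)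
        rwa [withDensity_apply _ measurableSet_Ioo] at this
      have hBfin : (∫⁻ t in Set.Ioo (a:ℝ) b, ENNReal.ofReal (-h t) ∂ν) ≠ ⊤ := by
        have := hμmdef ▸ measure_ne_top μm (Set.Ioo (a:ℝ) b)
        rwa [withDensity_apply _ measurableSet_Ioo] at this
      exact (ENNReal.toReal_eq_toReal_iff' hAfin hBfin).1 (by linarith)
    have hext : μp = μm := Real.measure_ext_Ioo_rat hIoo
    have hnull : ∀ u : ℝ → ℝ, Measurable u →
        ν.withDensity (fun t => ENNReal.ofReal (u t))
          = ν.withDensity (fun t => ENNReal.ofReal (-u t)) →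
        ν {t | 0 < u t} = 0 := by
      intro u hu hequ
      have hum : MeasurableSet {t | 0 < u t} := measurableSet_lt measurable_const hu
      have h1 : (ν.withDensity (fun t => ENNReal.ofReal (-u t))) {t | 0 < u t} = 0 := by
        rw [withDensity_apply _ hum]
        have hz : ∀ᵐ t ∂ν, t ∈ {t : ℝ | 0 < u t} → ENNReal.ofReal (-u t) = (0:ℝ≥0∞) := by
          refine Filter.Eventually.of_forall (fun t ht => ?_)
          simp only [Set.mem_setOf_eq] at ht
          exact ENNReal.ofReal_eq_zero.2 (by linarith)
        rw [setLIntegral_congr_fun_ae hum hz, lintegral_zero]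
      have h2 : (∫⁻ t in {t | 0 < u t}, ENNReal.ofReal (u t) ∂ν) = 0 := by
        rw [← withDensity_apply _ hum, hequ]
        exact h1
      have h3 := (setLIntegral_eq_zero_iff hum (ENNReal.measurable_ofReal.comp hu)).1 h2
      have h4 : ∀ᵐ t ∂ν, ¬ (0 < u t) := by
        filter_upwards [h3] with t h5 h6
        have h7 := h5 h6
        rw [Function.comp_apply, ENNReal.ofReal_eq_zero] at h7
        linarith
      have h8 := ae_iff.1 h4
      simpa [not_not] using h8
    have hpos : ν {t | 0 < h t} = 0 := hnull h hhm hext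
    have hneg : ν {t | h t < 0} = 0 := by
      have h5 := hnull (fun t => -h t) hhm.neg (by simpa [neg_neg] using hext.symm)
      simpa [neg_pos] using h5
    have hsub : {t : ℝ | ¬ (f t ω = W ω)} ⊆ {t | 0 < h t} ∪ {t | h t < 0} := by
      intro t ht
      rcases lt_trichotomy (h t) 0 with h1 | h1 | h1
      · exact Or.inr h1
      · exact absurd (sub_eq_zero.1 h1) ht
      · exact Or.inl h1
    rw [ae_iff]
    exact measure_mono_null hsub (measure_union_null hpos hneg)
  -- swap the order of the a.e. quantifiers
  have hNm : MeasurableSet {q : Ω × ℝ | f q.2 q.1 = W q.1} :=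
    measurableSet_eq_fun (hf.comp (measurable_snd.prodMk measurable_fst))
      (hWm.comp measurable_fst)
  have hprodnull : (P.prod ν) {q : Ω × ℝ | f q.2 q.1 = W q.1}ᶜ = 0 := by
    rw [Measure.prod_apply hNm.compl]
    have h1 : ∀ᵐ ω ∂P, ν (Prod.mk ω ⁻¹' {q : Ω × ℝ | ¬ (f q.2 q.1 = W q.1)}ᶜᶜ) = 0 := by
      filter_upwards [hae] with ω hω
      have h2 : (Prod.mk ω ⁻¹' {q : Ω × ℝ | ¬ (f q.2 q.1 = W q.1)}ᶜᶜ)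
          = {t : ℝ | ¬ (f t ω = W ω)} := by
        ext t; simp
      rw [h2]
      exact ae_iff.1 hω
    have h3 : ∀ᵐ ω ∂P, ν (Prod.mk ω ⁻¹' {q : Ω × ℝ | f q.2 q.1 = W q.1}ᶜ) = 0 := by
      filter_upwards [h1] with ω hω
      simpa [Set.compl_setOf] using hω
    rw [lintegral_congr_ae h3, lintegral_zero]
  have hswapnull : (ν.prod P) {p : ℝ × Ω | f p.1 p.2 = W p.2}ᶜ = 0 := by
    have h0 : ν.prod P = (P.prod ν).map Prod.swap := (Measure.prod_swap).symm
    have hm2 : MeasurableSet {p : ℝ × Ω | f p.1 p.2 = W p.2} :=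
      measurableSet_eq_fun hf (hWm.comp measurable_snd)
    rw [h0, Measure.map_apply measurable_swap hm2.compl]
    refine measure_mono_null (fun q hq => ?_) hprodnull
    exact hq
  have hae2 : ∀ᵐ t ∂ν, ∀ᵐ ω ∂P, f t ω = W ω := by
    have h1 : ∀ᵐ p ∂(ν.prod P), f p.1 p.2 = W p.2 := by
      rw [ae_iff]; exact hswapnull
    exact Measure.ae_ae_of_ae_prod h1
  -- extract two distinct good time points
  set E : Set ℝ := {t : ℝ | t ∈ Set.Ioo (0:ℝ) 1 ∧ ∀ᵐ ω ∂P, f t ω = W ω} with hEdef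
  have hEc : ν Eᶜ = 0 := by
    have h1 : ∀ᵐ t ∂ν, t ∈ E := by
      have h2 : ∀ᵐ t ∂ν, t ∈ Set.Ioo (0:ℝ) 1 := ae_restrict_mem measurableSet_Ioo
      filter_upwards [h2, hae2] with t h3 h4 using ⟨h3, h4⟩
    have h5 := ae_iff.1 h1
    exact h5
  have hsing : ∀ t : ℝ, ν {t} = 0 := by
    intro t
    rw [hνdef, Measure.restrict_apply (measurableSet_singleton t)]
    exact measure_mono_null Set.inter_subset_left Real.volume_singleton
  have hne1 : E.Nonempty := by
    rcases Set.eq_empty_or_nonempty E with hE | hE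
    · exfalso
      rw [hE, Set.compl_empty, hν1] at hEc
      exact one_ne_zero hEc
    · exact hE
  obtain ⟨t₁, ht₁⟩ := hne1
  have hne2 : (E \ {t₁}).Nonempty := by
    rcases Set.eq_empty_or_nonempty (E \ {t₁}) with hE | hE
    · exfalso
      have hcover : (Set.univ : Set ℝ) ⊆ Eᶜ ∪ {t₁} := by
        intro x _
        by_cases hx : x ∈ E
        · refine Or.inr ?_
          by_contra hne
          exact Set.eq_empty_iff_forall_notMem.1 hE x ⟨hx, hne⟩
        · exact Or.inl hx
      have h6 : ν Set.univ ≤ ν Eᶜ + ν {t₁} :=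
        le_trans (measure_mono hcover) (measure_union_le _ _)
      rw [hν1, hEc, hsing t₁, add_zero] at h6
      simp at h6
    · exact hE
  obtain ⟨t₂, ht₂E, ht₂ne⟩ := hne2
  have ht₁I : t₁ ∈ Set.Icc (0:ℝ) 1 := Set.Ioo_subset_Icc_self ht₁.1
  have ht₂I : t₂ ∈ Set.Icc (0:ℝ) 1 := Set.Ioo_subset_Icc_self ht₂E.1
  have htne : t₂ ≠ t₁ := by simpa using ht₂ne
  have h12 : f t₂ =ᵐ[P] f t₁ := by
    filter_upwards [ht₁.2, ht₂E.2] with ω h1 h2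
    rw [h1, h2]
  -- conclude `C2 = K`
  have hC2K : C2 = K := by
    have h1 : ∫ ω, f t₂ ω * f t₁ ω ∂P = K := hK t₂ ht₂I t₁ ht₁I htne
    have h2 : (fun ω => f t₂ ω * f t₁ ω) =ᵐ[P] fun ω => f t₂ ω ^ 2 := by
      filter_upwards [h12] with ω hω
      rw [hω, pow_two]
    rw [integral_congr_ae h2, hsq t₂ ht₂I] at h1
    exact h1
  -- the process is a.s. equal to `f t₁` at every time
  refine ⟨f t₁, fun t ht => ?_⟩
  by_cases htt : t = t₁
  · subst htt
    have : {ω : Ω | f t ω = f t ω} = Set.univ := by ext ω; simp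
    rw [this, measure_univ]
  · have hKt : ∫ ω, f t ω * f t₁ ω ∂P = K := hK t ht t₁ ht₁I htt
    have hmul : Integrable (fun ω => f t ω * f t₁ ω) P :=
      nfl_mul_integrable (hL2 t ht) (hL2 t₁ ht₁I)
    have hexp : (fun ω => (f t ω - f t₁ ω) ^ 2)
        = fun ω => (f t ω ^ 2 - 2 * (f t ω * f t₁ ω)) + f t₁ ω ^ 2 := by
      funext ω; ring
    have hi1 : Integrable (fun ω => f t ω ^ 2 - 2 * (f t ω * f t₁ ω)) P :=
      (hL2 t ht).integrable_sq.sub (hmul.const_mul 2)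
    have hi2 : Integrable (fun ω => f t₁ ω ^ 2) P := (hL2 t₁ ht₁I).integrable_sq
    have hsqint : Integrable (fun ω => (f t ω - f t₁ ω) ^ 2) P := by
      rw [hexp]; exact hi1.add hi2
    have hzero : ∫ ω, (f t ω - f t₁ ω) ^ 2 ∂P = 0 := by
      rw [hexp, integral_add hi1 hi2,
        integral_sub (hL2 t ht).integrable_sq (hmul.const_mul 2), integral_const_mul,
        hsq t ht, hsq t₁ ht₁I, hKt, hC2K]
      ring
    have h0 := (integral_eq_zero_iff_of_nonneg (fun ω => sq_nonneg _) hsqint).1 hzero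
    have haeeq : ∀ᵐ ω ∂P, f t ω = f t₁ ω := by
      filter_upwards [h0] with ω hω
      have h1 : (f t ω - f t₁ ω) ^ 2 = 0 := hω
      have h2 := pow_eq_zero_iff (n := 2) (by norm_num) |>.1 h1
      linarith [sub_eq_zero.1 h2]
    have hms : MeasurableSet {ω : Ω | f t ω = f t₁ ω} :=
      measurableSet_eq_fun (hft t) (hft t₁)
    have hcompl : P {ω : Ω | f t ω = f t₁ ω}ᶜ = 0 := by
      have h3 := ae_iff.1 haeeq
      exact h3
    have h4 := measure_compl hms (measure_ne_top P _)
    rw [hcompl, measure_univ] at h4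
    have h5 : (1:ℝ≥0∞) ≤ P {ω : Ω | f t ω = f t₁ ω} := by
      rw [← tsub_eq_zero_iff_le]
      exact h4.symm
    exact le_antisymm prob_le_one h5

theorem nfl_second_order_process_is_constant
    {Ω : Type*} [MeasurableSpace Ω] (P : Measure Ω) [IsProbabilityMeasure P]
    (f : ℝ → Ω → ℝ)
    (hmeas : Measurable fun p : Set.Icc (0 : ℝ) 1 × Ω => f p.1 p.2)
    (hL2 : ∀ t ∈ Set.Icc (0 : ℝ) 1, MemLp (f t) 2 P)
    (hid : ∀ t ∈ Set.Icc (0 : ℝ) 1, ∀ s ∈ Set.Icc (0 : ℝ) 1,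
      P.map (f t) = P.map (f s))
    (ρ : ℝ)
    (hcov : ∀ t ∈ Set.Icc (0 : ℝ) 1, ∀ s ∈ Set.Icc (0 : ℝ) 1, t ≠ s →
      ∫ ω, f t ω * f s ω ∂P - (∫ ω, f t ω ∂P) * (∫ ω, f s ω ∂P) = ρ) :
    ∃ X : Ω → ℝ, ∀ t ∈ Set.Icc (0 : ℝ) 1, P {ω | f t ω = X ω} = 1 := by
  -- extend `f` to a jointly measurable function on all of `ℝ × Ω`
  have hemb : MeasurableEmbedding
      (Prod.map (Subtype.val : Set.Icc (0:ℝ) 1 → ℝ) (id : Ω → Ω)) :=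
    (MeasurableEmbedding.subtype_coe measurableSet_Icc).prodMap MeasurableEmbedding.id
  obtain ⟨F, hFm, hFe⟩ := hemb.exists_measurable_extend hmeas (fun _ => ⟨0⟩)
  set g : ℝ → Ω → ℝ := Function.curry F with hgdef
  have hrepl : ∀ t ∈ Set.Icc (0:ℝ) 1, g t = f t := by
    intro t ht
    funext ω
    have := congrFun hFe (⟨t, ht⟩, ω)
    simpa [hgdef, Function.curry] using this
  have hgmeas : Measurable (Function.uncurry g) := by
    rwa [hgdef, Function.uncurry_curry]
  have hmain := nfl_aux P g hgmeas
    (fun t ht => hrepl t ht ▸ hL2 t ht)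
    (fun t ht s hs => by rw [hrepl t ht, hrepl s hs]; exact hid t ht s hs)
    ρ
    (fun t ht s hs hne => by rw [hrepl t ht, hrepl s hs]; exact hcov t ht s hs hne)
  obtain ⟨X, hX⟩ := hmain
  refine ⟨X, fun t ht => ?_⟩
  have := hX t ht
  rwa [hrepl t ht] at this
end

section
/- Let f : Ω × ℝ → ℝ be a measurable stochastic process indexed by the whole real line such that E[f(s)] = 0 and E[f(s)²] = 1 for all s ∈ ℝ, and suppose there exists ρ ∈ ℝ such that E[f(s)f(s')] = ρ for all s ≠ s'. Then for every t ≠ 0, E[ ∫_ℝ ( e^{−s²} f(s) − e^{−(s+t)²} f(s+t) )² ds ] = √(2π) · (1 − e^{−t²/2} ρ). -/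
open MeasureTheory ProbabilityTheory Real
/-!
Statement 10: for a measurable process indexed by `ℝ` with `E[f(s)] = 0`,
`E[f(s)²] = 1` and constant off-diagonal correlation `ρ`, for every `t ≠ 0`
`E[∫_ℝ (e^{-s²} f(s) - e^{-(s+t)²} f(s+t))² ds] = √(2π) (1 - e^{-t²/2} ρ)`.
-/

theorem gaussian_weighted_translate_second_moment
    {Ω : Type*} [MeasurableSpace Ω] (P : Measure Ω) [IsProbabilityMeasure P]
    (f : ℝ → Ω → ℝ)
    (hmeas : Measurable fun p : ℝ × Ω => f p.1 p.2)
    (hmean : ∀ s : ℝ, ∫ ω, f s ω ∂P = 0)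
    (hvar : ∀ s : ℝ, ∫ ω, (f s ω) ^ 2 ∂P = 1)
    (ρ : ℝ)
    (hcov : ∀ s s' : ℝ, s ≠ s' → ∫ ω, f s ω * f s' ω ∂P = ρ) :
    ∀ t : ℝ, t ≠ 0 →
      ∫ ω, (∫ s : ℝ,
          (Real.exp (-s ^ 2) * f s ω - Real.exp (-(s + t) ^ 2) * f (s + t) ω) ^ 2) ∂P
        = Real.sqrt (2 * Real.pi) * (1 - Real.exp (-t ^ 2 / 2) * ρ) := by
  intro t ht
  have hfm : ∀ s : ℝ, Measurable (f s) := fun s =>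
    hmeas.comp (measurable_const.prodMk measurable_id)
  have hsq : ∀ s : ℝ, Integrable (fun ω => f s ω ^ 2) P := by
    intro s
    by_contra h
    have := hvar s
    rw [integral_undef h] at this
    norm_num at this
  have hmul : ∀ s s' : ℝ, Integrable (fun ω => f s ω * f s' ω) P := by
    intro s s'
    refine (((hsq s).add (hsq s')).div_const 2).mono'
      ((hfm s).mul (hfm s')).aestronglyMeasurable (ae_of_all _ fun ω => ?_)
    have h1 : |f s ω| * |f s' ω| ≤ (f s ω ^ 2 + f s' ω ^ 2) / 2 := by
      nlinarith [sq_nonneg (|f s ω| - |f s' ω|), sq_abs (f s ω), sq_abs (f s' ω),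
        abs_nonneg (f s ω), abs_nonneg (f s' ω)]
    simpa [Real.norm_eq_abs, abs_mul] using h1
  have hGint : ∀ s : ℝ, Integrable
      (fun ω => (Real.exp (-s ^ 2) * f s ω - Real.exp (-(s + t) ^ 2) * f (s + t) ω) ^ 2) P := by
    intro s
    have h1 : (fun ω => (Real.exp (-s ^ 2) * f s ω - Real.exp (-(s + t) ^ 2) * f (s + t) ω) ^ 2)
        = fun ω => Real.exp (-s ^ 2) ^ 2 * f s ω ^ 2
          - 2 * Real.exp (-s ^ 2) * Real.exp (-(s + t) ^ 2) * (f s ω * f (s + t) ω)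
          + Real.exp (-(s + t) ^ 2) ^ 2 * f (s + t) ω ^ 2 := by
      funext ω; ring
    rw [h1]
    exact (((hsq s).const_mul _).sub ((hmul s (s + t)).const_mul _)).add
      ((hsq (s + t)).const_mul _)
  have hst : ∀ s : ℝ, s ≠ s + t := fun s h => ht (by linarith)
  have hInner : ∀ s : ℝ,
      ∫ ω, (Real.exp (-s ^ 2) * f s ω - Real.exp (-(s + t) ^ 2) * f (s + t) ω) ^ 2 ∂P
        = Real.exp (-(2 * s ^ 2)) + Real.exp (-(2 * (s + t) ^ 2))
          - 2 * ρ * Real.exp (-t ^ 2 / 2) * Real.exp (-(2 * (s + t / 2) ^ 2)) := by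
    intro s
    have h1 : (fun ω => (Real.exp (-s ^ 2) * f s ω - Real.exp (-(s + t) ^ 2) * f (s + t) ω) ^ 2)
        = fun ω => Real.exp (-s ^ 2) ^ 2 * f s ω ^ 2
          - 2 * Real.exp (-s ^ 2) * Real.exp (-(s + t) ^ 2) * (f s ω * f (s + t) ω)
          + Real.exp (-(s + t) ^ 2) ^ 2 * f (s + t) ω ^ 2 := by
      funext ω; ring
    have hsub : Integrable (fun ω => Real.exp (-s ^ 2) ^ 2 * f s ω ^ 2
        - 2 * Real.exp (-s ^ 2) * Real.exp (-(s + t) ^ 2) * (f s ω * f (s + t) ω)) P :=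
      ((hsq s).const_mul _).sub ((hmul s (s + t)).const_mul _)
    rw [h1, integral_add hsub ((hsq (s + t)).const_mul _),
      integral_sub ((hsq s).const_mul _) ((hmul s (s + t)).const_mul _),
      integral_const_mul, integral_const_mul, integral_const_mul,
      hvar s, hvar (s + t), hcov s (s + t) (hst s)]
    have ea : Real.exp (-s ^ 2) ^ 2 = Real.exp (-(2 * s ^ 2)) := by
      rw [sq, ← Real.exp_add]; ring_nf
    have eb : Real.exp (-(s + t) ^ 2) ^ 2 = Real.exp (-(2 * (s + t) ^ 2)) := by
      rw [sq, ← Real.exp_add]; ring_nf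
    have ec : Real.exp (-s ^ 2) * Real.exp (-(s + t) ^ 2)
        = Real.exp (-t ^ 2 / 2) * Real.exp (-(2 * (s + t / 2) ^ 2)) := by
      rw [← Real.exp_add, ← Real.exp_add]; ring_nf
    rw [ea, eb]
    rw [mul_one, mul_one]
    linear_combination (-2 * ρ) * ec
  set g : ℝ → Ω → ℝ := fun s ω =>
    (Real.exp (-s ^ 2) * f s ω - Real.exp (-(s + t) ^ 2) * f (s + t) ω) ^ 2 with hg
  have hgmeas : Measurable (Function.uncurry g) := by
    have h2 : Measurable fun p : ℝ × Ω => f (p.1 + t) p.2 :=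
      hmeas.comp ((measurable_fst.add_const t).prodMk measurable_snd)
    exact (((measurable_fst.pow measurable_const).neg.exp.mul hmeas).sub
      (((measurable_fst.add_const t).pow measurable_const).neg.exp.mul h2)).pow measurable_const
  have h0 : Integrable (fun s : ℝ => Real.exp (-(2 * s ^ 2))) volume := by
    simpa [neg_mul] using integrable_exp_neg_mul_sq (two_pos (α := ℝ))
  have hF : Integrable (fun s : ℝ => Real.exp (-(2 * s ^ 2)) + Real.exp (-(2 * (s + t) ^ 2))
      - 2 * ρ * Real.exp (-t ^ 2 / 2) * Real.exp (-(2 * (s + t / 2) ^ 2))) volume :=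
    (h0.add (h0.comp_add_right t)).sub ((h0.comp_add_right (t / 2)).const_mul _)
  have hgprod : Integrable (Function.uncurry g) (volume.prod P) := by
    rw [integrable_prod_iff hgmeas.aestronglyMeasurable]
    refine ⟨ae_of_all _ fun s => hGint s, hF.congr (ae_of_all _ fun s => ?_)⟩
    simp only [Function.uncurry, hg, Real.norm_eq_abs, abs_pow, sq_abs]
    exact (hInner s).symm
  have hswap : ∫ ω, (∫ s : ℝ, g s ω) ∂P = ∫ s : ℝ, (∫ ω, g s ω ∂P) := by
    exact (integral_integral_swap hgprod).symm
  rw [hswap]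
  rw [show (∫ s : ℝ, (∫ ω, g s ω ∂P)) = ∫ s : ℝ, (Real.exp (-(2 * s ^ 2)) + Real.exp (-(2 * (s + t) ^ 2))
      - 2 * ρ * Real.exp (-t ^ 2 / 2) * Real.exp (-(2 * (s + t / 2) ^ 2))) from
    integral_congr_ae (ae_of_all _ fun s => hInner s)]
  have hIs : (∫ s : ℝ, Real.exp (-(2 * s ^ 2))) = Real.sqrt (π / 2) := by
    simpa [neg_mul] using integral_gaussian 2
  have hIt : (∫ s : ℝ, Real.exp (-(2 * (s + t) ^ 2))) = Real.sqrt (π / 2) := by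
    rw [integral_add_right_eq_self (fun s : ℝ => Real.exp (-(2 * s ^ 2))) t]; exact hIs
  have hIh : (∫ s : ℝ, Real.exp (-(2 * (s + t / 2) ^ 2))) = Real.sqrt (π / 2) := by
    rw [integral_add_right_eq_self (fun s : ℝ => Real.exp (-(2 * s ^ 2))) (t / 2)]; exact hIs
  have hadd : Integrable (fun s : ℝ => Real.exp (-(2 * s ^ 2))
      + Real.exp (-(2 * (s + t) ^ 2))) volume := h0.add (h0.comp_add_right t)
  have hc : Integrable (fun s : ℝ =>
      2 * ρ * Real.exp (-t ^ 2 / 2) * Real.exp (-(2 * (s + t / 2) ^ 2))) volume :=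
    (h0.comp_add_right (t / 2)).const_mul _
  rw [integral_sub hadd hc, integral_add h0 (h0.comp_add_right t), integral_const_mul]
  rw [show (∫ s : ℝ, Real.exp (-(2 * (s + t) ^ 2))) = Real.sqrt (π / 2) from hIt,
    show (∫ s : ℝ, Real.exp (-(2 * (s + t / 2) ^ 2))) = Real.sqrt (π / 2) from hIh, hIs]
  have h2 : Real.sqrt (2 * π) = 2 * Real.sqrt (π / 2) := by
    rw [show (2 : ℝ) * π = 2 ^ 2 * (π / 2) by ring, Real.sqrt_mul (by positivity),
      Real.sqrt_sq (by norm_num)]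
  rw [h2]; ring
end

section
/- Let f be a measurable stochastic process on [0,1] whose random variables f(t), t ∈ [0,1], are mutually independent and identically distributed. Then there exists a constant k ∈ ℝ such that P{ω : f(t,ω) = k} = 1 for every t ∈ [0,1]. -/
open MeasureTheory ProbabilityTheory

/-!
Statement 12: a measurable stochastic process on `[0,1]` whose random
variables are mutually independent and identically distributed is degenerate:
there is a constant `k` with `P{f(t) = k} = 1` for every `t ∈ [0,1]`.
-/

section Aux

open Set Filter Topology
open scoped ENNReal

lemma aux_dirac (μ : Measure ℝ) [IsProbabilityMeasure μ]
    (h : ∀ B : Set ℝ, MeasurableSet B → μ B = 0 ∨ μ B = 1) :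
    ∃ k : ℝ, μ {k} = 1 := by
  set T : Set ℝ := {x | μ (Iic x) = 1} with hT
  -- T nonempty
  have hne : T.Nonempty := by
    by_contra hc
    rw [Set.not_nonempty_iff_eq_empty] at hc
    have h0 : ∀ x : ℝ, μ (Iic x) = 0 := by
      intro x
      rcases h (Iic x) measurableSet_Iic with h' | h'
      · exact h'
      · exact absurd (Set.eq_empty_iff_forall_notMem.1 hc x h') (fun hf => hf)
    have := tendsto_measure_Iic_atTop μ
    simp only [h0] at this
    have h1 := tendsto_nhds_unique tendsto_const_nhds this
    simp [measure_univ] at h1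
  -- lower bound
  have hlb : ∃ x0 : ℝ, μ (Iic x0) = 0 := by
    by_contra hc
    push_neg at hc
    have h1 : ∀ n : ℕ, μ (Iic (-(n:ℝ))) = 1 := fun n =>
      (h _ measurableSet_Iic).resolve_left (hc _)
    have htend := tendsto_measure_iInter_atTop (μ := μ)
      (s := fun n : ℕ => Iic (-(n:ℝ)))
      (fun n => measurableSet_Iic.nullMeasurableSet)
      (fun i j hij => Iic_subset_Iic.2 (by exact_mod_cast neg_le_neg (Nat.cast_le.2 hij)))
      ⟨0, by simp [h1]⟩
    have hI : ⋂ n : ℕ, Iic (-(n:ℝ)) = (∅ : Set ℝ) := by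
      ext x; simp only [mem_iInter, mem_Iic, mem_empty_iff_false, iff_false, not_forall]
      obtain ⟨n, hn⟩ := exists_nat_gt (-x)
      exact ⟨n, by push_neg; linarith⟩
    rw [hI] at htend
    have hcomp : (⇑μ ∘ fun n : ℕ => Iic (-(n:ℝ))) = fun _ => (1:ℝ≥0∞) := funext fun n => h1 n
    rw [hcomp, measure_empty] at htend
    have hc1 : Tendsto (fun _ : ℕ => (1:ℝ≥0∞)) atTop (𝓝 1) := tendsto_const_nhds
    have := tendsto_nhds_unique hc1 htend
    simp at this
  obtain ⟨x0, hx0⟩ := hlb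
  have hbdd : BddBelow T := by
    refine ⟨x0, fun y hy => ?_⟩
    by_contra hc
    push_neg at hc
    have : μ (Iic y) ≤ μ (Iic x0) := measure_mono (Iic_subset_Iic.2 hc.le)
    rw [hy, hx0] at this
    simp at this
  set k := sInf T with hk
  -- μ (Iic (k + ε)) = 1 for ε > 0
  have hup : ∀ ε : ℝ, 0 < ε → μ (Iic (k + ε)) = 1 := by
    intro ε hε
    obtain ⟨y, hyT, hy⟩ := Real.lt_sInf_add_pos hne hε
    have : μ (Iic y) ≤ μ (Iic (k + ε)) := measure_mono (Iic_subset_Iic.2 hy.le)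
    rw [hyT] at this
    exact le_antisymm prob_le_one this
  have hIick : μ (Iic k) = 1 := by
    have htend := tendsto_measure_iInter_atTop (μ := μ)
      (s := fun n : ℕ => Iic (k + 1 / (n + 1)))
      (fun n => measurableSet_Iic.nullMeasurableSet)
      (fun i j hij => Iic_subset_Iic.2 (by
        have hcast : (i:ℝ) ≤ (j:ℝ) := Nat.cast_le.2 hij
        have : (1:ℝ) / (j + 1) ≤ 1 / (i + 1) := by
          apply one_div_le_one_div_of_le
          · positivity
          · linarith
        linarith))
      ⟨0, by simp⟩
    have hI : ⋂ n : ℕ, Iic (k + 1 / ((n:ℝ) + 1)) = Iic k := by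
      ext x
      simp only [mem_iInter, mem_Iic]
      constructor
      · intro hx
        by_contra hc
        push_neg at hc
        obtain ⟨n, hn⟩ := exists_nat_one_div_lt (sub_pos.2 hc)
        have := hx n
        linarith
      · intro hx n
        have : (0:ℝ) < 1 / (n + 1) := by positivity
        linarith
    rw [hI] at htend
    have h1 : ∀ n : ℕ, μ (Iic (k + 1 / ((n:ℝ) + 1))) = 1 := fun n => hup _ (by positivity)
    have hcomp : (⇑μ ∘ fun n : ℕ => Iic (k + 1 / ((n:ℝ) + 1))) = fun _ => (1:ℝ≥0∞) :=
      funext fun n => h1 n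
    rw [hcomp] at htend
    exact (tendsto_nhds_unique (tendsto_const_nhds : Tendsto (fun _ : ℕ => (1:ℝ≥0∞)) atTop (𝓝 1)) htend).symm
  have hIiok : μ (Iio k) = 0 := by
    have : Iio k = ⋃ n : ℕ, Iic (k - 1 / (n + 1)) := by
      ext x
      simp only [mem_iUnion, mem_Iic, mem_Iio]
      constructor
      · intro hx
        obtain ⟨n, hn⟩ := exists_nat_one_div_lt (sub_pos.2 hx)
        exact ⟨n, by linarith⟩
      · rintro ⟨n, hn⟩
        have : (0:ℝ) < 1 / ((n:ℝ) + 1) := by positivity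
        linarith
    rw [this]
    refine measure_iUnion_null fun n => ?_
    rcases h (Iic (k - 1 / (n + 1))) measurableSet_Iic with h' | h'
    · exact h'
    · exfalso
      have hmem : (k - 1 / ((n:ℝ) + 1)) ∈ T := h'
      have := csInf_le hbdd hmem
      have hpos : (0:ℝ) < 1 / ((n:ℝ) + 1) := by positivity
      rw [← hk] at this
      linarith
  refine ⟨k, le_antisymm prob_le_one ?_⟩
  have : μ (Iic k) ≤ μ (Iio k) + μ {k} := by
    rw [show Iic k = Iio k ∪ {k} by ext x; simp [le_iff_lt_or_eq]]
    exact measure_union_le _ _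
  rw [hIick, hIiok, zero_add] at this
  exact this

lemma aux_zero_one {Ω : Type*} [MeasurableSpace Ω] (P : Measure Ω) [IsProbabilityMeasure P]
    (g : ℝ → Ω → ℝ)
    (hg : Measurable fun p : ℝ × Ω => g p.1 p.2)
    (hind : ∀ s ∈ Set.Icc (0:ℝ) 1, ∀ t ∈ Set.Icc (0:ℝ) 1, s ≠ t → IndepFun (g s) (g t) P)
    (μ : Measure ℝ) [IsProbabilityMeasure μ] (hdist : ∀ t : ℝ, P.map (g t) = μ)
    (B : Set ℝ) (hB : MeasurableSet B) :
    μ B = 0 ∨ μ B = 1 := by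
  set q : ℝ≥0∞ := μ B with hq
  have hgm : ∀ t : ℝ, Measurable (g t) := fun t => hg.comp measurable_prodMk_left
  set A : ℝ → Set Ω := fun t => g t ⁻¹' B with hA
  have hAm : ∀ t, MeasurableSet (A t) := fun t => (hgm t) hB
  have hPA : ∀ t, P (A t) = q := by
    intro t
    rw [hA]
    rw [← Measure.map_apply (hgm t) hB, hdist t]
  have hPAB : ∀ s ∈ Set.Icc (0:ℝ) 1, ∀ t ∈ Set.Icc (0:ℝ) 1, s ≠ t →
      P (A s ∩ A t) = q * q := by
    intro s hs t ht hst
    have := (hind s hs t ht hst).measure_inter_preimage_eq_mul B B hB hB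
    show P (A s ∩ A t) = q * q
    rw [hA]; rw [this]
    rw [show g s ⁻¹' B = A s from rfl, show g t ⁻¹' B = A t from rfl, hPA, hPA]
  -- the ENNReal-valued indicator process
  set G : ℝ × Ω → ℝ≥0∞ := fun p => (A p.1).indicator (fun _ => 1) p.2 with hG
  have hGm : Measurable G := by
    have : G = fun p : ℝ × Ω => B.indicator (fun _ => (1:ℝ≥0∞)) (g p.1 p.2) := by
      funext p
      by_cases hp : g p.1 p.2 ∈ B
      · simp [hG, hA, Set.indicator_of_mem, hp, Set.mem_preimage]
      · simp [hG, hA, Set.indicator_of_notMem, hp, Set.mem_preimage]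
    rw [this]
    exact (measurable_const.indicator hB).comp hg
  have hGle : ∀ p, G p ≤ 1 := by
    intro p
    by_cases hp : p.2 ∈ A p.1 <;> simp [hG, hp]
  have hGint : ∀ t, ∫⁻ ω, G (t, ω) ∂P = q := by
    intro t
    rw [hG]
    simp only
    rw [lintegral_indicator (hAm t), ← hPA t]
    simp [Measure.restrict_apply MeasurableSet.univ]
  have hGmul : ∀ s t ω, G (s, ω) * G (t, ω) = (A s ∩ A t).indicator (fun _ => (1:ℝ≥0∞)) ω := by
    intro s t ω
    by_cases hs : ω ∈ A s <;> by_cases ht : ω ∈ A t <;>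
      simp [hG, hs, ht, Set.indicator_of_mem, Set.indicator_of_notMem, Set.mem_inter_iff]
  have hGmulint : ∀ s ∈ Set.Icc (0:ℝ) 1, ∀ t ∈ Set.Icc (0:ℝ) 1, s ≠ t →
      ∫⁻ ω, G (s, ω) * G (t, ω) ∂P = q * q := by
    intro s hs t ht hst
    simp only [hGmul]
    rw [lintegral_indicator ((hAm s).inter (hAm t))]
    simp [Measure.restrict_apply MeasurableSet.univ, hPAB s hs t ht hst]
  -- first and second moments of X_a
  have haux : ∀ a : ℝ, a ∈ Set.Icc (0:ℝ) 1 →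
      ∀ᵐ ω ∂P, ∫⁻ t in Set.Ioc (0:ℝ) a, G (t, ω) ∂volume = q * ENNReal.ofReal a := by
    intro a ha
    set ν : Measure ℝ := volume.restrict (Set.Ioc (0:ℝ) a) with hν
    have hνuniv : ν Set.univ = ENNReal.ofReal a := by
      rw [hν, Measure.restrict_apply MeasurableSet.univ, Set.univ_inter, Real.volume_Ioc,
        sub_zero]
    set X : Ω → ℝ≥0∞ := fun ω => ∫⁻ t, G (t, ω) ∂ν with hX
    have hFm : Measurable fun p : Ω × ℝ => G (p.2, p.1) := hGm.comp measurable_swap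
    have hXm : Measurable X := hFm.lintegral_prod_right'
    have hE1 : ∫⁻ ω, X ω ∂P = q * ENNReal.ofReal a := by
      rw [hX]
      simp only
      rw [lintegral_lintegral_swap hFm.aemeasurable]
      simp only [hGint]
      rw [lintegral_const, hνuniv]
    have hE2 : ∫⁻ ω, X ω * X ω ∂P = q * q * (ENNReal.ofReal a * ENNReal.ofReal a) := by
      have hXsq : ∀ ω, X ω * X ω = ∫⁻ s, (∫⁻ t, G (s, ω) * G (t, ω) ∂ν) ∂ν := by
        intro ω
        have hGsec : ∀ ω' : Ω, Measurable fun t : ℝ => G (t, ω') := fun ω' =>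
          hGm.comp (measurable_id.prodMk measurable_const)
        rw [hX]
        simp only
        rw [← lintegral_mul_const (f := fun t : ℝ => G (t, ω)) _ (hGsec ω)]
        congr 1
        funext s
        rw [← lintegral_const_mul (f := fun t : ℝ => G (t, ω)) _ (hGsec ω)]
      simp only [hXsq]
      -- swap ω and s
      have hH1 : Measurable fun p : Ω × ℝ => ∫⁻ t, G (p.2, p.1) * G (t, p.1) ∂ν := by
        apply Measurable.lintegral_prod_right'
          (f := fun p : (Ω × ℝ) × ℝ => G (p.1.2, p.1.1) * G (p.2, p.1.1))
        exact (hGm.comp ((measurable_snd.comp measurable_fst).prodMk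
          (measurable_fst.comp measurable_fst))).mul
          (hGm.comp (measurable_snd.prodMk (measurable_fst.comp measurable_fst)))
      rw [lintegral_lintegral_swap hH1.aemeasurable]
      -- for each s, swap ω and t
      have hswap2 : ∀ s : ℝ, ∫⁻ ω, ∫⁻ t, G (s, ω) * G (t, ω) ∂ν ∂P
          = ∫⁻ t, ∫⁻ ω, G (s, ω) * G (t, ω) ∂P ∂ν := by
        intro s
        apply lintegral_lintegral_swap
        apply Measurable.aemeasurable
        exact (hGm.comp (measurable_const.prodMk measurable_fst)).mul
          (hGm.comp (measurable_snd.prodMk measurable_fst))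
      have hinner : ∀ s ∈ Set.Ioc (0:ℝ) a, ∫⁻ t, ∫⁻ ω, G (s, ω) * G (t, ω) ∂P ∂ν
          = q * q * ENNReal.ofReal a := by
        intro s hs
        have hs1 : s ∈ Set.Icc (0:ℝ) 1 := ⟨hs.1.le, hs.2.trans ha.2⟩
        have hae : ∀ᵐ t ∂ν, (∫⁻ ω, G (s, ω) * G (t, ω) ∂P) = q * q := by
          have hmem := ae_restrict_mem (μ := volume) (measurableSet_Ioc (a := (0:ℝ)) (b := a))
          have h0 : ν {s} = 0 := by
            rw [hν, Measure.restrict_apply (measurableSet_singleton s)]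
            exact le_antisymm (le_trans (measure_mono Set.inter_subset_left)
              Real.volume_singleton.le) zero_le
          have hne : ∀ᵐ t ∂ν, t ≠ s := by
            refine ae_iff.2 ?_
            simpa only [ne_eq, not_not, Set.setOf_eq_eq_singleton] using h0
          filter_upwards [hmem, hne] with t htmem htne
          have ht1 : t ∈ Set.Icc (0:ℝ) 1 := ⟨htmem.1.le, htmem.2.trans ha.2⟩
          exact hGmulint s hs1 t ht1 (Ne.symm htne)
        rw [lintegral_congr_ae hae, lintegral_const, hνuniv]
      have hfin : ∫⁻ s, (∫⁻ ω, ∫⁻ t, G (s, ω) * G (t, ω) ∂ν ∂P) ∂ν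
          = ∫⁻ _, q * q * ENNReal.ofReal a ∂ν := by
        refine lintegral_congr_ae ?_
        filter_upwards [ae_restrict_mem (μ := volume) (measurableSet_Ioc (a := (0:ℝ)) (b := a))] with s hs
        rw [hswap2 s, hinner s hs]
      rw [hfin, lintegral_const, hνuniv]
      ring
    -- conclude X is a.e. constant
    have hqne : q ≠ ∞ := measure_ne_top μ B
    have hXle : ∀ ω, X ω ≤ ENNReal.ofReal a := by
      intro ω
      calc X ω ≤ ∫⁻ _, 1 ∂ν := lintegral_mono fun t => hGle _
      _ = ν Set.univ := lintegral_one
      _ = ENNReal.ofReal a := hνuniv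
    have hXne : ∀ ω, X ω ≠ ∞ := fun ω => ((hXle ω).trans_lt ENNReal.ofReal_lt_top).ne
    set Y : Ω → ℝ := fun ω => (X ω).toReal with hY
    set r : ℝ := q.toReal with hr
    set c : ℝ := r * a with hc
    have hYm : Measurable Y := hXm.ennreal_toReal
    have hYnonneg : ∀ ω, 0 ≤ Y ω := fun ω => ENNReal.toReal_nonneg
    have hYle : ∀ ω, Y ω ≤ 1 := by
      intro ω
      have := ENNReal.toReal_mono (by simp) (hXle ω)
      rw [ENNReal.toReal_ofReal ha.1] at this
      exact this.trans ha.2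
    have hYint : Integrable Y P := by
      refine (integrable_const (1:ℝ)).mono' hYm.aestronglyMeasurable ?_
      exact Filter.Eventually.of_forall fun ω => by
        rw [Real.norm_eq_abs, abs_of_nonneg (hYnonneg ω)]; exact hYle ω
    have hYYint : Integrable (fun ω => Y ω * Y ω) P := by
      refine (integrable_const (1:ℝ)).mono' (hYm.mul hYm).aestronglyMeasurable ?_
      refine Filter.Eventually.of_forall fun ω => ?_
      rw [Real.norm_eq_abs, abs_of_nonneg (mul_nonneg (hYnonneg ω) (hYnonneg ω))]
      exact mul_le_one₀ (hYle ω) (hYnonneg ω) (hYle ω)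
    have hIY : ∫ ω, Y ω ∂P = c := by
      rw [hY]
      simp only
      rw [integral_toReal hXm.aemeasurable
        (Filter.Eventually.of_forall fun ω => (hXle ω).trans_lt ENNReal.ofReal_lt_top)]
      rw [hE1, ENNReal.toReal_mul, ENNReal.toReal_ofReal ha.1, hc, hr]
    have hIY2 : ∫ ω, Y ω * Y ω ∂P = c * c := by
      have heq : (fun ω => Y ω * Y ω) = fun ω => (X ω * X ω).toReal := by
        funext ω; rw [ENNReal.toReal_mul]
      rw [heq, integral_toReal (f := fun ω => X ω * X ω) (hXm.mul hXm).aemeasurable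
        (Filter.Eventually.of_forall fun ω =>
          ENNReal.mul_lt_top ((hXle ω).trans_lt ENNReal.ofReal_lt_top)
            ((hXle ω).trans_lt ENNReal.ofReal_lt_top))]
      rw [hE2]
      rw [ENNReal.toReal_mul, ENNReal.toReal_mul, ENNReal.toReal_mul,
        ENNReal.toReal_ofReal ha.1, hc, hr]
      ring
    have hsq : ∫ ω, (Y ω - c)^2 ∂P = 0 := by
      have hexp : (fun ω => (Y ω - c)^2)
          = fun ω => (Y ω * Y ω - (2*c) * Y ω) + c * c := by
        funext ω; ring
      have hsub : Integrable (fun ω => Y ω * Y ω - (2*c) * Y ω) P :=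
        hYYint.sub (hYint.const_mul (2*c))
      have hmul : Integrable (fun ω => (2*c) * Y ω) P := hYint.const_mul (2*c)
      rw [hexp, integral_add hsub (integrable_const _),
        integral_sub hYYint hmul, integral_const_mul, hIY, hIY2, integral_const]
      simp only [measure_univ, probReal_univ, ENNReal.toReal_one, smul_eq_mul, one_mul]
      ring
    have hZ0 : (fun ω => (Y ω - c)^2) =ᵐ[P] 0 := by
      refine (integral_eq_zero_iff_of_nonneg (fun ω => sq_nonneg _) ?_).1 hsq
      have : (fun ω => (Y ω - c)^2) = fun ω => (Y ω * Y ω - (2*c) * Y ω) + c * c := by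
        funext ω; ring
      rw [this]
      have hsub : Integrable (fun ω => Y ω * Y ω - (2*c) * Y ω) P :=
        hYYint.sub (hYint.const_mul (2*c))
      exact hsub.add (integrable_const _)
    filter_upwards [hZ0] with ω hω
    have hYc : Y ω = c := by
      have : (Y ω - c)^2 = 0 := hω
      have := pow_eq_zero_iff (n := 2) (by norm_num) |>.1 this
      linarith
    have hXc : X ω = ENNReal.ofReal c := by
      rw [← hYc, hY]
      exact (ENNReal.ofReal_toReal (hXne ω)).symm
    show X ω = q * ENNReal.ofReal a
    rw [hXc, hc, ENNReal.ofReal_mul (by rw [hr]; exact ENNReal.toReal_nonneg), hr,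
      ENNReal.ofReal_toReal hqne]
  have hq1 : q ≤ 1 := prob_le_one
  have hqne : q ≠ ∞ := measure_ne_top μ B
  -- simultaneously for all rationals
  have hae : ∀ᵐ ω ∂P, ∀ p : ℚ, (p:ℝ) ∈ Set.Icc (0:ℝ) 1 →
      ∫⁻ t in Set.Ioc (0:ℝ) (p:ℝ), G (t, ω) ∂volume = q * ENNReal.ofReal (p:ℝ) := by
    rw [ae_all_iff]
    intro p
    by_cases hp : (p:ℝ) ∈ Set.Icc (0:ℝ) 1
    · filter_upwards [haux (p:ℝ) hp] with ω hω _
      exact hω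
    · exact Filter.Eventually.of_forall fun ω hmem => absurd hmem hp
  obtain ⟨ω, hω⟩ := hae.exists
  set S : Set ℝ := (fun t => g t ω) ⁻¹' B with hS
  have hSm : MeasurableSet S := (hg.comp (measurable_id.prodMk measurable_const)) hB
  have hGS : ∀ t, G (t, ω) = S.indicator (1 : ℝ → ℝ≥0∞) t := by
    intro t
    by_cases h : g t ω ∈ B
    · simp only [hG, hA, hS]
      rw [Set.indicator_of_mem (by exact h), Set.indicator_of_mem (by exact h)]
      rfl
    · simp only [hG, hA, hS]
      rw [Set.indicator_of_notMem (by exact h), Set.indicator_of_notMem (by exact h)]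
  have hvol : ∀ p : ℚ, (p:ℝ) ∈ Set.Icc (0:ℝ) 1 →
      volume (S ∩ Set.Ioc 0 (p:ℝ)) = q * ENNReal.ofReal (p:ℝ) := by
    intro p hp
    have h1 := hω p hp
    rw [lintegral_congr hGS, lintegral_indicator_one hSm,
      Measure.restrict_apply hSm] at h1
    exact h1
  -- extend to all reals in [0,1]
  have hvolR : ∀ a ∈ Set.Icc (0:ℝ) 1, volume (S ∩ Set.Ioc 0 a) = q * ENNReal.ofReal a := by
    intro a ha
    apply le_antisymm
    · apply ENNReal.le_of_forall_pos_le_add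
      intro ε hε _
      have hεR : (0:ℝ) < (ε:ℝ) := hε
      by_cases ha1 : a = 1
      · subst ha1
        have := hvol 1 (by norm_num)
        push_cast at this
        rw [this]
        exact le_self_add
      · have ha1' : a < 1 := lt_of_le_of_ne ha.2 ha1
        obtain ⟨p, hp1, hp2⟩ := exists_rat_btwn (show a < min 1 (a + ε) by
          simp only [lt_min_iff]; exact ⟨ha1', by linarith⟩)
        have hpmem : (p:ℝ) ∈ Set.Icc (0:ℝ) 1 :=
          ⟨le_trans ha.1 hp1.le, (lt_min_iff.1 hp2).1.le⟩
        calc volume (S ∩ Set.Ioc 0 a) ≤ volume (S ∩ Set.Ioc 0 (p:ℝ)) :=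
              measure_mono (Set.inter_subset_inter_right _ (Set.Ioc_subset_Ioc_right hp1.le))
          _ = q * ENNReal.ofReal (p:ℝ) := hvol p hpmem
          _ = q * (ENNReal.ofReal a + ENNReal.ofReal ((p:ℝ) - a)) := by
              rw [← ENNReal.ofReal_add ha.1 (by linarith)]
              ring_nf
          _ = q * ENNReal.ofReal a + q * ENNReal.ofReal ((p:ℝ) - a) := by rw [mul_add]
          _ ≤ q * ENNReal.ofReal a + ε := by
              refine add_le_add le_rfl ?_
              refine le_trans (mul_le_mul_left hq1 _) ?_
              rw [one_mul, ← ENNReal.ofReal_coe_nnreal]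
              apply ENNReal.ofReal_le_ofReal
              have := (lt_min_iff.1 hp2).2
              linarith
    · apply ENNReal.le_of_forall_pos_le_add
      intro ε hε _
      have hεR : (0:ℝ) < (ε:ℝ) := hε
      by_cases ha0 : a = 0
      · subst ha0
        simp
      · have ha0' : 0 < a := lt_of_le_of_ne ha.1 (Ne.symm ha0)
        obtain ⟨p, hp1, hp2⟩ := exists_rat_btwn (show max 0 (a - ε) < a by
          simp only [max_lt_iff]; exact ⟨ha0', by linarith⟩)
        have hpmem : (p:ℝ) ∈ Set.Icc (0:ℝ) 1 :=
          ⟨le_trans (le_max_left 0 (a - ε)) hp1.le, hp2.le.trans ha.2⟩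
        calc q * ENNReal.ofReal a
            = q * (ENNReal.ofReal (p:ℝ) + ENNReal.ofReal (a - (p:ℝ))) := by
              rw [← ENNReal.ofReal_add (le_trans (le_max_left 0 _) hp1.le) (by linarith)]
              ring_nf
          _ = q * ENNReal.ofReal (p:ℝ) + q * ENNReal.ofReal (a - (p:ℝ)) := by rw [mul_add]
          _ ≤ volume (S ∩ Set.Ioc 0 (p:ℝ)) + ENNReal.ofReal (a - (p:ℝ)) := by
              rw [hvol p hpmem]
              gcongr
              exact le_trans (mul_le_mul_left hq1 _) (by rw [one_mul])
          _ ≤ volume (S ∩ Set.Ioc 0 a) + ε := by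
              refine add_le_add (measure_mono (Set.inter_subset_inter_right _
                (Set.Ioc_subset_Ioc_right hp2.le))) ?_
              rw [← ENNReal.ofReal_coe_nnreal]
              apply ENNReal.ofReal_le_ofReal
              have := (max_lt_iff.1 hp1).2
              linarith
  -- two measures agreeing on Ioc intervals
  set SI : Set ℝ := S ∩ Set.Ioc 0 1 with hSI
  have hSIm : MeasurableSet SI := hSm.inter measurableSet_Ioc
  set ρ : Measure ℝ := volume.restrict SI with hρ
  set ρ' : Measure ℝ := q • volume.restrict (Set.Ioc (0:ℝ) 1) with hρ'
  haveI : IsFiniteMeasure ρ := by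
    constructor
    rw [hρ, Measure.restrict_apply_univ]
    exact lt_of_le_of_lt (measure_mono Set.inter_subset_right)
      (by rw [Real.volume_Ioc]; exact ENNReal.ofReal_lt_top)
  haveI : IsFiniteMeasure ρ' := by
    constructor
    rw [hρ', Measure.smul_apply, smul_eq_mul, Measure.restrict_apply_univ, Real.volume_Ioc]
    exact ENNReal.mul_lt_top hqne.lt_top ENNReal.ofReal_lt_top
  have hext : ρ = ρ' := by
    refine Measure.ext_of_Ioc ρ ρ' fun c d hcd => ?_
    rw [hρ, hρ', Measure.restrict_apply measurableSet_Ioc, Measure.smul_apply, smul_eq_mul,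
      Measure.restrict_apply measurableSet_Ioc]
    rw [hSI, Set.inter_left_comm, Set.Ioc_inter_Ioc]
    set c' := c ⊔ 0
    set d' := d ⊓ 1
    have hc'0 : (0:ℝ) ≤ c' := le_max_right c 0
    have hd'1 : d' ≤ 1 := min_le_right d 1
    by_cases hcd' : d' ≤ c'
    · rw [Set.Ioc_eq_empty (not_lt.2 hcd')]
      simp
    · push_neg at hcd'
      have hc'1 : c' ∈ Set.Icc (0:ℝ) 1 := ⟨hc'0, hcd'.le.trans hd'1⟩
      have hd'mem : d' ∈ Set.Icc (0:ℝ) 1 := ⟨hc'0.trans hcd'.le, hd'1⟩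
      have hu : Set.Ioc (0:ℝ) c' ∪ Set.Ioc c' d' = Set.Ioc 0 d' :=
        Set.Ioc_union_Ioc_eq_Ioc hc'0 hcd'.le
      have hdisj : Disjoint (S ∩ Set.Ioc (0:ℝ) c') (S ∩ Set.Ioc c' d') :=
        (Set.Ioc_disjoint_Ioc_of_le le_rfl).mono Set.inter_subset_right Set.inter_subset_right
      have hInt : S ∩ Set.Ioc (0:ℝ) d' = (S ∩ Set.Ioc (0:ℝ) c') ∪ (S ∩ Set.Ioc c' d') := by
        rw [← Set.inter_union_distrib_left, hu]
      have hadd : volume (S ∩ Set.Ioc (0:ℝ) c') + volume (S ∩ Set.Ioc c' d')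
          = q * ENNReal.ofReal d' := by
        rw [← measure_union hdisj (hSm.inter measurableSet_Ioc), ← hInt, hvolR d' hd'mem]
      rw [hvolR c' hc'1] at hadd
      have hsplit : q * ENNReal.ofReal d'
          = q * ENNReal.ofReal c' + q * ENNReal.ofReal (d' - c') := by
        rw [← mul_add, ← ENNReal.ofReal_add hc'0 (by linarith)]
        ring_nf
      rw [hsplit] at hadd
      have hkey : volume (S ∩ Set.Ioc c' d') = q * ENNReal.ofReal (d' - c') := by
        have hne : q * ENNReal.ofReal c' ≠ ∞ :=
          ENNReal.mul_ne_top hqne ENNReal.ofReal_ne_top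
        exact (ENNReal.add_right_inj hne).1 hadd
      rw [hkey, Real.volume_Ioc]
  -- evaluate at SI
  have hvolSI : volume SI = q := by
    have := hvolR 1 ⟨zero_le_one, le_refl 1⟩
    rw [ENNReal.ofReal_one, mul_one] at this
    exact this
  have e1 : ρ SI = q := by
    rw [hρ, Measure.restrict_apply hSIm, Set.inter_self, hvolSI]
  have e2 : ρ' SI = q * q := by
    rw [hρ', Measure.smul_apply, smul_eq_mul, Measure.restrict_apply hSIm]
    rw [Set.inter_eq_self_of_subset_left (hSI ▸ Set.inter_subset_right), hvolSI]
  have hqq : q = q * q := by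
    calc q = ρ SI := e1.symm
    _ = ρ' SI := by rw [hext]
    _ = q * q := e2
  by_cases hq0 : q = 0
  · exact Or.inl hq0
  · right
    have : q * 1 = q * q := by rw [mul_one]; exact hqq
    exact ((ENNReal.mul_right_inj hq0 hqne).1 this).symm

end Aux

theorem measurable_iid_process_degenerate
    {Ω : Type*} [MeasurableSpace Ω] (P : Measure Ω) [IsProbabilityMeasure P]
    (f : ℝ → Ω → ℝ)
    (hmeas : Measurable fun p : Set.Icc (0 : ℝ) 1 × Ω => f p.1 p.2)
    (hindep : iIndepFun
      (fun t : Set.Icc (0 : ℝ) 1 => f t) P)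
    (hid : ∀ t ∈ Set.Icc (0 : ℝ) 1, ∀ s ∈ Set.Icc (0 : ℝ) 1,
      P.map (f t) = P.map (f s)) :
    ∃ k : ℝ, ∀ t ∈ Set.Icc (0 : ℝ) 1, P {ω | f t ω = k} = 1 := by
  have h01 : (0:ℝ) ≤ 1 := zero_le_one
  -- extend the process to all of ℝ
  set g : ℝ → Ω → ℝ := fun t ω => f (Set.projIcc 0 1 h01 t) ω with hgdef
  have hg : Measurable fun p : ℝ × Ω => g p.1 p.2 := by
    have : (fun p : ℝ × Ω => g p.1 p.2)
        = (fun p : Set.Icc (0:ℝ) 1 × Ω => f p.1 p.2)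
          ∘ fun p : ℝ × Ω => (Set.projIcc 0 1 h01 p.1, p.2) := rfl
    rw [this]
    exact hmeas.comp ((continuous_projIcc.measurable.comp measurable_fst).prodMk
      measurable_snd)
  have hfm : ∀ t ∈ Set.Icc (0:ℝ) 1, Measurable (f t) := by
    intro t ht
    have : f t = fun ω => g t ω := by
      funext ω
      rw [hgdef]
      simp only
      rw [Set.projIcc_of_mem h01 ht]
    rw [this]
    exact hg.comp measurable_prodMk_left
  -- pairwise independence for g
  have hind : ∀ s ∈ Set.Icc (0:ℝ) 1, ∀ t ∈ Set.Icc (0:ℝ) 1, s ≠ t →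
      IndepFun (g s) (g t) P := by
    intro s hs t ht hst
    have hne : (⟨s, hs⟩ : Set.Icc (0:ℝ) 1) ≠ ⟨t, ht⟩ := by
      simp only [ne_eq, Subtype.mk.injEq]
      exact hst
    have := hindep.indepFun hne
    have hgs : g s = f ((⟨s, hs⟩ : Set.Icc (0:ℝ) 1) : ℝ) := by
      funext ω; rw [hgdef]; simp only; rw [Set.projIcc_of_mem h01 hs]
    have hgt : g t = f ((⟨t, ht⟩ : Set.Icc (0:ℝ) 1) : ℝ) := by
      funext ω; rw [hgdef]; simp only; rw [Set.projIcc_of_mem h01 ht]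
    rw [hgs, hgt]
    exact this
  -- common distribution
  set μ : Measure ℝ := P.map (g 0) with hμ
  have h0mem : (0:ℝ) ∈ Set.Icc (0:ℝ) 1 := ⟨le_refl 0, h01⟩
  haveI : IsProbabilityMeasure μ := by
    rw [hμ]
    have : g 0 = f 0 := by
      funext ω; rw [hgdef]; simp only; rw [Set.projIcc_of_mem h01 h0mem]
    rw [this]
    exact Measure.isProbabilityMeasure_map (hfm 0 h0mem).aemeasurable
  have hdist : ∀ t : ℝ, P.map (g t) = μ := by
    intro t
    have hmem := (Set.projIcc 0 1 h01 t).2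
    have h1 : g t = f ((Set.projIcc 0 1 h01 t : Set.Icc (0:ℝ) 1) : ℝ) := rfl
    have h2 : g 0 = f 0 := by
      funext ω; rw [hgdef]; simp only; rw [Set.projIcc_of_mem h01 h0mem]
    rw [hμ, h1, h2]
    exact hid _ hmem 0 h0mem
  -- μ is 0-1 on all Borel sets, hence Dirac
  obtain ⟨k, hk⟩ := aux_dirac μ fun B hB => aux_zero_one P g hg hind μ hdist B hB
  refine ⟨k, fun t ht => ?_⟩
  have h1 : {ω | f t ω = k} = f t ⁻¹' {k} := rfl
  have h2 : P.map (f t) = μ := by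
    have : f t = g t := by
      funext ω; rw [hgdef]; simp only; rw [Set.projIcc_of_mem h01 ht]
    rw [this]
    exact hdist t
  rw [h1, ← Measure.map_apply (hfm t ht) (measurableSet_singleton k), h2]
  exact hk
end
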